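/- arXiv:1904.13311 — 5 statements merged into one kernel-verified Lean document; each statement's English description precedes it below -/
import Mathlib

section
/- If ν is a finite complex Borel measure with compact support in ℂ and 0 < s < 2, then the principal value Cauchy transform C(ν)(z) = lim_{ε→0} ∫_{|w−z|>ε} (w−z)^{−1} dν(w) exists for almost every z with respect to planar Lebesgue measure, and the function C(ν) belongs to L^s_loc(ℂ) with respect to area measure. -/
open MeasureTheory Metric Set Filter Complex Topology
open scoped ENNReal NNReal

lemma lintegral_ball_rpow_inv_lt_top {t : ℝ} (ht0 : 0 < t) (ht2 : t < 2) :
    ∫⁻ z in ball (0:ℂ) 1, ((‖z‖₊ : ℝ≥0∞))⁻¹ ^ t ∂volume < ⊤ := by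
  set V := (volume : Measure ℂ).restrict (ball (0:ℂ) 1) with hV
  have hae : (fun z : ℂ => ((‖z‖₊ : ℝ≥0∞))⁻¹ ^ t)
      =ᵐ[V] (fun z => ENNReal.ofReal (‖z‖ ^ (-t))) := by
    have h0 : V {(0:ℂ)} = 0 := by
      refine le_antisymm (le_trans (Measure.restrict_le_self _) ?_) zero_le
      simp [measure_singleton]
    filter_upwards [measure_eq_zero_iff_ae_notMem.mp h0] with z hz
    have hz0 : z ≠ 0 := by simpa using hz
    have hn : ‖z‖₊ ≠ 0 := by simpa using hz0
    rw [← ENNReal.coe_inv hn, ← ENNReal.coe_rpow_of_ne_zero (by simpa using hn)]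
    rw [ENNReal.ofReal, Real.toNNReal_rpow_of_nonneg (norm_nonneg z)]
    congr 1
    rw [norm_toNNReal, NNReal.rpow_neg, ← NNReal.inv_rpow]
  rw [lintegral_congr_ae hae]
  have hnn : 0 ≤ᵐ[V] fun z : ℂ => ‖z‖ ^ (-t) :=
    Eventually.of_forall fun z => Real.rpow_nonneg (norm_nonneg z) _
  have hmble : AEMeasurable (fun z : ℂ => ‖z‖ ^ (-t)) V :=
    (measurable_norm.pow measurable_const).aemeasurable
  rw [lintegral_eq_lintegral_meas_le V hnn hmble]
  -- two bounds on superlevel sets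
  have bound1 : ∀ l : ℝ, V {z : ℂ | l ≤ ‖z‖ ^ (-t)} ≤ ENNReal.ofReal 1 ^ 2 * NNReal.pi := by
    intro l
    calc V {z : ℂ | l ≤ ‖z‖ ^ (-t)} ≤ V univ := measure_mono (subset_univ _)
    _ ≤ volume (ball (0:ℂ) 1) := by rw [hV]; simp [Measure.restrict_apply_univ]
    _ = ENNReal.ofReal 1 ^ 2 * NNReal.pi := Complex.volume_ball 0 1
  have bound2 : ∀ l : ℝ, 0 < l → V {z : ℂ | l ≤ ‖z‖ ^ (-t)} ≤
      ENNReal.ofReal (l ^ ((-2:ℝ)/t)) * NNReal.pi := by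
    intro l hl
    have hsub : {z : ℂ | l ≤ ‖z‖ ^ (-t)} ⊆ closedBall 0 (l ^ (-(1:ℝ)/t)) := by
      intro z hz
      simp only [mem_setOf_eq] at hz
      have hz0 : z ≠ 0 := by
        rintro rfl
        rw [norm_zero, Real.zero_rpow (by linarith : -t ≠ 0)] at hz
        linarith
      have hzpos : 0 < ‖z‖ := norm_pos_iff.mpr hz0
      rw [mem_closedBall, dist_zero_right]
      have hexp : -(1:ℝ)/t ≤ 0 := by
        rw [neg_div]; exact neg_nonpos.mpr (by positivity)
      have := Real.rpow_le_rpow_of_nonpos hl hz hexp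
      rw [← Real.rpow_mul (le_of_lt hzpos), show (-t * (-1/t) : ℝ) = 1 by field_simp,
        Real.rpow_one] at this
      exact this
    calc V {z : ℂ | l ≤ ‖z‖ ^ (-t)} ≤ volume (closedBall (0:ℂ) (l ^ (-(1:ℝ)/t))) :=
          le_trans (Measure.restrict_le_self _ ) (measure_mono hsub)
    _ = ENNReal.ofReal (l ^ (-(1:ℝ)/t)) ^ 2 * NNReal.pi := Complex.volume_closedBall _ _
    _ = ENNReal.ofReal (l ^ ((-2:ℝ)/t)) * NNReal.pi := by
        rw [← ENNReal.ofReal_pow (Real.rpow_nonneg (le_of_lt hl) _)]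
        congr 1
        rw [← Real.rpow_natCast (l ^ (-(1:ℝ)/t)) 2, ← Real.rpow_mul (le_of_lt hl)]
        congr 1
        push_cast
        ring
  have hlt : (-2:ℝ)/t < -1 := by
    rw [neg_div, neg_lt_neg_iff]
    exact (one_lt_div ht0).mpr ht2
  have hInt : IntegrableOn (fun x : ℝ => x ^ ((-2:ℝ)/t)) (Ioi (1:ℝ)) :=
    integrableOn_Ioi_rpow_of_lt hlt one_pos
  have hfin2 : ∫⁻ l in Ioi (1:ℝ), ENNReal.ofReal (l ^ ((-2:ℝ)/t)) ∂volume < ⊤ :=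
    hInt.lintegral_lt_top
  calc ∫⁻ l in Ioi (0:ℝ), V {z : ℂ | l ≤ ‖z‖ ^ (-t)}
      ≤ (∫⁻ l in Ioc (0:ℝ) 1, V {z : ℂ | l ≤ ‖z‖ ^ (-t)})
        + ∫⁻ l in Ioi (1:ℝ), V {z : ℂ | l ≤ ‖z‖ ^ (-t)} := by
        rw [show (Ioi (0:ℝ)) = Ioc (0:ℝ) 1 ∪ Ioi 1 from (Ioc_union_Ioi_eq_Ioi zero_le_one).symm]
        exact lintegral_union_le _ _ _
    _ ≤ (∫⁻ _ in Ioc (0:ℝ) 1, (ENNReal.ofReal 1 ^ 2 * NNReal.pi : ℝ≥0∞))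
        + ∫⁻ l in Ioi (1:ℝ), ENNReal.ofReal (l ^ ((-2:ℝ)/t)) * NNReal.pi := by
        exact add_le_add (lintegral_mono fun l => bound1 l)
          (setLIntegral_mono (by measurability) fun l hl => bound2 l (lt_trans one_pos hl))
    _ < ⊤ := by
        apply ENNReal.add_lt_top.mpr
        constructor
        · rw [setLIntegral_const]
          refine ENNReal.mul_lt_top (ENNReal.mul_lt_top ?_ ?_) ?_ <;> simp [Real.volume_Ioc]
        · rw [lintegral_mul_const' _ _ (by simp)]
          exact ENNReal.mul_lt_top hfin2 (by simp)


lemma setLIntegral_kernel_rpow_le {t : ℝ} (ht0 : 0 ≤ t) (w : ℂ) (C : Set ℂ) :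
    ∫⁻ z in C, ((‖w - z‖₊ : ℝ≥0∞))⁻¹ ^ t ∂volume
      ≤ volume C + ∫⁻ u in ball (0:ℂ) 1, ((‖u‖₊ : ℝ≥0∞))⁻¹ ^ t ∂volume := by
  have hmeas : Measurable fun u : ℂ => ((‖u‖₊ : ℝ≥0∞))⁻¹ ^ t :=
    ((measurable_nnnorm.coe_nnreal_ennreal).inv).pow measurable_const
  have hmeas' : Measurable fun z : ℂ => ((‖w - z‖₊ : ℝ≥0∞))⁻¹ ^ t :=
    hmeas.comp (measurable_const.sub measurable_id)
  have pointwise : ∀ z : ℂ, ((‖w - z‖₊ : ℝ≥0∞))⁻¹ ^ t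
      ≤ 1 + (ball w 1).indicator (fun z => ((‖w - z‖₊ : ℝ≥0∞))⁻¹ ^ t) z := by
    intro z
    by_cases hz : z ∈ ball w 1
    · rw [indicator_of_mem hz]
      exact le_add_self
    · rw [indicator_of_notMem hz]
      have h1 : (1:ℝ) ≤ ‖w - z‖ := by
        rw [mem_ball, dist_comm] at hz
        simpa [dist_eq_norm] using not_lt.mp hz
      have : ((‖w - z‖₊ : ℝ≥0∞))⁻¹ ≤ 1 := by
        rw [ENNReal.inv_le_one]
        exact_mod_cast (by rw [← NNReal.coe_le_coe, NNReal.coe_one, coe_nnnorm]; exact h1 : (1:ℝ≥0) ≤ ‖w - z‖₊)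
      calc ((‖w - z‖₊ : ℝ≥0∞))⁻¹ ^ t ≤ 1 ^ t := ENNReal.rpow_le_rpow this ht0
      _ = 1 := ENNReal.one_rpow t
      _ ≤ 1 + 0 := by simp
  have trans : ∫⁻ z in ball w 1, ((‖w - z‖₊ : ℝ≥0∞))⁻¹ ^ t ∂volume
      = ∫⁻ u in ball (0:ℂ) 1, ((‖u‖₊ : ℝ≥0∞))⁻¹ ^ t ∂volume := by
    have hmp : MeasurePreserving (fun z : ℂ => w - z) volume volume :=
      Measure.measurePreserving_sub_left volume w
    have hpre : (fun z : ℂ => w - z) ⁻¹' (ball (0:ℂ) 1) = ball w 1 := by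
      ext z
      simp [mem_ball, dist_eq_norm, norm_sub_rev z w]
    rw [← hpre]
    exact hmp.setLIntegral_comp_preimage measurableSet_ball hmeas
  calc ∫⁻ z in C, ((‖w - z‖₊ : ℝ≥0∞))⁻¹ ^ t ∂volume
      ≤ ∫⁻ z in C, (1 + (ball w 1).indicator (fun z => ((‖w - z‖₊ : ℝ≥0∞))⁻¹ ^ t) z) ∂volume :=
        lintegral_mono fun z => pointwise z
    _ = volume C + ∫⁻ z in C, (ball w 1).indicator (fun z => ((‖w - z‖₊ : ℝ≥0∞))⁻¹ ^ t) z ∂volume := by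
        rw [lintegral_add_left measurable_const]
        simp
    _ ≤ volume C + ∫⁻ z, (ball w 1).indicator (fun z => ((‖w - z‖₊ : ℝ≥0∞))⁻¹ ^ t) z ∂volume := by
        gcongr
        exact Measure.restrict_le_self
    _ = volume C + ∫⁻ z in ball w 1, ((‖w - z‖₊ : ℝ≥0∞))⁻¹ ^ t ∂volume := by
        rw [lintegral_indicator measurableSet_ball]
    _ = volume C + ∫⁻ u in ball (0:ℂ) 1, ((‖u‖₊ : ℝ≥0∞))⁻¹ ^ t ∂volume := by rw [trans]


lemma key_lintegral_rpow_lt_top (ν : Measure ℂ) [IsFiniteMeasure ν] {t : ℝ}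
    (ht1 : 1 < t) (ht2 : t < 2) (C : Set ℂ) (hC : volume C ≠ ⊤) :
    ∫⁻ z in C, (∫⁻ w, ((‖w - z‖₊ : ℝ≥0∞))⁻¹ ∂ν) ^ t ∂volume < ⊤ := by
  have ht0 : (0:ℝ) < t := lt_trans one_pos ht1
  set M := ν univ with hM
  have hMlt : M < ⊤ := measure_lt_top ν univ
  have hMt : M ^ (t - 1) ≠ ⊤ := ENNReal.rpow_ne_top_of_nonneg (by linarith) hMlt.ne
  have hker : Measurable fun u : ℂ => ((‖u‖₊ : ℝ≥0∞))⁻¹ :=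
    (measurable_nnnorm.coe_nnreal_ennreal).inv
  have hkerz : ∀ z : ℂ, Measurable fun w : ℂ => ((‖w - z‖₊ : ℝ≥0∞))⁻¹ := fun z =>
    hker.comp (measurable_id.sub measurable_const)
  set c := ∫⁻ u in ball (0:ℂ) 1, ((‖u‖₊ : ℝ≥0∞))⁻¹ ^ t ∂volume with hc
  have holder : ∀ z : ℂ, (∫⁻ w, ((‖w - z‖₊ : ℝ≥0∞))⁻¹ ∂ν) ^ t
      ≤ (∫⁻ w, ((‖w - z‖₊ : ℝ≥0∞))⁻¹ ^ t ∂ν) * M ^ (t - 1) := by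
    intro z
    have hpq : Real.HolderConjugate t (Real.conjExponent t) :=
      Real.HolderConjugate.conjExponent ht1
    have H := ENNReal.lintegral_mul_le_Lp_mul_Lq ν hpq ((hkerz z).aemeasurable)
      (aemeasurable_const (b := (1:ℝ≥0∞)))
    simp only [Pi.mul_apply, mul_one, ENNReal.one_rpow, lintegral_one] at H
    have H2 := ENNReal.rpow_le_rpow H ht0.le
    rw [ENNReal.mul_rpow_of_nonneg _ _ ht0.le, ← ENNReal.rpow_mul, ← ENNReal.rpow_mul,
      one_div_mul_cancel (ne_of_gt ht0), ENNReal.rpow_one] at H2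
    have hq : 1 / Real.conjExponent t * t = t - 1 := by
      rw [Real.conjExponent]
      field_simp
    rwa [hq] at H2
  calc ∫⁻ z in C, (∫⁻ w, ((‖w - z‖₊ : ℝ≥0∞))⁻¹ ∂ν) ^ t ∂volume
      ≤ ∫⁻ z in C, (∫⁻ w, ((‖w - z‖₊ : ℝ≥0∞))⁻¹ ^ t ∂ν) * M ^ (t - 1) ∂volume :=
        lintegral_mono fun z => holder z
    _ = (∫⁻ z in C, ∫⁻ w, ((‖w - z‖₊ : ℝ≥0∞))⁻¹ ^ t ∂ν ∂volume) * M ^ (t - 1) :=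
        lintegral_mul_const' _ _ hMt
    _ = (∫⁻ w, ∫⁻ z in C, ((‖w - z‖₊ : ℝ≥0∞))⁻¹ ^ t ∂volume ∂ν) * M ^ (t - 1) := by
        rw [lintegral_lintegral_swap]
        exact (((hker.comp (measurable_snd.sub measurable_fst)).pow measurable_const).aemeasurable)
    _ ≤ (∫⁻ _ : ℂ, (volume C + c) ∂ν) * M ^ (t - 1) := by
        gcongr with w
        exact setLIntegral_kernel_rpow_le ht0.le w C
    _ = (volume C + c) * M * M ^ (t - 1) := by rw [lintegral_const]
    _ < ⊤ := by
        refine ENNReal.mul_lt_top (ENNReal.mul_lt_top ?_ hMlt) (lt_of_le_of_ne le_top hMt)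
        exact ENNReal.add_lt_top.mpr ⟨lt_of_le_of_ne le_top hC, lintegral_ball_rpow_inv_lt_top ht0 ht2⟩


/-- A finite complex Borel measure with compact support is represented as
`g · μ` with `μ` a finite positive measure supported in a compact set `K` and `g`
an integrable complex density.  Its principal value Cauchy transform exists for
Lebesgue-almost every `z ∈ ℂ` and belongs to `L^s_loc(ℂ)` for `0 < s < 2`. -/
theorem cauchy_transform_ae_exists_and_locally_Ls
    (μ : Measure ℂ) [IsFiniteMeasure μ] (g : ℂ → ℂ) (hg : Integrable g μ)
    (K : Set ℂ) (hK : IsCompact K) (hsupp : μ Kᶜ = 0)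
    (s : ℝ) (hs0 : 0 < s) (hs2 : s < 2) :
    ∃ F : ℂ → ℂ,
      (∀ᵐ z ∂(volume : Measure ℂ),
        Tendsto (fun ε : ℝ => ∫ w in {w : ℂ | ε < ‖w - z‖}, (w - z)⁻¹ * g w ∂μ)
          (𝓝[>] (0 : ℝ)) (𝓝 (F z))) ∧
      ∀ C : Set ℂ, IsCompact C → IntegrableOn (fun z => ‖F z‖ ^ s) C volume := by
  -- fix an exponent t ∈ (1,2) with s ≤ t
  set t : ℝ := max s (3/2) with hT
  have ht1 : (1:ℝ) < t := lt_of_lt_of_le (by norm_num) (le_max_right _ _)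
  have ht2 : t < 2 := max_lt hs2 (by norm_num)
  have hst : s ≤ t := le_max_left _ _
  have ht0 : (0:ℝ) < t := lt_trans one_pos ht1
  -- the density measure
  set ν : Measure ℂ := μ.withDensity (fun w => (‖g w‖₊ : ℝ≥0∞)) with hν
  haveI hν_fin : IsFiniteMeasure ν := by
    constructor
    rw [hν, withDensity_apply _ MeasurableSet.univ, Measure.restrict_univ]
    exact hg.2
  -- the maximal kernel integral
  set f : ℂ → ℝ≥0∞ := fun z => ∫⁻ w, ((‖w - z‖₊ : ℝ≥0∞))⁻¹ ∂ν with hf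
  have hker : Measurable fun u : ℂ => ((‖u‖₊ : ℝ≥0∞))⁻¹ :=
    (measurable_nnnorm.coe_nnreal_ennreal).inv
  have hkerz : ∀ z : ℂ, Measurable fun w : ℂ => ((‖w - z‖₊ : ℝ≥0∞))⁻¹ := fun z =>
    hker.comp (measurable_id.sub measurable_const)
  have hle : ∀ z : ℂ, ∫⁻ w, (‖(w - z)⁻¹ * g w‖₊ : ℝ≥0∞) ∂μ ≤ f z := by
    intro z
    have heq : f z = ∫⁻ w, ((fun w => (‖g w‖₊ : ℝ≥0∞)) * fun w => ((‖w - z‖₊ : ℝ≥0∞))⁻¹) w ∂μ :=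
      lintegral_withDensity_eq_lintegral_mul₀ hg.1.aemeasurable.nnnorm.coe_nnreal_ennreal
        (hkerz z).aemeasurable
    rw [heq]
    refine lintegral_mono fun w => ?_
    simp only [Pi.mul_apply, nnnorm_mul, ENNReal.coe_mul, nnnorm_inv]
    rw [mul_comm]
    exact mul_le_mul_right ENNReal.coe_inv_le _
  have hfm : Measurable f := by
    apply Measurable.lintegral_prod_right' (f := fun p : ℂ × ℂ => ((‖p.2 - p.1‖₊ : ℝ≥0∞))⁻¹)
    exact hker.comp (measurable_snd.sub measurable_fst)
  -- a.e. finiteness of f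
  have hae : ∀ᵐ z ∂(volume : Measure ℂ), f z < ⊤ := by
    set S : Set ℂ := {z | f z = ⊤} with hS
    have hSm : MeasurableSet S := hfm (measurableSet_singleton ⊤)
    have hn : ∀ n : ℕ, volume (S ∩ closedBall (0:ℂ) n) = 0 := by
      intro n
      have hfin : ∫⁻ z in closedBall (0:ℂ) n, f z ^ t ∂volume < ⊤ :=
        key_lintegral_rpow_lt_top ν ht1 ht2 _ (measure_closedBall_lt_top).ne
      have h1 : ∀ᵐ z ∂(volume.restrict (closedBall (0:ℂ) n)), f z ^ t < ⊤ :=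
        ae_lt_top (hfm.pow measurable_const) hfin.ne
      have h2 : ∀ᵐ z ∂(volume.restrict (closedBall (0:ℂ) n)), z ∉ S := by
        filter_upwards [h1] with z hz
        intro hzS
        rw [hS, mem_setOf_eq] at hzS
        rw [hzS, ENNReal.top_rpow_of_pos ht0] at hz
        exact absurd hz (lt_irrefl _)
      have := ae_iff.mp h2
      simpa [Measure.restrict_apply hSm] using this
    have hSnull : volume S = 0 := by
      have hcover : S = ⋃ n : ℕ, S ∩ closedBall (0:ℂ) n := by
        ext z
        simp only [mem_iUnion, mem_inter_iff, mem_closedBall, dist_zero_right]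
        exact ⟨fun hz => by
          obtain ⟨n, hn'⟩ := exists_nat_ge ‖z‖
          exact ⟨n, hz, hn'⟩, fun ⟨n, hz, _⟩ => hz⟩
      rw [hcover]
      exact measure_iUnion_null fun n => hn n
    rw [ae_iff]
    convert hSnull using 2
    ext z
    simp [hS, lt_top_iff_ne_top]
  -- the Cauchy transform
  refine ⟨fun z => ∫ w, (w - z)⁻¹ * g w ∂μ, ?_, ?_⟩
  · -- a.e. convergence
    filter_upwards [hae] with z hz
    have hmul : AEStronglyMeasurable (fun w : ℂ => (w - z)⁻¹ * g w) μ :=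
      (((measurable_id.sub measurable_const).inv).aestronglyMeasurable).mul hg.1
    have hInt : Integrable (fun w : ℂ => (w - z)⁻¹ * g w) μ :=
      ⟨hmul, lt_of_le_of_lt (hle z) hz⟩
    have hsets : ∀ ε : ℝ, MeasurableSet {w : ℂ | ε < ‖w - z‖} := fun ε =>
      (isOpen_lt continuous_const ((continuous_id.sub continuous_const).norm)).measurableSet
    have H : Tendsto (fun ε : ℝ => ∫ w, ({w : ℂ | ε < ‖w - z‖}).indicator
        (fun w => (w - z)⁻¹ * g w) w ∂μ) (𝓝[>] (0:ℝ)) (𝓝 (∫ w, (w - z)⁻¹ * g w ∂μ)) := by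
      apply tendsto_integral_filter_of_dominated_convergence
        (bound := fun w => ‖(w - z)⁻¹ * g w‖)
      · exact Eventually.of_forall fun ε => hmul.indicator (hsets ε)
      · exact Eventually.of_forall fun ε => Eventually.of_forall fun w =>
          norm_indicator_le_norm_self _ _
      · exact hInt.norm
      · refine Eventually.of_forall fun w => ?_
        by_cases hw : w = z
        · subst hw
          have : ∀ ε : ℝ, ε ∈ Ioi (0:ℝ) → ({w' : ℂ | ε < ‖w' - w‖}).indicator
              (fun w' => (w' - w)⁻¹ * g w') w = (w - w)⁻¹ * g w := by
            intro ε hε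
            rw [indicator_of_notMem]
            · simp
            · simp only [mem_setOf_eq, sub_self, norm_zero]
              exact not_lt.mpr (le_of_lt hε)
          refine Tendsto.congr' ?_ tendsto_const_nhds
          filter_upwards [self_mem_nhdsWithin] with ε hε
          exact (this ε hε).symm
        · have hpos : 0 < ‖w - z‖ := by
            rw [norm_pos_iff, sub_ne_zero]; exact hw
          have hev : ∀ᶠ ε in 𝓝[>] (0:ℝ), ε < ‖w - z‖ :=
            eventually_nhdsWithin_of_eventually_nhds (Filter.Tendsto.eventually_lt_const hpos tendsto_id)
          refine Tendsto.congr' ?_ tendsto_const_nhds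
          filter_upwards [hev] with ε hε
          exact (Set.indicator_of_mem (show w ∈ {w' : ℂ | ε < ‖w' - z‖} from hε) (fun w' => (w' - z)⁻¹ * g w')).symm
    refine Tendsto.congr (fun ε => ?_) H
    exact integral_indicator (hsets ε)
  · -- local L^s
    intro C hC
    have hFm : AEStronglyMeasurable (fun z => ∫ w, (w - z)⁻¹ * g w ∂μ) volume := by
      apply AEStronglyMeasurable.integral_prod_right'
        (f := fun p : ℂ × ℂ => (p.2 - p.1)⁻¹ * g p.2)
      exact (((measurable_snd.sub measurable_fst).inv).aestronglyMeasurable).mul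
        (hg.1.comp_quasiMeasurePreserving Measure.quasiMeasurePreserving_snd)
    refine ⟨((hFm.norm.aemeasurable.pow aemeasurable_const).aestronglyMeasurable).restrict, ?_⟩
    have hbd : ∀ z : ℂ, (‖(‖∫ w, (w - z)⁻¹ * g w ∂μ‖ ^ s)‖₊ : ℝ≥0∞) ≤ 1 + f z ^ t := by
      intro z
      have e1 : (‖(‖∫ w, (w - z)⁻¹ * g w ∂μ‖ ^ s)‖₊ : ℝ≥0∞)
          = ((‖∫ w, (w - z)⁻¹ * g w ∂μ‖₊ : ℝ≥0∞)) ^ s := by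
        rw [Real.nnnorm_rpow_of_nonneg (norm_nonneg _), nnnorm_norm,
          ENNReal.coe_rpow_of_nonneg _ hs0.le]
      have e2 : (‖∫ w, (w - z)⁻¹ * g w ∂μ‖₊ : ℝ≥0∞) ≤ f z :=
        le_trans (enorm_integral_le_lintegral_enorm _) (hle z)
      rw [e1]
      by_cases h : (‖∫ w, (w - z)⁻¹ * g w ∂μ‖₊ : ℝ≥0∞) ≤ 1
      · calc ((‖∫ w, (w - z)⁻¹ * g w ∂μ‖₊ : ℝ≥0∞)) ^ s ≤ 1 ^ s :=
              ENNReal.rpow_le_rpow h hs0.le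
          _ = 1 := ENNReal.one_rpow s
          _ ≤ 1 + f z ^ t := le_self_add
      · push_neg at h
        calc ((‖∫ w, (w - z)⁻¹ * g w ∂μ‖₊ : ℝ≥0∞)) ^ s
            ≤ ((‖∫ w, (w - z)⁻¹ * g w ∂μ‖₊ : ℝ≥0∞)) ^ t :=
              ENNReal.rpow_le_rpow_of_exponent_le h.le hst
          _ ≤ f z ^ t := ENNReal.rpow_le_rpow e2 ht0.le
          _ ≤ 1 + f z ^ t := le_add_self
    show (∫⁻ z in C, (‖(‖∫ w, (w - z)⁻¹ * g w ∂μ‖ ^ s)‖₊ : ℝ≥0∞) ∂volume) < ⊤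
    calc ∫⁻ z in C, (‖(‖∫ w, (w - z)⁻¹ * g w ∂μ‖ ^ s)‖₊ : ℝ≥0∞) ∂volume
        ≤ ∫⁻ z in C, (1 + f z ^ t) ∂volume := lintegral_mono fun z => hbd z
      _ = volume C + ∫⁻ z in C, f z ^ t ∂volume := by
          rw [lintegral_add_left measurable_const]
          simp
      _ < ⊤ := ENNReal.add_lt_top.mpr ⟨hC.measure_lt_top,
          key_lintegral_rpow_lt_top ν ht1 ht2 C hC.measure_lt_top.ne⟩
end

section
/- Let 0 < β < 1/16, let λ₀ ∈ 𝔻 and λ ∈ ℂ with |λ − λ₀| ≤ 4β(1 − |λ₀|). Then for every z on the unit circle 𝕋, |1 − λ·conj(λ₀)| / |z − λ| ≤ ((1+4β)/(1−4β)) · (1 − |λ₀|²) / |1 − conj(λ₀)·z|. -/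
open Complex

/-- for `0 < β < 1/16`, `λ₀ ∈ 𝔻`, `|λ − λ₀| ≤ 4β(1 − |λ₀|)` and `z ∈ 𝕋`,
`|1 − λ conj(λ₀)| / |z − λ| ≤ ((1+4β)/(1−4β)) (1 − |λ₀|²)/|1 − conj(λ₀) z|`. -/
theorem kernel_quotient_estimate (β : ℝ) (hβ0 : 0 < β) (hβ : β < 1/16)
    (l₀ l z : ℂ) (hl₀ : ‖l₀‖ < 1) (hl : ‖l - l₀‖ ≤ 4 * β * (1 - ‖l₀‖))
    (hz : ‖z‖ = 1) :
    ‖1 - l * (starRingEnd ℂ) l₀‖ / ‖z - l‖ ≤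
      ((1 + 4*β) / (1 - 4*β)) * ((1 - ‖l₀‖^2) / ‖1 - (starRingEnd ℂ) l₀ * z‖) := by
  set r := ‖l₀‖ with hr
  have hr0 : 0 ≤ r := norm_nonneg _
  have hβ4 : (0:ℝ) < 1 - 4*β := by linarith
  -- key identity: ‖1 - conj l₀ * z‖ = ‖z - l₀‖
  have hzz : z * (starRingEnd ℂ) z = 1 := by
    rw [Complex.mul_conj]
    norm_cast
    rw [Complex.normSq_eq_norm_sq]
    simp [hz]
  have hkey : ‖1 - (starRingEnd ℂ) l₀ * z‖ = ‖z - l₀‖ := by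
    have : (1 : ℂ) - (starRingEnd ℂ) l₀ * z = z * (starRingEnd ℂ) (z - l₀) := by
      rw [map_sub, mul_sub, hzz]; ring
    rw [this, norm_mul, hz, one_mul, RCLike.norm_conj]
  -- lower bound for ‖z - l₀‖
  have hD1 : 1 - r ≤ ‖z - l₀‖ := by
    have := norm_sub_norm_le z l₀
    rw [hz] at this; linarith
  have hDpos : 0 < ‖z - l₀‖ := lt_of_lt_of_le (by linarith) hD1
  -- lower bound for ‖z - l‖
  have hden : (1 - 4*β) * ‖z - l₀‖ ≤ ‖z - l‖ := by
    have h1 : ‖z - l₀‖ - ‖l - l₀‖ ≤ ‖z - l‖ := by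
      have := norm_sub_norm_le (z - l₀) (l - l₀)
      have e : (z - l₀) - (l - l₀) = z - l := by ring
      rw [e] at this; linarith
    have h2 : ‖l - l₀‖ ≤ 4*β * ‖z - l₀‖ := by
      calc ‖l - l₀‖ ≤ 4*β*(1-r) := hl
        _ ≤ 4*β * ‖z - l₀‖ := by nlinarith
    nlinarith
  have hdenpos : 0 < ‖z - l‖ := lt_of_lt_of_le (by positivity) hden
  -- numerator bound
  have hnum : ‖1 - l * (starRingEnd ℂ) l₀‖ ≤ (1 + 4*β) * (1 - r^2) := by
    have e : (1 : ℂ) - l * (starRingEnd ℂ) l₀ =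
        (1 - l₀ * (starRingEnd ℂ) l₀) - (l - l₀) * (starRingEnd ℂ) l₀ := by ring
    have h1 : ‖(1:ℂ) - l₀ * (starRingEnd ℂ) l₀‖ = 1 - r^2 := by
      rw [Complex.mul_conj]
      have : ((Complex.normSq l₀ : ℂ)) = ((r^2 : ℝ) : ℂ) := by
        norm_cast
        rw [Complex.normSq_eq_norm_sq]
      rw [this]
      rw [show (1:ℂ) - ((r^2:ℝ):ℂ) = (((1 - r^2 : ℝ)):ℂ) by push_cast; ring]
      rw [Complex.norm_real]
      rw [Real.norm_eq_abs, _root_.abs_of_nonneg]; nlinarith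
    calc ‖1 - l * (starRingEnd ℂ) l₀‖
        ≤ ‖(1:ℂ) - l₀ * (starRingEnd ℂ) l₀‖ + ‖(l - l₀) * (starRingEnd ℂ) l₀‖ := by
          rw [e]; exact norm_sub_le _ _
      _ = (1 - r^2) + ‖l - l₀‖ * r := by rw [h1, norm_mul, RCLike.norm_conj]
      _ ≤ (1 - r^2) + 4*β*(1-r) * r := by nlinarith
      _ ≤ (1 + 4*β) * (1 - r^2) := by nlinarith
  rw [hkey, mul_div_assoc', div_le_div_iff₀ hdenpos hDpos]
  have hK : (1 + 4*β) / (1 - 4*β) * (1 - 4*β) = 1 + 4*β := by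
    field_simp
  have hKpos : 0 < (1 + 4*β) / (1 - 4*β) := by positivity
  have hnn : 0 ≤ 1 - r^2 := by nlinarith
  calc ‖1 - l * (starRingEnd ℂ) l₀‖ * ‖z - l₀‖
      ≤ ((1 + 4*β) * (1 - r^2)) * ‖z - l₀‖ := by nlinarith
    _ = ((1 + 4*β) / (1 - 4*β)) * (1 - r^2) * ((1 - 4*β) * ‖z - l₀‖) := by
        field_simp
    _ ≤ ((1 + 4*β) / (1 - 4*β)) * (1 - r^2) * ‖z - l‖ :=
        mul_le_mul_of_nonneg_left hden (by positivity)
end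

section
/- Let h ∈ L¹(m) with h ≥ 0 on the unit circle 𝕋. Then for m-almost every e^{iθ} ∈ 𝕋, the Poisson integral ∫_𝕋 (1 − |λ|²)/|1 − conj(λ)z|² h(z) dm(z) converges to h(e^{iθ}) as λ → e^{iθ} nontangentially, i.e., with λ restricted to the region Γ_{1/4}(e^{iθ}) (the convex hull of {e^{iθ}} and the disk {|z| ≤ 1/4}). -/
open Complex MeasureTheory Filter Topology Set

/-- The nontangential approach region `Γ_σ(w)`: the convex hull of the point `w`
and the closed disk `{|z| ≤ σ}`. -/
def stolzRegion (σ : ℝ) (w : ℂ) : Set ℂ :=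
  convexHull ℝ ({w} ∪ Metric.closedBall 0 σ)

noncomputable def pker (l : ℂ) (s : ℝ) : ℝ :=
  (1 - ‖l‖ ^ 2) / ‖1 - (starRingEnd ℂ) l * Complex.exp ((s : ℂ) * Complex.I)‖ ^ 2

lemma hasDerivAt_creal {f : ℝ → ℂ} {d : ℂ} {x : ℝ} (hf : HasDerivAt f d x) :
    HasDerivAt (fun t => (f t).re) d.re x :=
  Complex.reCLM.hasFDerivAt.comp_hasDerivAt x hf

lemma key_alg {q : ℂ} (hq : ‖q‖ < 1) :
    (1 - ‖q‖ ^ 2) / ‖1 - q‖ ^ 2 = 1 + 2 * (q / (1 - q)).re := by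
  have h1 : 1 - q ≠ 0 := sub_ne_zero.2 (by rintro rfl; simp at hq)
  have hn : Complex.normSq (1 - q) ≠ 0 := by
    simpa [Complex.normSq_eq_zero] using h1
  have e1 : ‖q‖ ^ 2 = Complex.normSq q := by
    rw [Complex.sq_norm]
  have e2 : ‖1 - q‖ ^ 2 = Complex.normSq (1 - q) := by
    rw [Complex.sq_norm]
  have key : 1 - Complex.normSq q
      = Complex.normSq (1 - q) + 2 * (q.re * (1 - q).re + q.im * (1 - q).im) := by
    simp only [Complex.normSq_apply, Complex.sub_re, Complex.sub_im, Complex.one_re,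
      Complex.one_im]
    ring
  rw [e1, e2, Complex.div_re, key, add_div, div_self hn]
  ring

lemma norm_exp_neg_I (s : ℝ) : ‖Complex.exp (-(s : ℂ) * Complex.I)‖ = 1 := by
  have : -(s : ℂ) * Complex.I = ((-s : ℝ) : ℂ) * Complex.I := by push_cast; ring
  rw [this, Complex.norm_exp_ofReal_mul_I]

lemma norm_exp_I (s : ℝ) : ‖Complex.exp ((s : ℂ) * Complex.I)‖ = 1 := by
  rw [Complex.norm_exp_ofReal_mul_I]

lemma norm_denom (l : ℂ) (s : ℝ) :
    ‖1 - (starRingEnd ℂ) l * Complex.exp ((s : ℂ) * Complex.I)‖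
      = ‖1 - l * Complex.exp (-(s : ℂ) * Complex.I)‖ := by
  have he : (starRingEnd ℂ) (Complex.exp ((s : ℂ) * Complex.I))
      = Complex.exp (-(s : ℂ) * Complex.I) := by
    rw [← Complex.exp_conj]
    congr 1
    simp [map_mul, Complex.conj_ofReal, Complex.conj_I, mul_neg, neg_mul]
  have hc : (starRingEnd ℂ) (1 - (starRingEnd ℂ) l * Complex.exp ((s : ℂ) * Complex.I))
      = 1 - l * Complex.exp (-(s : ℂ) * Complex.I) := by
    rw [map_sub, map_one, map_mul, Complex.conj_conj, he]
  rw [← hc, RCLike.norm_conj]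

lemma pker_nonneg {l : ℂ} (hl : ‖l‖ < 1) (s : ℝ) : 0 ≤ pker l s := by
  unfold pker
  apply div_nonneg
  · nlinarith [norm_nonneg l]
  · positivity

lemma pker_eq (l : ℂ) (hl : ‖l‖ < 1) (s : ℝ) :
    pker l s = 1 + 2 * ((l * Complex.exp (-(s : ℂ) * Complex.I))
      / (1 - l * Complex.exp (-(s : ℂ) * Complex.I))).re := by
  have hq : ‖l * Complex.exp (-(s : ℂ) * Complex.I)‖ < 1 := by
    rw [norm_mul, norm_exp_neg_I, mul_one]; exact hl
  have h2 : ‖l‖ ^ 2 = ‖l * Complex.exp (-(s : ℂ) * Complex.I)‖ ^ 2 := by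
    rw [norm_mul, norm_exp_neg_I, mul_one]
  unfold pker
  rw [norm_denom, h2]
  exact key_alg hq

lemma u_ne {l : ℂ} (hl : ‖l‖ < 1) (s : ℝ) :
    0 < (1 - l * Complex.exp (-(s : ℂ) * Complex.I)).re := by
  have h1 : (l * Complex.exp (-(s : ℂ) * Complex.I)).re ≤ ‖l‖ := by
    calc (l * Complex.exp (-(s : ℂ) * Complex.I)).re
        ≤ ‖l * Complex.exp (-(s : ℂ) * Complex.I)‖ := Complex.re_le_norm _
      _ = ‖l‖ := by rw [norm_mul, norm_exp_neg_I, mul_one]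
  simp only [Complex.sub_re, Complex.one_re]
  linarith

lemma pker_integral (l : ℂ) (hl : ‖l‖ < 1) :
    ∫ s in (0:ℝ)..(2 * Real.pi), pker l s = 2 * Real.pi := by
  set u : ℝ → ℂ := fun s => 1 - l * Complex.exp (-(s : ℂ) * Complex.I) with hu
  have hune : ∀ s : ℝ, u s ≠ 0 := fun s h => by
    have h' : (1 - l * Complex.exp (-(s : ℂ) * Complex.I)) = 0 := h
    have := u_ne hl s
    rw [h'] at this
    simp at this
  have hψcont : Continuous fun s : ℝ =>
      ((l * Complex.exp (-(s : ℂ) * Complex.I)) / u s).re := by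
    apply Complex.continuous_re.comp
    apply Continuous.div
    · exact continuous_const.mul (Complex.continuous_exp.comp (by continuity))
    · exact (continuous_const.sub
        (continuous_const.mul (Complex.continuous_exp.comp (by continuity))))
    · exact hune
  have hderiv : ∀ s : ℝ, HasDerivAt (fun t => (-Complex.I * Complex.log (u t)).re)
      (((l * Complex.exp (-(s : ℂ) * Complex.I)) / u s).re) s := by
    intro s
    have h1 : HasDerivAt (fun t : ℝ => -(t : ℂ) * Complex.I) (-Complex.I) s := by
      have := ((Complex.ofRealCLM.hasDerivAt (x := s)).neg.mul_const Complex.I)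
      exact this.congr_deriv (by simp)
    have h2 : HasDerivAt (fun t : ℝ => Complex.exp (-(t : ℂ) * Complex.I))
        (Complex.exp (-(s : ℂ) * Complex.I) * -Complex.I) s := h1.cexp
    have h3 : HasDerivAt u (Complex.I * (l * Complex.exp (-(s : ℂ) * Complex.I))) s := by
      have := (h2.const_mul l).const_sub 1
      exact this.congr_deriv (by ring)
    have h4 : HasDerivAt (fun t => Complex.log (u t))
        ((u s)⁻¹ * (Complex.I * (l * Complex.exp (-(s : ℂ) * Complex.I)))) s := by
      exact (Complex.hasDerivAt_log (Or.inl (u_ne hl s))).comp s h3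
    have h5 := h4.const_mul (-Complex.I)
    have h6 := hasDerivAt_creal h5
    convert h6 using 1
    congr 1
    have hI : -Complex.I * Complex.I = 1 := by
      rw [neg_mul, Complex.I_mul_I, neg_neg]
    rw [div_eq_mul_inv]
    have hrw : -Complex.I * ((u s)⁻¹ * (Complex.I * (l * Complex.exp (-(s : ℂ) * Complex.I))))
        = -Complex.I * Complex.I * (l * Complex.exp (-(s : ℂ) * Complex.I) * (u s)⁻¹) := by
      ring
    rw [hrw, hI, one_mul]
  have hFTC := intervalIntegral.integral_eq_sub_of_hasDerivAt
    (f := fun t => (-Complex.I * Complex.log (u t)).re)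
    (fun x _ => hderiv x) (hψcont.intervalIntegrable 0 (2 * Real.pi))
  have hu2π : u (2 * Real.pi) = u 0 := by
    simp only [hu]
    congr 2
    have e1 : -((2 * Real.pi : ℝ) : ℂ) * Complex.I = -(2 * ↑Real.pi * Complex.I) := by
      push_cast; ring
    rw [e1, Complex.exp_neg, Complex.exp_two_pi_mul_I]
    norm_num
  beta_reduce at hFTC
  rw [hu2π] at hFTC
  simp only [sub_self] at hFTC
  rw [intervalIntegral.integral_congr (g := fun s =>
      1 + 2 * ((l * Complex.exp (-(s : ℂ) * Complex.I)) / u s).re)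
      (fun s _ => pker_eq l hl s)]
  rw [intervalIntegral.integral_add intervalIntegrable_const
      ((hψcont.intervalIntegrable 0 (2 * Real.pi)).const_mul 2)]
  rw [intervalIntegral.integral_const_mul, hFTC]
  simp

lemma stolz_dist {w l : ℂ} (hw : ‖w‖ = 1) (hl : l ∈ stolzRegion (1/4) w) :
    (3/5) * ‖l - w‖ ≤ 1 - ‖l‖ := by
  have hball : Convex ℝ (Metric.closedBall (0:ℂ) (1/4)) := convex_closedBall _ _
  rw [stolzRegion, Set.singleton_union, convexHull_insert ⟨0, by norm_num⟩,
    hball.convexHull_eq] at hl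
  rw [mem_convexJoin] at hl
  obtain ⟨a, ha, b, hb, hseg⟩ := hl
  rw [Set.mem_singleton_iff] at ha
  rw [ha] at hseg
  obtain ⟨p, t, hp, ht, hpt, rfl⟩ := hseg
  rw [Metric.mem_closedBall, dist_zero_right] at hb
  have hwb : p • w + t • b - w = t • (b - w) := by
    have hp1 : p = 1 - t := by linarith
    rw [hp1]; module
  have h1 : ‖p • w + t • b - w‖ ≤ t * (5/4) := by
    rw [hwb, norm_smul, Real.norm_eq_abs, _root_.abs_of_nonneg ht]
    have : ‖b - w‖ ≤ 5/4 := by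
      calc ‖b - w‖ ≤ ‖b‖ + ‖w‖ := norm_sub_le _ _
        _ ≤ 5/4 := by rw [hw]; linarith
    exact mul_le_mul_of_nonneg_left this ht
  have h2 : ‖p • w + t • b‖ ≤ 1 - (3/4) * t := by
    calc ‖p • w + t • b‖ ≤ ‖p • w‖ + ‖t • b‖ := norm_add_le _ _
      _ = p * ‖w‖ + t * ‖b‖ := by
          rw [norm_smul, norm_smul, Real.norm_eq_abs, Real.norm_eq_abs,
            _root_.abs_of_nonneg hp, _root_.abs_of_nonneg ht]
      _ ≤ p + t * (1/4) := by
          rw [hw, mul_one]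
          have := mul_le_mul_of_nonneg_left hb ht
          linarith
      _ = 1 - (3/4) * t := by linarith
  nlinarith

lemma kernel_bound {w l z : ℂ} (hw : ‖w‖ = 1) (hz : ‖z‖ = 1)
    (hρ : 0 < ‖l - w‖) (hst : (3/5) * ‖l - w‖ ≤ 1 - ‖l‖) :
    (1 - ‖l‖ ^ 2) / ‖z - l‖ ^ 2 ≤ 50 * ‖l - w‖ / (‖l - w‖ + ‖z - w‖) ^ 2 := by
  set ρ := ‖l - w‖ with hρdef
  set d := ‖z - w‖ with hddef
  have hl1 : ‖l‖ < 1 := by nlinarith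
  have hd0 : 0 ≤ d := norm_nonneg _
  have hub : 1 - ‖l‖ ≤ ρ := by
    have := norm_sub_norm_le w l
    rw [norm_sub_rev w l] at this
    rw [hw] at this
    linarith
  have hnum : 1 - ‖l‖ ^ 2 ≤ 2 * ρ := by nlinarith [norm_nonneg l]
  have hzl1 : 1 - ‖l‖ ≤ ‖z - l‖ := by
    have := norm_sub_norm_le z l
    rw [hz] at this
    linarith
  have hzl2 : d - ρ ≤ ‖z - l‖ := by
    linarith [norm_sub_le_norm_sub_add_norm_sub z l w]
  have hlow : (ρ + d) / 5 ≤ ‖z - l‖ := by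
    rcases le_or_gt d (2 * ρ) with hc | hc
    · nlinarith
    · nlinarith
  have hpos : 0 < (ρ + d) / 5 := by positivity
  have hsq : ((ρ + d) / 5) ^ 2 ≤ ‖z - l‖ ^ 2 := by nlinarith
  calc (1 - ‖l‖ ^ 2) / ‖z - l‖ ^ 2 ≤ (2 * ρ) / (((ρ + d) / 5) ^ 2) := by
        apply div_le_div₀ (by positivity) hnum (by positivity) hsq
    _ = 50 * ρ / (ρ + d) ^ 2 := by
        field_simp
        ring

lemma chord_lower {t : ℝ} (ht : |t| ≤ Real.pi) (θ : ℝ) :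
    (2 / Real.pi) * |t| ≤
      ‖Complex.exp (((θ + t : ℝ) : ℂ) * Complex.I) - Complex.exp ((θ : ℂ) * Complex.I)‖ := by
  have hfact : Complex.exp (((θ + t : ℝ) : ℂ) * Complex.I) - Complex.exp ((θ : ℂ) * Complex.I)
      = Complex.exp ((θ : ℂ) * Complex.I) * (Complex.exp ((t : ℂ) * Complex.I) - 1) := by
    rw [mul_sub, ← Complex.exp_add, mul_one]
    congr 2
    push_cast
    ring
  rw [hfact, norm_mul, norm_exp_I, one_mul]
  have hsq : ‖Complex.exp ((t : ℂ) * Complex.I) - 1‖ ^ 2 = 2 - 2 * Real.cos t := by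
    rw [Complex.sq_norm, Complex.normSq_apply]
    simp only [Complex.sub_re, Complex.sub_im, Complex.exp_ofReal_mul_I_re,
      Complex.exp_ofReal_mul_I_im, Complex.one_re, Complex.one_im]
    nlinarith [Real.sin_sq_add_cos_sq t]
  have key : ((2 / Real.pi) * |t|) ^ 2 ≤ 2 - 2 * Real.cos t := by
    rw [← Real.cos_abs t]
    set x := |t| with hx
    have hx0 : 0 ≤ x := abs_nonneg t
    have hxπ : x ≤ Real.pi := ht
    have hsin : 2 / Real.pi * (x / 2) ≤ Real.sin (x / 2) :=
      Real.mul_le_sin (by positivity) (by linarith)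
    have hcos : Real.cos x = 1 - 2 * Real.sin (x / 2) ^ 2 := by
      have h := Real.cos_two_mul' (x / 2)
      rw [show 2 * (x / 2) = x by ring] at h
      nlinarith [Real.sin_sq_add_cos_sq (x / 2)]
    have ha : 0 ≤ 2 / Real.pi * (x / 2) := by positivity
    have h2 : (2 / Real.pi * (x / 2)) ^ 2 ≤ Real.sin (x / 2) ^ 2 := by nlinarith
    rw [hcos]
    nlinarith [h2]
  have hnn : 0 ≤ (2 / Real.pi) * |t| := by positivity
  nlinarith [norm_nonneg (Complex.exp ((t : ℂ) * Complex.I) - 1),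
    sq_nonneg (‖Complex.exp ((t : ℂ) * Complex.I) - 1‖ + (2 / Real.pi) * |t|)]

lemma periodic_intervalIntegrable {g : ℝ → ℝ} {T : ℝ} (hT : 0 < T)
    (hper : Function.Periodic g T) (h : IntervalIntegrable g volume 0 T) :
    ∀ a b : ℝ, IntervalIntegrable g volume a b := by
  have hk : ∀ k : ℤ, IntervalIntegrable g volume (k * T) (k * T + T) := by
    intro k
    have h1 := h.comp_sub_right (k * T)
    have h2 : (fun x => g (x - k * T)) = g := by
      funext x
      exact (hper.int_mul k).sub_eq x
    rw [h2] at h1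
    simpa [zero_add, add_comm] using h1
  have hn : ∀ n : ℕ, IntervalIntegrable g volume (-(n * T)) (n * T) := by
    intro n
    induction n with
    | zero => simp
    | succ m ih =>
      have hright : IntervalIntegrable g volume (m * T) (m * T + T) := by
        simpa using hk m
      have hleft : IntervalIntegrable g volume (-((m + 1 : ℕ) * T)) (-(m * T)) := by
        have := hk (-(m + 1))
        have e1 : ((-(m + 1) : ℤ) : ℝ) * T = -((m + 1 : ℕ) * T) := by push_cast; ring
        have e2 : ((-(m + 1) : ℤ) : ℝ) * T + T = -((m : ℕ) * T) := by push_cast; ring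
        rwa [e2, e1] at this
      have e3 : ((m + 1 : ℕ) : ℝ) * T = (m : ℝ) * T + T := by push_cast; ring
      refine (hleft.trans ih).trans ?_
      rw [e3]
      exact hright
  intro a b
  obtain ⟨n, hna⟩ := exists_nat_gt ((|a| + |b|) / T)
  have hnT : |a| + |b| < n * T := by
    rw [div_lt_iff₀ hT] at hna
    linarith
  have habs : (0:ℝ) ≤ |a| + |b| := by positivity
  apply (hn n).mono_set
  rw [Set.uIcc_subset_uIcc_iff_le]
  constructor
  · rw [min_eq_left (by linarith : -((n:ℝ) * T) ≤ (n:ℝ) * T)]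
    apply le_min
    · linarith [neg_abs_le a, abs_nonneg b]
    · linarith [neg_abs_le b, abs_nonneg a]
  · rw [max_eq_right (by linarith : -((n:ℝ) * T) ≤ (n:ℝ) * T)]
    apply max_le
    · linarith [le_abs_self a, abs_nonneg b]
    · linarith [le_abs_self b, abs_nonneg a]

lemma locally_integrable_of_intervalIntegrable {g : ℝ → ℝ}
    (h : ∀ a b : ℝ, IntervalIntegrable g volume a b) :
    LocallyIntegrable g volume := by
  rw [MeasureTheory.locallyIntegrable_iff]
  intro K hK
  obtain ⟨r, hr⟩ := hK.isBounded.subset_closedBall 0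
  have hsub : K ⊆ Set.Icc (0 - r) (0 + r) := by
    rw [← Real.closedBall_eq_Icc]
    exact hr
  apply MeasureTheory.IntegrableOn.mono_set _ hsub
  rcases le_or_gt (0 - r) (0 + r) with hle | hlt
  · exact (intervalIntegrable_iff_integrableOn_Icc_of_le hle).mp (h _ _)
  · rw [Set.Icc_eq_empty (by linarith)]
    exact MeasureTheory.integrableOn_empty

lemma ae_leb {g : ℝ → ℝ} (hg : LocallyIntegrable g volume) :
    ∀ᵐ x : ℝ, ∀ ε : ℝ, 0 < ε → ∃ δ0 : ℝ, 0 < δ0 ∧ δ0 ≤ Real.pi ∧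
      ∀ δ : ℝ, 0 < δ → δ ≤ δ0 → (∫ t in (-δ)..δ, |g (x + t) - g x|) ≤ ε * δ := by
  filter_upwards [IsUnifLocDoublingMeasure.ae_tendsto_average_norm_sub volume hg 1] with x hx
  intro ε hε
  have hev : ∀ᶠ r in 𝓝[>] (0:ℝ), x ∈ Metric.closedBall ((fun _ : ℝ => x) r) (1 * r) := by
    filter_upwards [eventually_mem_nhdsWithin] with r hr
    rw [Set.mem_Ioi] at hr
    simp only [Metric.mem_closedBall, dist_self]
    linarith
  have htend : Tendsto (fun r : ℝ => ⨍ y in Metric.closedBall x (id r), ‖g y - g x‖)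
      (𝓝[>] (0:ℝ)) (𝓝 0) := hx (fun _ => x) id tendsto_id hev
  have hlt : ∀ᶠ r in 𝓝[>] (0:ℝ),
      (⨍ y in Metric.closedBall x (id r), ‖g y - g x‖) < ε / 2 :=
    htend.eventually (gt_mem_nhds (by positivity))
  have hcomb := hlt.and (eventually_mem_nhdsWithin (s := Set.Ioi (0:ℝ)))
  rw [Filter.eventually_iff] at hcomb
  obtain ⟨u, hu, hsub⟩ := mem_nhdsGT_iff_exists_Ioc_subset.mp hcomb
  rw [Set.mem_Ioi] at hu
  refine ⟨min u Real.pi, lt_min hu Real.pi_pos, min_le_right _ _, ?_⟩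
  intro δ hδ0 hδle
  have hδu : δ ≤ u := hδle.trans (min_le_left _ _)
  obtain ⟨havg, -⟩ := hsub ⟨hδ0, hδu⟩
  have hvol : (volume (Metric.closedBall x δ)).toReal = 2 * δ := by
    rw [Real.volume_closedBall, ENNReal.toReal_ofReal (by linarith)]
  have havgeq : (⨍ y in Metric.closedBall x δ, ‖g y - g x‖)
      = (2 * δ)⁻¹ * ∫ y in Metric.closedBall x δ, ‖g y - g x‖ := by
    rw [MeasureTheory.setAverage_eq, measureReal_def, hvol, smul_eq_mul]
  have hint : (∫ y in Metric.closedBall x δ, ‖g y - g x‖)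
      = ∫ t in (-δ)..δ, |g (x + t) - g x| := by
    rw [Real.closedBall_eq_Icc, MeasureTheory.integral_Icc_eq_integral_Ioc,
      ← intervalIntegral.integral_of_le (by linarith : x - δ ≤ x + δ),
      show x - δ = x + (-δ) by ring,
      ← intervalIntegral.integral_comp_add_left (fun y => ‖g y - g x‖) x]
    simp [Real.norm_eq_abs]
  simp only [id] at havg
  rw [havgeq, hint] at havg
  have h2δ : (0:ℝ) < 2 * δ := by linarith
  have hmul := mul_lt_mul_of_pos_left havg h2δ
  rw [← mul_assoc, mul_inv_cancel₀ (ne_of_gt h2δ), one_mul] at hmul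
  linarith

lemma kernel_cont (ρ : ℝ) (hρ : 0 < ρ) : Continuous fun t : ℝ => ρ / (ρ + |t|) ^ 2 := by
  apply continuous_const.div ((continuous_const.add _root_.continuous_abs).pow 2)
  intro t
  exact pow_ne_zero 2 (ne_of_gt (add_pos_of_pos_of_nonneg hρ (abs_nonneg t)))

lemma geom_half_sum (N : ℕ) : ∑ k ∈ Finset.range N, ((1:ℝ) / 2) ^ k ≤ 2 := by
  have key : ∀ n : ℕ, ∑ k ∈ Finset.range n, ((1:ℝ) / 2) ^ k = 2 - 2 * (1 / 2) ^ n := by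
    intro n
    induction n with
    | zero => simp
    | succ m ih =>
      rw [Finset.sum_range_succ, ih, pow_succ]
      ring
  rw [key N]
  have : (0:ℝ) ≤ (1 / 2) ^ N := by positivity
  linarith

lemma dyadic_one {φ : ℝ → ℝ} (hφ : ∀ a b : ℝ, IntervalIntegrable φ volume a b)
    (hφ0 : ∀ t, 0 ≤ φ t) {ε δ0 ρ : ℝ} (hε : 0 ≤ ε) (hδ0 : 0 < δ0) (hρ : 0 < ρ)
    (hρδ : ρ ≤ δ0) (hLeb : ∀ δ : ℝ, 0 < δ → δ ≤ δ0 → (∫ t in (0:ℝ)..δ, φ t) ≤ ε * δ) :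
    (∫ t in (0:ℝ)..δ0, ρ / (ρ + |t|) ^ 2 * φ t) ≤ 6 * ε := by
  have hψ : ∀ a b : ℝ, IntervalIntegrable (fun t => ρ / (ρ + |t|) ^ 2 * φ t) volume a b :=
    fun a b => (hφ a b).continuousOn_mul (kernel_cont ρ hρ).continuousOn
  have hex : ∃ n : ℕ, δ0 < 2 ^ n * ρ := by
    obtain ⟨n, hn⟩ := pow_unbounded_of_one_lt (δ0 / ρ) (one_lt_two (α := ℝ))
    rw [div_lt_iff₀ hρ] at hn
    exact ⟨n, by linarith⟩
  classical
  set n0 := Nat.find hex with hn0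
  have hn0spec : δ0 < 2 ^ n0 * ρ := Nat.find_spec hex
  have hn0ne : n0 ≠ 0 := by
    intro h
    rw [h] at hn0spec
    norm_num at hn0spec
    linarith
  obtain ⟨N, hN⟩ : ∃ N, n0 = N + 1 :=
    ⟨n0 - 1, (Nat.succ_pred_eq_of_pos (Nat.pos_of_ne_zero hn0ne)).symm⟩
  have hNle : 2 ^ N * ρ ≤ δ0 := by
    by_contra hcon
    push_neg at hcon
    exact Nat.find_min hex (by omega : N < n0) hcon
  have hNlt : δ0 < 2 ^ (N + 1) * ρ := by rw [← hN]; exact hn0spec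
  set δ1 := δ0 / 2 ^ N with hδ1
  have h2N : (0:ℝ) < 2 ^ N := by positivity
  have hδ1pos : 0 < δ1 := by positivity
  have hδ1ρ : ρ ≤ δ1 := by
    rw [hδ1, le_div_iff₀ h2N]
    linarith
  have hδ1le2ρ : δ1 ≤ 2 * ρ := by
    rw [hδ1, div_le_iff₀ h2N]
    have h21 : (2:ℝ) ^ (N + 1) = 2 * 2 ^ N := by ring
    nlinarith
  have h1le2N : (1:ℝ) ≤ 2 ^ N := by
    simpa using pow_le_pow_right₀ (by norm_num : (1:ℝ) ≤ 2) (Nat.zero_le N)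
  have hδ1δ0 : δ1 ≤ δ0 := by
    rw [hδ1, div_le_iff₀ h2N]
    nlinarith
  have hsplit : (∫ t in (0:ℝ)..δ0, ρ / (ρ + |t|) ^ 2 * φ t)
      = (∫ t in (0:ℝ)..δ1, ρ / (ρ + |t|) ^ 2 * φ t)
        + ∫ t in δ1..δ0, ρ / (ρ + |t|) ^ 2 * φ t :=
    (intervalIntegral.integral_add_adjacent_intervals (hψ 0 δ1) (hψ δ1 δ0)).symm
  rw [hsplit]
  have hcore : (∫ t in (0:ℝ)..δ1, ρ / (ρ + |t|) ^ 2 * φ t) ≤ 2 * ε := by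
    have hmono : (∫ t in (0:ℝ)..δ1, ρ / (ρ + |t|) ^ 2 * φ t)
        ≤ ∫ t in (0:ℝ)..δ1, ρ⁻¹ * φ t := by
      apply intervalIntegral.integral_mono_on hδ1pos.le (hψ 0 δ1) ((hφ 0 δ1).const_mul _)
      intro t _
      apply mul_le_mul_of_nonneg_right _ (hφ0 t)
      rw [div_le_iff₀ (by positivity), inv_mul_eq_div, le_div_iff₀ hρ]
      nlinarith [abs_nonneg t]
    calc (∫ t in (0:ℝ)..δ1, ρ / (ρ + |t|) ^ 2 * φ t) ≤ ∫ t in (0:ℝ)..δ1, ρ⁻¹ * φ t := hmono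
      _ = ρ⁻¹ * ∫ t in (0:ℝ)..δ1, φ t := intervalIntegral.integral_const_mul _ _
      _ ≤ ρ⁻¹ * (ε * δ1) :=
          mul_le_mul_of_nonneg_left (hLeb δ1 hδ1pos hδ1δ0) (by positivity)
      _ ≤ 2 * ε := by
          rw [inv_mul_le_iff₀ hρ]
          nlinarith
  have hannuli : ∀ k : ℕ, k + 1 ≤ N →
      (∫ t in (2 ^ k * δ1)..(2 ^ (k + 1) * δ1), ρ / (ρ + |t|) ^ 2 * φ t)
        ≤ 2 * ε * (1 / 2) ^ k := by
    intro k hk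
    have hak : (0:ℝ) < 2 ^ k * δ1 := by positivity
    have hakk : (2:ℝ) ^ k * δ1 ≤ 2 ^ (k + 1) * δ1 := by
      have : (2:ℝ) ^ k ≤ 2 ^ (k + 1) := by
        apply pow_le_pow_right₀ (by norm_num) (by omega)
      nlinarith
    have hk1le : (2:ℝ) ^ (k + 1) * δ1 ≤ δ0 := by
      have h1 : (2:ℝ) ^ (k + 1) ≤ 2 ^ N := pow_le_pow_right₀ (by norm_num) hk
      rw [hδ1, mul_comm, div_mul_eq_mul_div, div_le_iff₀ h2N]
      nlinarith
    have hstep1 : (∫ t in (2 ^ k * δ1)..(2 ^ (k + 1) * δ1), ρ / (ρ + |t|) ^ 2 * φ t)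
        ≤ ∫ t in (2 ^ k * δ1)..(2 ^ (k + 1) * δ1), ρ / (2 ^ k * δ1) ^ 2 * φ t := by
      apply intervalIntegral.integral_mono_on hakk (hψ _ _) ((hφ _ _).const_mul _)
      intro t ht
      apply mul_le_mul_of_nonneg_right _ (hφ0 t)
      have htk : 2 ^ k * δ1 ≤ t := ht.1
      have htabs : 2 ^ k * δ1 ≤ |t| := htk.trans (le_abs_self t)
      apply div_le_div_of_nonneg_left hρ.le (by positivity)
      nlinarith [abs_nonneg t]
    have hstep2 : (∫ t in (2 ^ k * δ1)..(2 ^ (k + 1) * δ1), φ t) ≤ ε * (2 ^ (k + 1) * δ1) := by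
      have hadd : (∫ t in (0:ℝ)..(2 ^ (k + 1) * δ1), φ t)
          = (∫ t in (0:ℝ)..(2 ^ k * δ1), φ t)
            + ∫ t in (2 ^ k * δ1)..(2 ^ (k + 1) * δ1), φ t :=
        (intervalIntegral.integral_add_adjacent_intervals (hφ _ _) (hφ _ _)).symm
      have hnn : 0 ≤ ∫ t in (0:ℝ)..(2 ^ k * δ1), φ t :=
        intervalIntegral.integral_nonneg hak.le (fun t _ => hφ0 t)
      have := hLeb (2 ^ (k + 1) * δ1) (by positivity) hk1le
      linarith
    calc (∫ t in (2 ^ k * δ1)..(2 ^ (k + 1) * δ1), ρ / (ρ + |t|) ^ 2 * φ t)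
        ≤ ∫ t in (2 ^ k * δ1)..(2 ^ (k + 1) * δ1), ρ / (2 ^ k * δ1) ^ 2 * φ t := hstep1
      _ = ρ / (2 ^ k * δ1) ^ 2 * ∫ t in (2 ^ k * δ1)..(2 ^ (k + 1) * δ1), φ t :=
          intervalIntegral.integral_const_mul _ _
      _ ≤ ρ / (2 ^ k * δ1) ^ 2 * (ε * (2 ^ (k + 1) * δ1)) :=
          mul_le_mul_of_nonneg_left hstep2 (by positivity)
      _ ≤ 2 * ε * (1 / 2) ^ k := by
          have h2k : (0:ℝ) < 2 ^ k := by positivity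
          have e1 : ρ / (2 ^ k * δ1) ^ 2 * (ε * (2 ^ (k + 1) * δ1))
              = 2 * ε * (ρ / (2 ^ k * δ1)) := by
            rw [pow_succ]
            field_simp
            ring
          rw [e1]
          apply mul_le_mul_of_nonneg_left _ (by positivity)
          rw [div_pow, one_pow, div_le_div_iff₀ (by positivity) (by positivity)]
          nlinarith
  have hsum : ∑ k ∈ Finset.range N,
      (∫ t in ((fun k : ℕ => 2 ^ k * δ1) k)..((fun k : ℕ => 2 ^ k * δ1) (k + 1)),
        ρ / (ρ + |t|) ^ 2 * φ t)
      = ∫ t in ((2:ℝ) ^ 0 * δ1)..(2 ^ N * δ1), ρ / (ρ + |t|) ^ 2 * φ t :=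
    intervalIntegral.sum_integral_adjacent_intervals (fun k _ => hψ _ _)
  have ha0 : (2:ℝ) ^ 0 * δ1 = δ1 := by norm_num
  have haN : (2:ℝ) ^ N * δ1 = δ0 := by
    rw [hδ1]
    field_simp
  have hright : (∫ t in δ1..δ0, ρ / (ρ + |t|) ^ 2 * φ t) ≤ 4 * ε := by
    rw [← ha0, ← haN, ← hsum]
    calc (∑ k ∈ Finset.range N, ∫ t in (2 ^ k * δ1)..(2 ^ (k + 1) * δ1),
          ρ / (ρ + |t|) ^ 2 * φ t)
        ≤ ∑ k ∈ Finset.range N, 2 * ε * (1 / 2) ^ k := by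
          apply Finset.sum_le_sum
          intro k hkmem
          exact hannuli k (Finset.mem_range.mp hkmem)
      _ = 2 * ε * ∑ k ∈ Finset.range N, ((1:ℝ) / 2) ^ k := by rw [← Finset.mul_sum]
      _ ≤ 2 * ε * 2 := mul_le_mul_of_nonneg_left (geom_half_sum N) (by positivity)
      _ = 4 * ε := by ring
  linarith

lemma dyadic_bound {φ : ℝ → ℝ} (hφ : ∀ a b : ℝ, IntervalIntegrable φ volume a b)
    (hφ0 : ∀ t, 0 ≤ φ t) {ε δ0 ρ : ℝ} (hε : 0 ≤ ε) (hδ0 : 0 < δ0) (hρ : 0 < ρ)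
    (hρδ : ρ ≤ δ0) (hLeb : ∀ δ : ℝ, 0 < δ → δ ≤ δ0 → (∫ t in (-δ)..δ, φ t) ≤ ε * δ) :
    (∫ t in (-δ0)..δ0, ρ / (ρ + |t|) ^ 2 * φ t) ≤ 12 * ε := by
  have hψ : ∀ a b : ℝ, IntervalIntegrable (fun t => ρ / (ρ + |t|) ^ 2 * φ t) volume a b :=
    fun a b => (hφ a b).continuousOn_mul (kernel_cont ρ hρ).continuousOn
  have hφ' : ∀ a b : ℝ, IntervalIntegrable (fun t => φ (-t)) volume a b := by
    intro a b
    have := (IntervalIntegrable.iff_comp_neg).mp (hφ (-a) (-b))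
    simpa using this
  have hsplit : (∫ t in (-δ0)..δ0, ρ / (ρ + |t|) ^ 2 * φ t)
      = (∫ t in (-δ0)..(0:ℝ), ρ / (ρ + |t|) ^ 2 * φ t)
        + ∫ t in (0:ℝ)..δ0, ρ / (ρ + |t|) ^ 2 * φ t :=
    (intervalIntegral.integral_add_adjacent_intervals (hψ _ _) (hψ _ _)).symm
  have hLebR : ∀ δ : ℝ, 0 < δ → δ ≤ δ0 → (∫ t in (0:ℝ)..δ, φ t) ≤ ε * δ := by
    intro δ h1 h2
    have hadd : (∫ t in (-δ)..δ, φ t)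
        = (∫ t in (-δ)..(0:ℝ), φ t) + ∫ t in (0:ℝ)..δ, φ t :=
      (intervalIntegral.integral_add_adjacent_intervals (hφ _ _) (hφ _ _)).symm
    have hnn : 0 ≤ ∫ t in (-δ)..(0:ℝ), φ t :=
      intervalIntegral.integral_nonneg (by linarith) (fun t _ => hφ0 t)
    have := hLeb δ h1 h2
    linarith
  have hLebL : ∀ δ : ℝ, 0 < δ → δ ≤ δ0 → (∫ t in (0:ℝ)..δ, φ (-t)) ≤ ε * δ := by
    intro δ h1 h2
    have hco : (∫ t in (0:ℝ)..δ, φ (-t)) = ∫ t in (-δ)..(0:ℝ), φ t := by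
      simpa using intervalIntegral.integral_comp_neg (a := (0:ℝ)) (b := δ) φ
    rw [hco]
    have hadd : (∫ t in (-δ)..δ, φ t)
        = (∫ t in (-δ)..(0:ℝ), φ t) + ∫ t in (0:ℝ)..δ, φ t :=
      (intervalIntegral.integral_add_adjacent_intervals (hφ _ _) (hφ _ _)).symm
    have hnn : 0 ≤ ∫ t in (0:ℝ)..δ, φ t :=
      intervalIntegral.integral_nonneg (by linarith) (fun t _ => hφ0 t)
    have := hLeb δ h1 h2
    linarith
  have hleft : (∫ t in (-δ0)..(0:ℝ), ρ / (ρ + |t|) ^ 2 * φ t) ≤ 6 * ε := by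
    have hco : (∫ t in (0:ℝ)..δ0, ρ / (ρ + |(-t)|) ^ 2 * φ (-t))
        = ∫ t in (-δ0)..(0:ℝ), ρ / (ρ + |t|) ^ 2 * φ t := by
      simpa using intervalIntegral.integral_comp_neg (a := (0:ℝ)) (b := δ0)
        (fun t => ρ / (ρ + |t|) ^ 2 * φ t)
    rw [← hco]
    have heq : (∫ t in (0:ℝ)..δ0, ρ / (ρ + |(-t)|) ^ 2 * φ (-t))
        = ∫ t in (0:ℝ)..δ0, ρ / (ρ + |t|) ^ 2 * φ (-t) := by
      apply intervalIntegral.integral_congr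
      intro t _
      simp only [abs_neg]
    rw [heq]
    exact dyadic_one hφ' (fun t => hφ0 (-t)) hε hδ0 hρ hρδ hLebL
  have hright : (∫ t in (0:ℝ)..δ0, ρ / (ρ + |t|) ^ 2 * φ t) ≤ 6 * ε :=
    dyadic_one hφ hφ0 hε hδ0 hρ hρδ hLebR
  rw [hsplit]
  linarith

lemma exp_per (s : ℝ) :
    Complex.exp (((s + 2 * Real.pi : ℝ) : ℂ) * Complex.I) = Complex.exp ((s : ℂ) * Complex.I) := by
  rw [show ((s + 2 * Real.pi : ℝ) : ℂ) * Complex.I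
      = (s : ℂ) * Complex.I + 2 * (Real.pi : ℂ) * Complex.I by push_cast; ring,
    Complex.exp_add, Complex.exp_two_pi_mul_I, mul_one]

lemma pker_per (l : ℂ) : Function.Periodic (pker l) (2 * Real.pi) := by
  intro s
  unfold pker
  rw [exp_per s]

lemma pker_eq_dist (l : ℂ) (s : ℝ) :
    pker l s = (1 - ‖l‖ ^ 2) / ‖Complex.exp ((s : ℂ) * Complex.I) - l‖ ^ 2 := by
  have hprod : Complex.exp ((s : ℂ) * Complex.I) * Complex.exp (-(s : ℂ) * Complex.I) = 1 := by
    rw [← Complex.exp_add, show (s : ℂ) * Complex.I + -(s : ℂ) * Complex.I = 0 by ring,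
      Complex.exp_zero]
  have hfac : Complex.exp ((s : ℂ) * Complex.I) - l
      = Complex.exp ((s : ℂ) * Complex.I) * (1 - l * Complex.exp (-(s : ℂ) * Complex.I)) := by
    have h1 : Complex.exp ((s : ℂ) * Complex.I) * (1 - l * Complex.exp (-(s : ℂ) * Complex.I))
        = Complex.exp ((s : ℂ) * Complex.I)
          - l * (Complex.exp ((s : ℂ) * Complex.I) * Complex.exp (-(s : ℂ) * Complex.I)) := by
      ring
    rw [h1, hprod, mul_one]
  unfold pker
  rw [norm_denom, hfac, norm_mul, norm_exp_I, one_mul]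

lemma denom_ne {l : ℂ} (hl : ‖l‖ < 1) (s : ℝ) :
    ‖1 - (starRingEnd ℂ) l * Complex.exp ((s : ℂ) * Complex.I)‖ ≠ 0 := by
  rw [norm_denom, norm_ne_zero_iff]
  intro h
  have := u_ne hl s
  rw [h] at this
  simp at this

lemma pker_cont {l : ℂ} (hl : ‖l‖ < 1) : Continuous fun s : ℝ => pker l s := by
  unfold pker
  apply continuous_const.div
  · apply Continuous.pow
    apply Continuous.norm
    exact continuous_const.sub (continuous_const.mul
      (Complex.continuous_exp.comp (Complex.continuous_ofReal.mul continuous_const)))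
  · intro s
    exact pow_ne_zero 2 (denom_ne hl s)

lemma pker_master {θ t : ℝ} {l : ℂ}
    (hρpos : 0 < ‖l - Complex.exp ((θ : ℂ) * Complex.I)‖)
    (hst : (3/5) * ‖l - Complex.exp ((θ : ℂ) * Complex.I)‖ ≤ 1 - ‖l‖)
    (htπ : |t| ≤ Real.pi) :
    pker l (θ + t) ≤ 125 * (‖l - Complex.exp ((θ : ℂ) * Complex.I)‖
      / (‖l - Complex.exp ((θ : ℂ) * Complex.I)‖ + |t|) ^ 2) := by
  have hπ := Real.pi_pos
  set w := Complex.exp ((θ : ℂ) * Complex.I) with hwdef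
  have hw : ‖w‖ = 1 := norm_exp_I θ
  set ρ := ‖l - w‖ with hρdef
  set z := Complex.exp (((θ + t : ℝ) : ℂ) * Complex.I) with hzdef
  have hz : ‖z‖ = 1 := norm_exp_I (θ + t)
  have hkb := kernel_bound hw hz hρpos hst
  have hd : (2 / Real.pi) * |t| ≤ ‖z - w‖ := chord_lower htπ θ
  have hπ2 : 2 / Real.pi ≤ 1 := by
    rw [div_le_one hπ]
    linarith [Real.pi_gt_three]
  have hsum : (2 / Real.pi) * (ρ + |t|) ≤ ρ + ‖z - w‖ := by
    have h1 : (2 / Real.pi) * ρ ≤ ρ := mul_le_of_le_one_left hρpos.le hπ2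
    rw [mul_add]
    exact add_le_add h1 hd
  have hsumpos : 0 < (2 / Real.pi) * (ρ + |t|) :=
    mul_pos (by positivity) (add_pos_of_pos_of_nonneg hρpos (abs_nonneg t))
  have hsq : ((2 / Real.pi) * (ρ + |t|)) ^ 2 ≤ (ρ + ‖z - w‖) ^ 2 :=
    pow_le_pow_left₀ hsumpos.le hsum 2
  have hπlt : Real.pi ^ 2 ≤ 10 := by nlinarith [Real.pi_lt_d2]
  have hb2 : 50 * ρ / (ρ + ‖z - w‖) ^ 2 ≤ 50 * ρ / ((2 / Real.pi) * (ρ + |t|)) ^ 2 :=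
    div_le_div_of_nonneg_left (by positivity) (by positivity) hsq
  have hb3 : 50 * ρ / ((2 / Real.pi) * (ρ + |t|)) ^ 2 ≤ 125 * (ρ / (ρ + |t|) ^ 2) := by
    have hrt : (0:ℝ) < ρ + |t| := add_pos_of_pos_of_nonneg hρpos (abs_nonneg t)
    have e1 : 50 * ρ / ((2 / Real.pi) * (ρ + |t|)) ^ 2
        = (50 * Real.pi ^ 2 / 4) * (ρ / (ρ + |t|) ^ 2) := by
      field_simp
      ring
    rw [e1]
    apply mul_le_mul_of_nonneg_right _ (by positivity)
    nlinarith
  have hpeq : pker l (θ + t) = (1 - ‖l‖ ^ 2) / ‖z - l‖ ^ 2 := by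
    rw [pker_eq_dist l (θ + t), hzdef]
  rw [hpeq]
  exact hkb.trans (hb2.trans hb3)

lemma pointwise_bound {g : ℝ → ℝ} (hgint : ∀ a b : ℝ, IntervalIntegrable g volume a b)
    (hper : Function.Periodic g (2 * Real.pi)) (θ : ℝ) {l : ℂ}
    (hl : l ∈ stolzRegion (1/4) (Complex.exp ((θ : ℂ) * Complex.I)))
    (hlne : l ≠ Complex.exp ((θ : ℂ) * Complex.I))
    {δ0 ε' : ℝ} (hδ0 : 0 < δ0) (hδ0π : δ0 ≤ Real.pi) (hε' : 0 ≤ ε')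
    (hLeb : ∀ δ : ℝ, 0 < δ → δ ≤ δ0 → (∫ t in (-δ)..δ, |g (θ + t) - g θ|) ≤ ε' * δ)
    (hρδ : ‖l - Complex.exp ((θ : ℂ) * Complex.I)‖ ≤ δ0) :
    |(2 * Real.pi)⁻¹ * (∫ s in (0:ℝ)..(2 * Real.pi), pker l s * g s) - g θ|
      ≤ (2 * Real.pi)⁻¹ * (1500 * ε'
          + 250 * (‖l - Complex.exp ((θ : ℂ) * Complex.I)‖ / δ0 ^ 2)
            * ∫ t in (-Real.pi)..Real.pi, |g (θ + t) - g θ|) := by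
  have hπ := Real.pi_pos
  set w := Complex.exp ((θ : ℂ) * Complex.I) with hwdef
  have hw : ‖w‖ = 1 := norm_exp_I θ
  set ρ := ‖l - w‖ with hρdef
  have hρpos : 0 < ρ := by
    rw [hρdef, norm_pos_iff]
    exact sub_ne_zero.mpr hlne
  have hst : (3/5) * ρ ≤ 1 - ‖l‖ := stolz_dist hw hl
  have hl1 : ‖l‖ < 1 := by nlinarith
  set φ : ℝ → ℝ := fun t => |g (θ + t) - g θ| with hφdef
  have hφ0 : ∀ t, 0 ≤ φ t := fun t => abs_nonneg _
  have hgθ : ∀ a b : ℝ, IntervalIntegrable (fun t => g (θ + t)) volume a b := fun a b => by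
    simpa using (hgint (θ + a) (θ + b)).comp_add_left θ
  have hφint : ∀ a b : ℝ, IntervalIntegrable φ volume a b := fun a b =>
    ((hgθ a b).sub intervalIntegrable_const).abs
  set M := ∫ t in (-Real.pi)..Real.pi, φ t with hMdef
  have hM0 : 0 ≤ M :=
    intervalIntegral.integral_nonneg (by linarith) (fun t _ => hφ0 t)
  -- identity step
  set G : ℝ → ℝ := fun s => pker l s * (g s - g θ) with hGdef
  have hGper : Function.Periodic G (2 * Real.pi) := by
    intro s
    simp only [hGdef]
    rw [pker_per l s, hper s]
  have hGint : ∀ a b : ℝ, IntervalIntegrable G volume a b := fun a b =>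
    ((hgint a b).sub intervalIntegrable_const).continuousOn_mul (pker_cont hl1).continuousOn
  have hpki : IntervalIntegrable (fun s => pker l s) volume 0 (2 * Real.pi) :=
    (pker_cont hl1).intervalIntegrable _ _
  have hid : (∫ s in (0:ℝ)..(2 * Real.pi), G s)
      = (∫ s in (0:ℝ)..(2 * Real.pi), pker l s * g s) - g θ * (2 * Real.pi) := by
    have hfe : G = fun s => pker l s * g s - g θ * pker l s := by
      funext s
      simp only [hGdef]
      ring
    rw [hfe, intervalIntegral.integral_sub
        ((hgint 0 (2 * Real.pi)).continuousOn_mul (pker_cont hl1).continuousOn)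
        (hpki.const_mul (g θ)),
      intervalIntegral.integral_const_mul, pker_integral l hl1]
  have hmain_eq : (2 * Real.pi)⁻¹ * (∫ s in (0:ℝ)..(2 * Real.pi), pker l s * g s) - g θ
      = (2 * Real.pi)⁻¹ * ∫ s in (0:ℝ)..(2 * Real.pi), G s := by
    rw [hid]
    field_simp
  -- shift and translate
  have hshift : (∫ s in (0:ℝ)..(2 * Real.pi), G s)
      = ∫ s in (θ - Real.pi)..(θ + Real.pi), G s := by
    have h := hGper.intervalIntegral_add_eq 0 (θ - Real.pi)
    rw [zero_add, show θ - Real.pi + 2 * Real.pi = θ + Real.pi by ring] at h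
    exact h
  have htrans : (∫ s in (θ - Real.pi)..(θ + Real.pi), G s)
      = ∫ t in (-Real.pi)..Real.pi, G (θ + t) := by
    have h := intervalIntegral.integral_comp_add_left (a := -Real.pi) (b := Real.pi) G θ
    rw [show θ + -Real.pi = θ - Real.pi by ring] at h
    exact h.symm
  -- abs bound
  have hGt : ∀ t : ℝ, |G (θ + t)| = pker l (θ + t) * φ t := by
    intro t
    simp only [hGdef, hφdef]
    rw [abs_mul, _root_.abs_of_nonneg (pker_nonneg hl1 (θ + t))]
  have habs : |∫ t in (-Real.pi)..Real.pi, G (θ + t)|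
      ≤ ∫ t in (-Real.pi)..Real.pi, pker l (θ + t) * φ t := by
    calc |∫ t in (-Real.pi)..Real.pi, G (θ + t)|
        ≤ ∫ t in (-Real.pi)..Real.pi, |G (θ + t)| :=
          intervalIntegral.abs_integral_le_integral_abs (by linarith)
      _ = ∫ t in (-Real.pi)..Real.pi, pker l (θ + t) * φ t :=
          intervalIntegral.integral_congr (fun t _ => hGt t)
  -- master kernel bound
  have hKb : ∀ t ∈ Set.uIcc (-Real.pi) Real.pi,
      pker l (θ + t) ≤ 125 * (ρ / (ρ + |t|) ^ 2) := by
    intro t ht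
    rw [Set.uIcc_of_le (by linarith)] at ht
    exact pker_master hρpos hst (abs_le.mpr ⟨ht.1, ht.2⟩)
  -- compare with master kernel
  have hκint : ∀ a b : ℝ, IntervalIntegrable (fun t => ρ / (ρ + |t|) ^ 2 * φ t) volume a b :=
    fun a b => (hφint a b).continuousOn_mul (kernel_cont ρ hρpos).continuousOn
  have hKint : ∀ a b : ℝ, IntervalIntegrable (fun t => pker l (θ + t) * φ t) volume a b := by
    intro a b
    apply (hφint a b).continuousOn_mul
    exact ((pker_cont hl1).comp (continuous_const.add continuous_id)).continuousOn
  have hcomp : (∫ t in (-Real.pi)..Real.pi, pker l (θ + t) * φ t)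
      ≤ ∫ t in (-Real.pi)..Real.pi, 125 * (ρ / (ρ + |t|) ^ 2 * φ t) := by
    apply intervalIntegral.integral_mono_on (by linarith) (hKint _ _)
      ((hκint _ _).const_mul 125)
    intro t ht
    rw [show (125:ℝ) * (ρ / (ρ + |t|) ^ 2 * φ t) = 125 * (ρ / (ρ + |t|) ^ 2) * φ t by ring]
    apply mul_le_mul_of_nonneg_right _ (hφ0 t)
    apply hKb t
    rw [Set.uIcc_of_le (by linarith)]
    exact ht
  have hpull : (∫ t in (-Real.pi)..Real.pi, 125 * (ρ / (ρ + |t|) ^ 2 * φ t))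
      = 125 * ∫ t in (-Real.pi)..Real.pi, ρ / (ρ + |t|) ^ 2 * φ t :=
    intervalIntegral.integral_const_mul _ _
  -- split the kappa integral
  have hsplit3 : (∫ t in (-Real.pi)..Real.pi, ρ / (ρ + |t|) ^ 2 * φ t)
      = (∫ t in (-Real.pi)..(-δ0), ρ / (ρ + |t|) ^ 2 * φ t)
        + (∫ t in (-δ0)..δ0, ρ / (ρ + |t|) ^ 2 * φ t)
        + ∫ t in δ0..Real.pi, ρ / (ρ + |t|) ^ 2 * φ t := by
    rw [← intervalIntegral.integral_add_adjacent_intervals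
        ((hκint (-Real.pi) (-δ0)).trans (hκint (-δ0) δ0)) (hκint δ0 Real.pi),
      ← intervalIntegral.integral_add_adjacent_intervals
        (hκint (-Real.pi) (-δ0)) (hκint (-δ0) δ0)]
  have hnear : (∫ t in (-δ0)..δ0, ρ / (ρ + |t|) ^ 2 * φ t) ≤ 12 * ε' :=
    dyadic_bound hφint hφ0 hε' hδ0 hρpos hρδ hLeb
  have hfarbound : ∀ t : ℝ, δ0 ≤ |t| → ρ / (ρ + |t|) ^ 2 ≤ ρ / δ0 ^ 2 := by
    intro t hti
    apply div_le_div_of_nonneg_left hρpos.le (by positivity)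
    nlinarith [abs_nonneg t]
  have hMright : (∫ t in δ0..Real.pi, φ t) ≤ M := by
    have hadd : M = (∫ t in (-Real.pi)..δ0, φ t) + ∫ t in δ0..Real.pi, φ t :=
      (intervalIntegral.integral_add_adjacent_intervals (hφint _ _) (hφint _ _)).symm
    have hnn : 0 ≤ ∫ t in (-Real.pi)..δ0, φ t :=
      intervalIntegral.integral_nonneg (by linarith) (fun t _ => hφ0 t)
    linarith
  have hMleft : (∫ t in (-Real.pi)..(-δ0), φ t) ≤ M := by
    have hadd : M = (∫ t in (-Real.pi)..(-δ0), φ t) + ∫ t in (-δ0)..Real.pi, φ t :=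
      (intervalIntegral.integral_add_adjacent_intervals (hφint _ _) (hφint _ _)).symm
    have hnn : 0 ≤ ∫ t in (-δ0)..Real.pi, φ t :=
      intervalIntegral.integral_nonneg (by linarith) (fun t _ => hφ0 t)
    linarith
  have hfarR : (∫ t in δ0..Real.pi, ρ / (ρ + |t|) ^ 2 * φ t) ≤ (ρ / δ0 ^ 2) * M := by
    calc (∫ t in δ0..Real.pi, ρ / (ρ + |t|) ^ 2 * φ t)
        ≤ ∫ t in δ0..Real.pi, (ρ / δ0 ^ 2) * φ t := by
          apply intervalIntegral.integral_mono_on (by linarith) (hκint _ _)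
            ((hφint _ _).const_mul _)
          intro t ht
          apply mul_le_mul_of_nonneg_right _ (hφ0 t)
          exact hfarbound t (ht.1.trans (le_abs_self t))
      _ = (ρ / δ0 ^ 2) * ∫ t in δ0..Real.pi, φ t := intervalIntegral.integral_const_mul _ _
      _ ≤ (ρ / δ0 ^ 2) * M := mul_le_mul_of_nonneg_left hMright (by positivity)
  have hfarL : (∫ t in (-Real.pi)..(-δ0), ρ / (ρ + |t|) ^ 2 * φ t) ≤ (ρ / δ0 ^ 2) * M := by
    calc (∫ t in (-Real.pi)..(-δ0), ρ / (ρ + |t|) ^ 2 * φ t)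
        ≤ ∫ t in (-Real.pi)..(-δ0), (ρ / δ0 ^ 2) * φ t := by
          apply intervalIntegral.integral_mono_on (by linarith) (hκint _ _)
            ((hφint _ _).const_mul _)
          intro t ht
          apply mul_le_mul_of_nonneg_right _ (hφ0 t)
          apply hfarbound t
          have : t ≤ -δ0 := ht.2
          calc δ0 ≤ -t := by linarith
            _ ≤ |t| := neg_le_abs t
      _ = (ρ / δ0 ^ 2) * ∫ t in (-Real.pi)..(-δ0), φ t := intervalIntegral.integral_const_mul _ _
      _ ≤ (ρ / δ0 ^ 2) * M := mul_le_mul_of_nonneg_left hMleft (by positivity)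
  -- combine
  have hT : (∫ t in (-Real.pi)..Real.pi, pker l (θ + t) * φ t)
      ≤ 1500 * ε' + 250 * (ρ / δ0 ^ 2) * M := by
    calc (∫ t in (-Real.pi)..Real.pi, pker l (θ + t) * φ t)
        ≤ ∫ t in (-Real.pi)..Real.pi, 125 * (ρ / (ρ + |t|) ^ 2 * φ t) := hcomp
      _ = 125 * ∫ t in (-Real.pi)..Real.pi, ρ / (ρ + |t|) ^ 2 * φ t := hpull
      _ ≤ 125 * ((ρ / δ0 ^ 2) * M + 12 * ε' + (ρ / δ0 ^ 2) * M) := by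
          rw [hsplit3]
          apply mul_le_mul_of_nonneg_left _ (by norm_num)
          gcongr
      _ ≤ 1500 * ε' + 250 * (ρ / δ0 ^ 2) * M := by nlinarith [div_nonneg hρpos.le (sq_nonneg δ0)]
  rw [hmain_eq, hshift, htrans]
  rw [abs_mul, abs_of_pos (by positivity : (0:ℝ) < (2 * Real.pi)⁻¹)]
  apply mul_le_mul_of_nonneg_left _ (by positivity)
  exact habs.trans hT

lemma main_estimate {g : ℝ → ℝ} (hgint : ∀ a b : ℝ, IntervalIntegrable g volume a b)
    (hper : Function.Periodic g (2 * Real.pi)) (θ : ℝ)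
    (hLeb : ∀ ε : ℝ, 0 < ε → ∃ δ0 : ℝ, 0 < δ0 ∧ δ0 ≤ Real.pi ∧
      ∀ δ : ℝ, 0 < δ → δ ≤ δ0 → (∫ t in (-δ)..δ, |g (θ + t) - g θ|) ≤ ε * δ) :
    Tendsto (fun l : ℂ => (2 * Real.pi)⁻¹ * ∫ s in (0:ℝ)..(2 * Real.pi), pker l s * g s)
      (𝓝[stolzRegion (1/4) (Complex.exp ((θ : ℂ) * Complex.I))
          \ {Complex.exp ((θ : ℂ) * Complex.I)}]
        (Complex.exp ((θ : ℂ) * Complex.I)))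
      (𝓝 (g θ)) := by
  have hπ := Real.pi_pos
  set w := Complex.exp ((θ : ℂ) * Complex.I) with hwdef
  rw [Metric.tendsto_nhdsWithin_nhds]
  intro ε hε
  obtain ⟨δ0, hδ0, hδ0π, hL⟩ := hLeb (ε / 1000) (by positivity)
  set M := ∫ t in (-Real.pi)..Real.pi, |g (θ + t) - g θ| with hMdef
  have hgθ : ∀ a b : ℝ, IntervalIntegrable (fun t => g (θ + t)) volume a b := fun a b => by
    simpa using (hgint (θ + a) (θ + b)).comp_add_left θ
  have hM0 : 0 ≤ M :=
    intervalIntegral.integral_nonneg (by linarith) (fun t _ => abs_nonneg _)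
  refine ⟨min δ0 (ε * δ0 ^ 2 / (1000 * (M + 1))), by positivity, ?_⟩
  intro x hx hdist
  obtain ⟨hxS, hxne'⟩ := hx
  have hxne : x ≠ w := by simpa using hxne'
  rw [dist_eq_norm] at hdist
  set ρ := ‖x - w‖ with hρdef
  have hρδ0 : ρ ≤ δ0 := le_of_lt (lt_of_lt_of_le hdist (min_le_left _ _))
  have hρsmall : ρ < ε * δ0 ^ 2 / (1000 * (M + 1)) :=
    lt_of_lt_of_le hdist (min_le_right _ _)
  have hρ0 : 0 ≤ ρ := norm_nonneg _
  have hbound := pointwise_bound hgint hper θ hxS hxne hδ0 hδ0π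
    (by positivity : (0:ℝ) ≤ ε / 1000) hL hρδ0
  rw [Real.dist_eq]
  have hM1 : (0:ℝ) < M + 1 := by linarith
  have hterm2 : 250 * (ρ / δ0 ^ 2) * M < ε / 4 := by
    rw [lt_div_iff₀ (by positivity)] at hρsmall
    have e : 250 * (ρ / δ0 ^ 2) * M = 250 * ρ * M / δ0 ^ 2 := by ring
    rw [e, div_lt_iff₀ (by positivity)]
    nlinarith
  have hterm2nn : 0 ≤ 250 * (ρ / δ0 ^ 2) * M := by positivity
  have hinv : (2 * Real.pi)⁻¹ ≤ 1 / 6 := by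
    rw [inv_le_comm₀ (by linarith) (by norm_num)]
    norm_num
    linarith [Real.pi_gt_three]
  have hA : 1500 * (ε / 1000) + 250 * (ρ / δ0 ^ 2) * M < 2 * ε := by nlinarith
  have hA0 : 0 ≤ 1500 * (ε / 1000) + 250 * (ρ / δ0 ^ 2) * M := by positivity
  calc |(2 * Real.pi)⁻¹ * (∫ s in (0:ℝ)..(2 * Real.pi), pker x s * g s) - g θ|
      ≤ (2 * Real.pi)⁻¹ * (1500 * (ε / 1000) + 250 * (ρ / δ0 ^ 2) * M) := hbound
    _ ≤ (1 / 6) * (1500 * (ε / 1000) + 250 * (ρ / δ0 ^ 2) * M) :=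
        mul_le_mul_of_nonneg_right hinv hA0
    _ < ε := by nlinarith

/-- if `h ∈ L¹(m)` with `h ≥ 0` on `𝕋`, then for `m`-almost every
point `e^{iθ} ∈ 𝕋` the Poisson integral of `h` converges to `h(e^{iθ})` as
`λ → e^{iθ}` nontangentially through `Γ_{1/4}(e^{iθ})`.  Here `m` is normalized
arc-length on `𝕋`, parametrized by `θ ∈ (0, 2π]`. -/
theorem poisson_integral_nontangential_limit (h : ℂ → ℝ)
    (hmeas : Measurable h) (hpos : ∀ z : ℂ, ‖z‖ = 1 → 0 ≤ h z)
    (hint : IntervalIntegrable (fun θ : ℝ => h (Complex.exp ((θ : ℂ) * Complex.I)))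
      MeasureTheory.volume 0 (2 * Real.pi)) :
    ∀ᵐ (θ : ℝ) ∂(MeasureTheory.volume.restrict (Set.Ioc (0:ℝ) (2 * Real.pi))),
      Tendsto
        (fun l : ℂ => (2 * Real.pi)⁻¹ *
          ∫ s in (0:ℝ)..(2 * Real.pi),
            (1 - ‖l‖^2) / ‖1 - (starRingEnd ℂ) l * Complex.exp (s * Complex.I)‖^2 *
              h (Complex.exp (s * Complex.I)))
        (𝓝[stolzRegion (1/4) (Complex.exp ((θ : ℂ) * Complex.I)) \ {Complex.exp ((θ : ℂ) * Complex.I)}]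
          (Complex.exp ((θ : ℂ) * Complex.I)))
        (𝓝 (h (Complex.exp ((θ : ℂ) * Complex.I)))) := by
  set g : ℝ → ℝ := fun s : ℝ => h (Complex.exp ((s : ℂ) * Complex.I)) with hgdef
  have hper : Function.Periodic g (2 * Real.pi) := by
    intro s
    simp only [hgdef]
    rw [exp_per s]
  have hgint : ∀ a b : ℝ, IntervalIntegrable g volume a b :=
    periodic_intervalIntegrable Real.two_pi_pos hper hint
  have hloc : LocallyIntegrable g volume := locally_integrable_of_intervalIntegrable hgint
  filter_upwards [ae_restrict_of_ae (ae_leb hloc)] with θ hθ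
  exact main_estimate hgint hper θ (fun ε hε => hθ ε hε)
end

section
/- There is an absolute constant ε₁ > 0 with the following property. Let R = {z : |Re z| < 1/2, |Im z| < 1/2}, Q = (closed unit disk) ∖ R, and let K ⊂ closed unit disk be compact with γ(𝔻 ∖ K) < ε₁. Then for every f in A(𝔻) (the uniform closure of polynomials in C(closed unit disk)) and every λ ∈ R, |f(λ)| ≤ sup_{z ∈ Q ∩ K} |f(z)|. -/
open Complex MeasureTheory Set Metric Filter Topology

open Bornology

/-- Analytic capacity of a compact set `K ⊂ ℂ`. -/
noncomputable def analyticCapacityCompact (K : Set ℂ) : ℝ :=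
  sSup {r : ℝ | ∃ f : ℂ → ℂ, DifferentiableOn ℂ f Kᶜ ∧ (∀ z ∈ Kᶜ, ‖f z‖ ≤ 1) ∧
    ∃ L c : ℂ, Tendsto f (Bornology.cobounded ℂ) (𝓝 L) ∧
      Tendsto (fun z => z * (f z - L)) (Bornology.cobounded ℂ) (𝓝 c) ∧ r = ‖c‖}

/-- Analytic capacity of an arbitrary set `E ⊂ ℂ`. -/
noncomputable def analyticCapacity (E : Set ℂ) : ℝ :=
  sSup {r : ℝ | ∃ K : Set ℂ, IsCompact K ∧ K ⊆ E ∧ r = analyticCapacityCompact K}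

/-- The open square `R = {|Re z| < 1/2, |Im z| < 1/2}`. -/
def squareR : Set ℂ := {z : ℂ | |z.re| < 1/2 ∧ |z.im| < 1/2}


lemma aux_sub_cobounded (c : ℂ) :
    Tendsto (fun z : ℂ => z - c) (cobounded ℂ) (cobounded ℂ) := by
  rw [← tendsto_norm_atTop_iff_cobounded]
  refine tendsto_atTop_mono (fun z => norm_sub_norm_le z c) ?_
  exact tendsto_atTop_add_const_right _ (-‖c‖) tendsto_norm_cobounded_atTop

/-- Exterior maximum principle via removable singularity at infinity. -/
lemma aux_ext_max {F : ℂ → ℂ} {c : ℂ} {C : ℝ}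
    (hd : DifferentiableOn ℂ F {z : ℂ | 1 < ‖z‖})
    (hc : Tendsto F (cobounded ℂ) (𝓝 c))
    (hC : ∀ z : ℂ, ‖z‖ = 2 → ‖F z‖ ≤ C) :
    ‖c‖ ≤ C ∧ ∀ z : ℂ, 2 ≤ ‖z‖ → ‖F z‖ ≤ C := by
  set G : ℂ → ℂ := fun w => F w⁻¹ with hG
  have hGlim : Tendsto G (𝓝[≠] (0:ℂ)) (𝓝 c) :=
    hc.comp tendsto_inv₀_nhdsNE_zero
  have hGdiff : DifferentiableOn ℂ G (Metric.ball (0:ℂ) (2/3) \ {0}) := by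
    intro w hw
    have hw0 : w ≠ 0 := hw.2
    have hwin : (w⁻¹ : ℂ) ∈ {z : ℂ | 1 < ‖z‖} := by
      have h1 : ‖w‖ < 2/3 := by simpa using hw.1
      have h2 : 0 < ‖w‖ := norm_pos_iff.2 hw0
      have : (1:ℝ) < ‖w‖⁻¹ := by
        rw [lt_inv_comm₀ one_pos h2]; linarith
      simpa [norm_inv] using this
    have : DifferentiableAt ℂ F w⁻¹ := by
      have hopen : IsOpen {z : ℂ | 1 < ‖z‖} := by
        have : {z : ℂ | 1 < ‖z‖} = (fun z : ℂ => ‖z‖) ⁻¹' (Set.Ioi 1) := rfl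
        rw [this]; exact isOpen_Ioi.preimage continuous_norm
      exact (hd.differentiableAt (hopen.mem_nhds hwin))
    exact (this.comp w ((differentiableAt_inv hw0))).differentiableWithinAt
  have hGo : (fun w => G w - G 0) =o[𝓝[≠] (0:ℂ)] fun w => (w - 0)⁻¹ := by
    have h1 : (fun w => G w - G 0) =O[𝓝[≠] (0:ℂ)] (fun _ => (1:ℝ)) := by
      have : Tendsto (fun w => G w - G 0) (𝓝[≠] (0:ℂ)) (𝓝 (c - G 0)) :=
        hGlim.sub_const _
      exact this.isBigO_one ℝ
    have h2 : (fun _ : ℂ => (1:ℝ)) =o[𝓝[≠] (0:ℂ)] fun w => (w - 0)⁻¹ := by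
      rw [Asymptotics.isLittleO_const_left]
      right
      have : Tendsto (fun w : ℂ => (w - 0)⁻¹) (𝓝[≠] (0:ℂ)) (cobounded ℂ) := by
        simpa using tendsto_inv₀_nhdsNE_zero (α := ℂ)
      exact tendsto_norm_cobounded_atTop.comp this
    exact h1.trans_isLittleO h2
  have hball : Metric.ball (0:ℂ) (2/3) ∈ 𝓝 (0:ℂ) :=
    Metric.ball_mem_nhds _ (by norm_num)
  have hGdiff' : DifferentiableOn ℂ
      (Function.update G 0 (limUnder (𝓝[≠] (0:ℂ)) G)) (Metric.ball (0:ℂ) (2/3)) :=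
    Complex.differentiableOn_update_limUnder_of_isLittleO hball hGdiff hGo
  have hlim : limUnder (𝓝[≠] (0:ℂ)) G = c := hGlim.limUnder_eq
  rw [hlim] at hGdiff'
  set Gt := Function.update G 0 c with hGt
  -- maximum principle on ball 0 (1/2)
  have hmax : ∀ w ∈ closure (Metric.ball (0:ℂ) (1/2)), ‖Gt w‖ ≤ C := by
    intro w hw
    refine Complex.norm_le_of_forall_mem_frontier_norm_le
      (isBounded_ball) ?_ ?_ hw
    · exact DifferentiableOn.diffContOnCl
        (hGdiff'.mono (by
          rw [closure_ball (0:ℂ) (by norm_num : (1/2:ℝ) ≠ 0)]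
          exact Metric.closedBall_subset_ball (by norm_num)))
    · intro x hx
      rw [frontier_ball (0:ℂ) (by norm_num : (1/2:ℝ) ≠ 0)] at hx
      have hxn : ‖x‖ = 1/2 := by simpa [mem_sphere_iff_norm] using hx
      have hx0 : x ≠ 0 := by
        intro h; rw [h] at hxn; norm_num at hxn
      have : Gt x = F x⁻¹ := by
        rw [hGt, Function.update_of_ne hx0]
      rw [this]
      refine hC _ ?_
      rw [norm_inv, hxn]; norm_num
  constructor
  · have h0 : (0:ℂ) ∈ closure (Metric.ball (0:ℂ) (1/2)) := by
      apply subset_closure; exact Metric.mem_ball_self (by norm_num)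
    have := hmax 0 h0
    rwa [hGt, Function.update_self] at this
  · intro z hz
    have hz0 : z ≠ 0 := by
      intro h; rw [h] at hz; simp at hz; linarith
    have hzi : z⁻¹ ∈ closure (Metric.ball (0:ℂ) (1/2)) := by
      rw [closure_ball (0:ℂ) (by norm_num : (1/2:ℝ) ≠ 0)]
      rw [Metric.mem_closedBall, dist_zero_right, norm_inv]
      rw [inv_le_comm₀ (norm_pos_iff.2 hz0) (by norm_num)]
      linarith
    have := hmax z⁻¹ hzi
    have hzi0 : z⁻¹ ≠ 0 := inv_ne_zero hz0
    rw [hGt, Function.update_of_ne hzi0] at this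
    simpa [hG, inv_inv] using this

lemma aux_compl_large {K : Set ℂ} (hK : K ⊆ Metric.closedBall 0 1) {z : ℂ}
    (hz : 1 < ‖z‖) : z ∈ Kᶜ := by
  intro hzK
  have := hK hzK
  rw [Metric.mem_closedBall, dist_zero_right] at this
  linarith

lemma aux_elt_le_four {K : Set ℂ} (hK : K ⊆ Metric.closedBall 0 1) {r : ℝ}
    (hr : r ∈ {r : ℝ | ∃ f : ℂ → ℂ, DifferentiableOn ℂ f Kᶜ ∧ (∀ z ∈ Kᶜ, ‖f z‖ ≤ 1) ∧
      ∃ L c : ℂ, Tendsto f (Bornology.cobounded ℂ) (𝓝 L) ∧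
        Tendsto (fun z => z * (f z - L)) (Bornology.cobounded ℂ) (𝓝 c) ∧ r = ‖c‖}) :
    r ≤ 4 := by
  obtain ⟨f, hdf, hbf, L, c, hfL, hfc, rfl⟩ := hr
  have hL : ‖L‖ ≤ 1 := by
    have hev : ∀ᶠ z : ℂ in cobounded ℂ, ‖f z‖ ≤ 1 := by
      filter_upwards [tendsto_norm_cobounded_atTop.eventually_ge_atTop 2] with z hz
      exact hbf z (aux_compl_large hK (by linarith))
    exact le_of_tendsto hfL.norm hev
  have hd : DifferentiableOn ℂ (fun z => z * (f z - L)) {z : ℂ | 1 < ‖z‖} := by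
    refine DifferentiableOn.mul differentiableOn_id ?_
    exact DifferentiableOn.sub_const
      (hdf.mono (fun z hz => aux_compl_large hK hz)) _
  have hC : ∀ z : ℂ, ‖z‖ = 2 → ‖z * (f z - L)‖ ≤ 4 := by
    intro z hz
    have hzK : z ∈ Kᶜ := aux_compl_large hK (by rw [hz]; norm_num)
    have : ‖z * (f z - L)‖ = ‖z‖ * ‖f z - L‖ := norm_mul _ _
    rw [this, hz]
    have : ‖f z - L‖ ≤ 2 := le_trans (norm_sub_le _ _) (by linarith [hbf z hzK])
    linarith
  exact (aux_ext_max hd hfc hC).1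

lemma aux_zero_mem (K : Set ℂ) :
    (0:ℝ) ∈ {r : ℝ | ∃ f : ℂ → ℂ, DifferentiableOn ℂ f Kᶜ ∧ (∀ z ∈ Kᶜ, ‖f z‖ ≤ 1) ∧
      ∃ L c : ℂ, Tendsto f (Bornology.cobounded ℂ) (𝓝 L) ∧
        Tendsto (fun z => z * (f z - L)) (Bornology.cobounded ℂ) (𝓝 c) ∧ r = ‖c‖} := by
  refine ⟨fun _ => 0, differentiableOn_const _, fun z _ => by simp, 0, 0,
    tendsto_const_nhds, ?_, by simp⟩
  simpa using (tendsto_const_nhds : Tendsto (fun _ : ℂ => (0:ℂ)) (cobounded ℂ) _)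

lemma aux_gcap_le_four {K : Set ℂ} (hK : K ⊆ Metric.closedBall 0 1) :
    analyticCapacityCompact K ≤ 4 :=
  Real.sSup_le (fun _ hr => aux_elt_le_four hK hr) (by norm_num)

lemma aux_gcap_ge {K : Set ℂ} (hK : K ⊆ Metric.closedBall 0 1) {r : ℝ}
    (hr : r ∈ {r : ℝ | ∃ f : ℂ → ℂ, DifferentiableOn ℂ f Kᶜ ∧ (∀ z ∈ Kᶜ, ‖f z‖ ≤ 1) ∧
      ∃ L c : ℂ, Tendsto f (Bornology.cobounded ℂ) (𝓝 L) ∧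
        Tendsto (fun z => z * (f z - L)) (Bornology.cobounded ℂ) (𝓝 c) ∧ r = ‖c‖}) :
    r ≤ analyticCapacityCompact K :=
  le_csSup ⟨4, fun _ h => aux_elt_le_four hK h⟩ hr

lemma aux_cap_ge {E : Set ℂ} (hE : E ⊆ Metric.closedBall 0 1) {K : Set ℂ}
    (hKc : IsCompact K) (hKE : K ⊆ E) :
    analyticCapacityCompact K ≤ analyticCapacity E := by
  refine le_csSup ⟨4, ?_⟩ ⟨K, hKc, hKE, rfl⟩
  rintro r ⟨K', hK'c, hK'E, rfl⟩
  exact aux_gcap_le_four (fun z hz => hE (hK'E hz))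

noncomputable def edgeS (u w z : ℂ) : ℂ :=
  (1 - ((w - u)/2)^2 / (z - (u+w)/2)^2) ^ ((1:ℂ)/2)

noncomputable def edgeH (u w z : ℂ) : ℂ := (z - (u+w)/2) * edgeS u w z

lemma aux_slit {u w z : ℂ} (hz : z ∉ segment ℝ u w) :
    (1 - ((w - u)/2)^2 / (z - (u+w)/2)^2) ∈ Complex.slitPlane := by
  by_contra hmem
  rw [Complex.mem_slitPlane_iff] at hmem
  push_neg at hmem
  obtain ⟨hre, him⟩ := hmem
  set A : ℂ := ((w - u)/2)^2 / (z - (u+w)/2)^2 with hA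
  have hAim : A.im = 0 := by
    have : (1 - A).im = 0 := him
    simpa using this
  have hAre : 1 ≤ A.re := by
    have : (1 - A).re ≤ 0 := hre
    simp only [Complex.sub_re, Complex.one_re] at this
    linarith
  set ρ : ℝ := A.re with hρ
  have hAeq : A = (ρ:ℂ) := Complex.ext (by rfl) (by simpa using hAim)
  have hρ1 : 1 ≤ ρ := hAre
  have hρ0 : 0 < ρ := by linarith
  have hden : (z - (u+w)/2)^2 ≠ 0 := by
    intro h
    rw [hA, h, div_zero] at hAeq
    have : ρ = 0 := by
      have := congrArg Complex.re hAeq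
      simpa using this.symm
    linarith
  have hkey : ((w - u)/2)^2 = (ρ:ℂ) * (z - (u+w)/2)^2 := by
    rw [← hAeq, hA, div_mul_cancel₀]
    exact hden
  set t : ℝ := 1 / Real.sqrt ρ with ht
  have hsq : 0 < Real.sqrt ρ := Real.sqrt_pos.2 hρ0
  have ht0 : 0 < t := by positivity
  have ht1 : t ≤ 1 := by
    rw [ht, div_le_one hsq]
    have := Real.one_le_sqrt.mpr hρ1
    linarith [this]
  have ht2 : (t:ℂ)^2 * (ρ:ℂ) = 1 := by
    have : t^2 * ρ = 1 := by
      rw [ht]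
      rw [div_pow, one_pow, Real.sq_sqrt hρ0.le]
      field_simp
    calc (t:ℂ)^2 * (ρ:ℂ) = ((t^2 * ρ : ℝ) : ℂ) := by push_cast; ring
    _ = 1 := by rw [this]; norm_num
  set w₀ : ℂ := (t:ℂ) * ((w - u)/2) with hw₀
  have hfac : (z - (u+w)/2 - w₀) * (z - (u+w)/2 + w₀) = 0 := by
    have hw₀sq : w₀^2 = (z - (u+w)/2)^2 := by
      rw [hw₀, mul_pow, hkey, ← mul_assoc, ht2, one_mul]
    have : (z - (u+w)/2)^2 - w₀^2 = 0 := by rw [hw₀sq]; ring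
    calc (z - (u+w)/2 - w₀) * (z - (u+w)/2 + w₀)
        = (z - (u+w)/2)^2 - w₀^2 := by ring
    _ = 0 := this
  apply hz
  rcases mul_eq_zero.mp hfac with h | h
  · -- z = (u+w)/2 + w₀
    refine ⟨(1-t)/2, (1+t)/2, by linarith, by linarith, by ring, ?_⟩
    have hzeq : z = (u+w)/2 + w₀ := by linear_combination h
    rw [hzeq, hw₀]
    simp only [Complex.real_smul]
    push_cast
    ring
  · refine ⟨(1+t)/2, (1-t)/2, by linarith, by linarith, by ring, ?_⟩
    have hzeq : z = (u+w)/2 - w₀ := by linear_combination h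
    rw [hzeq, hw₀]
    simp only [Complex.real_smul]
    push_cast
    ring

lemma aux_mid_mem (u w : ℂ) : (u+w)/2 ∈ segment ℝ u w := by
  refine ⟨1/2, 1/2, by norm_num, by norm_num, by norm_num, ?_⟩
  simp only [Complex.real_smul]
  push_cast
  ring

lemma aux_edgeH_sq {u w z : ℂ} (hz : z ∉ segment ℝ u w) :
    (edgeH u w z)^2 = (z - u) * (z - w) := by
  have hslit := aux_slit hz
  have hbne : (1 - ((w - u)/2)^2 / (z - (u+w)/2)^2) ≠ 0 :=
    Complex.slitPlane_ne_zero hslit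
  have hzm : z - (u+w)/2 ≠ 0 := by
    intro h
    apply hz
    have : z = (u+w)/2 := by linear_combination h
    rw [this]; exact aux_mid_mem u w
  have hS : (edgeS u w z)^2 = 1 - ((w - u)/2)^2 / (z - (u+w)/2)^2 := by
    rw [edgeS, sq, ← Complex.cpow_add _ _ hbne]
    norm_num
  rw [edgeH, mul_pow, hS, mul_sub, mul_one, mul_div_cancel₀ _ (pow_ne_zero 2 hzm)]
  ring

lemma aux_edgeH_diff {u w z : ℂ} (hz : z ∉ segment ℝ u w) :
    DifferentiableAt ℂ (edgeH u w) z := by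
  have hzm : z - (u+w)/2 ≠ 0 := by
    intro h
    apply hz
    have : z = (u+w)/2 := by linear_combination h
    rw [this]; exact aux_mid_mem u w
  have hbase : DifferentiableAt ℂ
      (fun z : ℂ => 1 - ((w - u)/2)^2 / (z - (u+w)/2)^2) z := by
    refine (differentiableAt_const _).sub ?_
    refine (differentiableAt_const _).div ?_ (pow_ne_zero _ hzm)
    exact ((differentiableAt_id).sub_const _).pow _
  have hS : DifferentiableAt ℂ (edgeS u w) z := by
    have := hbase.cpow (differentiableAt_const ((1:ℂ)/2)) (aux_slit hz)
    exact this
  exact ((differentiableAt_id).sub_const _).mul hS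

lemma aux_sq_cobounded (c : ℂ) :
    Tendsto (fun z : ℂ => ((z - c)^2)⁻¹) (cobounded ℂ) (𝓝 0) := by
  have h1 : Tendsto (fun z : ℂ => (z - c)^2) (cobounded ℂ) (cobounded ℂ) := by
    rw [← tendsto_norm_atTop_iff_cobounded]
    have : Tendsto (fun z : ℂ => ‖z - c‖) (cobounded ℂ) atTop := by
      have : Tendsto (fun z : ℂ => z - c) (cobounded ℂ) (cobounded ℂ) := by
        rw [← tendsto_norm_atTop_iff_cobounded]
        refine tendsto_atTop_mono (fun z => norm_sub_norm_le z c) ?_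
        exact tendsto_atTop_add_const_right _ (-‖c‖) tendsto_norm_cobounded_atTop
      exact tendsto_norm_cobounded_atTop.comp this
    have h2 : Tendsto (fun x : ℝ => x^2) atTop atTop := tendsto_pow_atTop (by norm_num)
    have := h2.comp this
    refine this.congr (fun z => ?_)
    simp [norm_pow]
  exact Filter.tendsto_inv₀_cobounded.comp h1

lemma aux_edgeS_tendsto (u w : ℂ) :
    Tendsto (edgeS u w) (cobounded ℂ) (𝓝 1) := by
  have hbase : Tendsto (fun z : ℂ => 1 - ((w - u)/2)^2 / (z - (u+w)/2)^2)
      (cobounded ℂ) (𝓝 1) := by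
    have h0 : Tendsto (fun z : ℂ => ((w - u)/2)^2 / (z - (u+w)/2)^2)
        (cobounded ℂ) (𝓝 0) := by
      have := (aux_sq_cobounded ((u+w)/2)).const_mul (((w - u)/2)^2)
      simp only [mul_zero] at this
      exact this.congr (fun z => (div_eq_mul_inv _ _).symm)
    have := (tendsto_const_nhds (x := (1:ℂ)) (f := cobounded ℂ)).sub h0
    simpa using this
  have hcont : ContinuousAt (fun x : ℂ => x ^ ((1:ℂ)/2)) 1 :=
    continuousAt_cpow_const Complex.one_mem_slitPlane
  have := hcont.tendsto.comp hbase
  rw [Complex.one_cpow] at this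
  exact this

lemma aux_ratio_tendsto (α β : ℂ) :
    Tendsto (fun z : ℂ => (z - α)/(z - β)) (cobounded ℂ) (𝓝 1) := by
  have h0 : Tendsto (fun z : ℂ => (β - α) * ((z - β))⁻¹) (cobounded ℂ) (𝓝 0) := by
    have h1 : Tendsto (fun z : ℂ => (z - β)⁻¹) (cobounded ℂ) (𝓝 0) := by
      refine Filter.tendsto_inv₀_cobounded.comp ?_
      rw [← tendsto_norm_atTop_iff_cobounded]
      refine tendsto_atTop_mono (fun z => norm_sub_norm_le z β) ?_
      exact tendsto_atTop_add_const_right _ (-‖β‖) tendsto_norm_cobounded_atTop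
    have := h1.const_mul (β - α)
    simpa using this
  have h2 : Tendsto (fun z : ℂ => 1 + (β - α) * (z - β)⁻¹) (cobounded ℂ) (𝓝 1) := by
    have := (tendsto_const_nhds (x := (1:ℂ)) (f := cobounded ℂ)).add h0
    simpa using this
  refine h2.congr' ?_
  filter_upwards [tendsto_norm_cobounded_atTop.eventually_ge_atTop (‖β‖ + 1)] with z hz
  have hzβ : z - β ≠ 0 := by
    intro h
    have : z = β := by linear_combination h
    rw [this] at hz; linarith
  field_simp
  ring

noncomputable def polyG (v : ℕ → ℂ) (n : ℕ) (z : ℂ) : ℂ :=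
  (∏ i ∈ Finset.range n, edgeH (v i) (v (i+1)) z) / (∏ i ∈ Finset.Ico 1 n, (z - v i))

def polyCut (v : ℕ → ℂ) (n : ℕ) : Set ℂ :=
  ⋃ i ∈ Finset.range n, segment ℝ (v i) (v (i+1))

lemma aux_cut_mem {v : ℕ → ℂ} {n : ℕ} {z : ℂ} (hz : z ∉ polyCut v n) :
    ∀ i, i < n → z ∉ segment ℝ (v i) (v (i+1)) := by
  intro i hi hseg
  exact hz (Set.mem_biUnion (Finset.mem_range.mpr hi) hseg)

lemma aux_seg_compact (u w : ℂ) : IsCompact (segment ℝ u w) := by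
  rw [segment_eq_image ℝ u w]
  apply isCompact_Icc.image
  continuity

lemma aux_cut_compact (v : ℕ → ℂ) (n : ℕ) : IsCompact (polyCut v n) := by
  apply (Finset.range n).finite_toSet.isCompact_biUnion
  intro i _
  exact aux_seg_compact _ _

lemma aux_cut_subset {v : ℕ → ℂ} {n : ℕ} {r : ℝ} (hv : ∀ i, i ≤ n → ‖v i‖ ≤ r) :
    polyCut v n ⊆ Metric.closedBall (0:ℂ) r := by
  refine Set.iUnion₂_subset ?_
  intro i hi
  rw [Finset.mem_range] at hi
  refine (convex_closedBall (0:ℂ) r).segment_subset ?_ ?_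
  · rw [Metric.mem_closedBall, dist_zero_right]; exact hv i (by omega)
  · rw [Metric.mem_closedBall, dist_zero_right]; exact hv (i+1) (by omega)

lemma aux_prod_telescope (v : ℕ → ℂ) (z : ℂ) {n : ℕ} (hn : 1 ≤ n) :
    ∏ i ∈ Finset.range n, ((z - v i) * (z - v (i+1)))
      = (z - v 0) * (z - v n) * (∏ i ∈ Finset.Ico 1 n, (z - v i))^2 := by
  induction n, hn using Nat.le_induction with
  | base => simp [Finset.prod_range_succ]
  | succ n hn ih =>
      rw [Finset.prod_range_succ, ih, Finset.prod_Ico_succ_top hn]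
      ring

lemma aux_den_ne {v : ℕ → ℂ} {n : ℕ} {z : ℂ} (hz : z ∉ polyCut v n) :
    (∏ i ∈ Finset.Ico 1 n, (z - v i)) ≠ 0 := by
  rw [Finset.prod_ne_zero_iff]
  intro i hi h0
  rw [Finset.mem_Ico] at hi
  have hzv : z = v i := by linear_combination h0
  exact aux_cut_mem hz i hi.2 (hzv ▸ left_mem_segment ℝ (v i) (v (i+1)))

lemma aux_polyG_sq {v : ℕ → ℂ} {n : ℕ} (hn : 1 ≤ n) {z : ℂ} (hz : z ∉ polyCut v n) :
    (polyG v n z)^2 = (z - v 0) * (z - v n) := by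
  have hden := aux_den_ne hz
  rw [polyG, div_pow, ← Finset.prod_pow]
  rw [Finset.prod_congr rfl
    (fun i hi => aux_edgeH_sq (aux_cut_mem hz i (Finset.mem_range.mp hi)))]
  rw [aux_prod_telescope v z hn]
  exact mul_div_cancel_right₀ _ (pow_ne_zero 2 hden)

lemma aux_polyG_diff {v : ℕ → ℂ} {n : ℕ} {z : ℂ} (hz : z ∉ polyCut v n) :
    DifferentiableAt ℂ (polyG v n) z := by
  refine DifferentiableAt.div ?_ ?_ (aux_den_ne hz)
  · exact DifferentiableAt.fun_finsetProd
      (fun i hi => aux_edgeH_diff (aux_cut_mem hz i (Finset.mem_range.mp hi)))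
  · exact DifferentiableAt.fun_finsetProd
      (fun i _ => (differentiableAt_id.sub_const _))

lemma aux_polyG_ratio {v : ℕ → ℂ} {n : ℕ} (hn : 1 ≤ n) :
    Tendsto (fun z => polyG v n z / (z - (v 0 + v n)/2)) (cobounded ℂ) (𝓝 1) := by
  set m : ℂ := (v 0 + v n)/2 with hm
  set ww : ℕ → ℂ := fun i => if i = 0 then m else v i with hww
  have key : ∀ z : ℂ, polyG v n z / (z - m)
      = ∏ i ∈ Finset.range n, (edgeH (v i) (v (i+1)) z / (z - ww i)) := by
    intro z
    have hd : ∏ i ∈ Finset.range n, (z - ww i)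
        = (∏ i ∈ Finset.Ico 1 n, (z - v i)) * (z - m) := by
      rw [Finset.prod_range_eq_mul_Ico _ hn]
      have h0 : ww 0 = m := by simp [hww]
      have h1 : ∏ i ∈ Finset.Ico 1 n, (z - ww i) = ∏ i ∈ Finset.Ico 1 n, (z - v i) := by
        refine Finset.prod_congr rfl ?_
        intro i hi
        rw [Finset.mem_Ico] at hi
        have : i ≠ 0 := by omega
        simp [hww, this]
      rw [h0, h1, mul_comm]
    rw [Finset.prod_div_distrib, hd, polyG, div_div]
  have hfac : ∀ i ∈ Finset.range n,
      Tendsto (fun z => edgeH (v i) (v (i+1)) z / (z - ww i)) (cobounded ℂ) (𝓝 1) := by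
    intro i _
    have heq : ∀ z : ℂ, edgeH (v i) (v (i+1)) z / (z - ww i)
        = edgeS (v i) (v (i+1)) z * ((z - (v i + v (i+1))/2) / (z - ww i)) := by
      intro z
      rw [edgeH, mul_comm, mul_div_assoc]
    have := (aux_edgeS_tendsto (v i) (v (i+1))).mul
      (aux_ratio_tendsto ((v i + v (i+1))/2) (ww i))
    rw [mul_one] at this
    exact Tendsto.congr (fun z => (heq z).symm) this
  have hprod := tendsto_finset_prod (Finset.range n) hfac
  rw [Finset.prod_const_one] at hprod
  exact Tendsto.congr (fun z => (key z).symm) hprod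

lemma aux_ev_large (r : ℝ) : ∀ᶠ z : ℂ in cobounded ℂ, r ≤ ‖z‖ :=
  tendsto_norm_cobounded_atTop.eventually_ge_atTop r

lemma aux_polygon_elt {n : ℕ} (hn : 1 ≤ n) {v : ℕ → ℂ}
    (hv : ∀ i, i ≤ n → ‖v i‖ ≤ 0.79) :
    ‖v n - v 0‖^2/48 ∈ {r : ℝ | ∃ f : ℂ → ℂ, DifferentiableOn ℂ f (polyCut v n)ᶜ ∧
      (∀ z ∈ (polyCut v n)ᶜ, ‖f z‖ ≤ 1) ∧
      ∃ L c : ℂ, Tendsto f (Bornology.cobounded ℂ) (𝓝 L) ∧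
        Tendsto (fun z => z * (f z - L)) (Bornology.cobounded ℂ) (𝓝 c) ∧
          ‖v n - v 0‖^2/48 = ‖c‖} := by
  set m : ℂ := (v 0 + v n)/2 with hm
  set q : ℂ := ((v n - v 0)/2)^2 with hq
  set g : ℂ → ℂ := polyG v n with hg
  set F0 : ℂ → ℂ := fun z => (z - m) - g z with hF0
  have hmnorm : ‖m‖ ≤ 0.79 := by
    rw [hm]
    calc ‖(v 0 + v n)/2‖ = ‖v 0 + v n‖/2 := by
          rw [norm_div]; norm_num
    _ ≤ (‖v 0‖ + ‖v n‖)/2 := by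
          have := norm_add_le (v 0) (v n); linarith
    _ ≤ 0.79 := by have h0 := hv 0 (by omega); have h1 := hv n le_rfl; linarith
  -- key algebraic identity
  have hkey : ∀ z : ℂ, z ∉ polyCut v n → F0 z * ((z - m) + g z) = q := by
    intro z hz
    have hsq := aux_polyG_sq hn hz
    calc F0 z * ((z - m) + g z) = (z - m)^2 - (g z)^2 := by rw [hF0]; ring
    _ = (z - m)^2 - (z - v 0) * (z - v n) := by rw [hsq]
    _ = q := by rw [hm, hq]; ring
  -- bound for moderate z
  have hbound2 : ∀ z : ℂ, z ∉ polyCut v n → ‖z‖ ≤ 2 → ‖F0 z‖ ≤ 6 := by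
    intro z hz hz2
    have hgz : ‖g z‖ ≤ 2.79 := by
      have hsq := aux_polyG_sq hn hz
      have h1 : ‖g z‖^2 = ‖z - v 0‖ * ‖z - v n‖ := by
        rw [← norm_pow, hsq, norm_mul]
      have h2 : ‖z - v 0‖ ≤ 2.79 := by
        have := norm_sub_le z (v 0); have := hv 0 (by omega); linarith [norm_sub_le z (v 0), hv 0 (Nat.zero_le n)]
      have h3 : ‖z - v n‖ ≤ 2.79 := by
        linarith [norm_sub_le z (v n), hv n le_rfl]
      nlinarith [norm_nonneg (g z), norm_nonneg (z - v 0), norm_nonneg (z - v n)]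
    have hzm : ‖z - m‖ ≤ 2.79 := by linarith [norm_sub_le z m]
    calc ‖F0 z‖ ≤ ‖z - m‖ + ‖g z‖ := norm_sub_le _ _
    _ ≤ 6 := by linarith
  -- cut is within radius 0.79
  have hcut : polyCut v n ⊆ Metric.closedBall (0:ℂ) 0.79 := by
    refine aux_cut_subset (fun i hi => hv i hi)
  have hnotcut : ∀ z : ℂ, 1 < ‖z‖ → z ∉ polyCut v n := by
    intro z h1 hzc
    have := hcut hzc
    rw [Metric.mem_closedBall, dist_zero_right] at this
    linarith
  -- denominator D := (z - m) + g z tends to cobounded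
  have hratio := aux_polyG_ratio (v := v) hn
  have honeplus : Tendsto (fun z => 1 + g z / (z - m)) (cobounded ℂ) (𝓝 2) := by
    have := (tendsto_const_nhds (x := (1:ℂ)) (f := cobounded ℂ)).add hratio
    norm_num at this
    exact this
  have hD : Tendsto (fun z => (z - m) + g z) (cobounded ℂ) (cobounded ℂ) := by
    rw [← tendsto_norm_atTop_iff_cobounded]
    have hev : ∀ᶠ z : ℂ in cobounded ℂ, ‖z‖ - ‖m‖ ≤ ‖(z - m) + g z‖ := by
      filter_upwards [aux_ev_large (‖m‖ + 1),
        honeplus.norm.eventually (eventually_gt_nhds (by norm_num : (1:ℝ) < ‖(2:ℂ)‖))] with z hz1 hz2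
      have hzm : z - m ≠ 0 := by
        intro h
        have : z = m := by linear_combination h
        rw [this] at hz1; linarith
      have hfact : (z - m) + g z = (z - m) * (1 + g z / (z - m)) := by
        field_simp
      rw [hfact, norm_mul]
      have h3 : ‖z‖ - ‖m‖ ≤ ‖z - m‖ := norm_sub_norm_le z m
      have h4 : (1:ℝ) ≤ ‖1 + g z / (z - m)‖ := le_of_lt (by simpa using hz2)
      nlinarith [norm_nonneg (z - m)]
    refine tendsto_atTop_mono' _ hev ?_
    exact tendsto_atTop_add_const_right _ (-‖m‖) tendsto_norm_cobounded_atTop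
  have hDne : ∀ᶠ z : ℂ in cobounded ℂ, (z - m) + g z ≠ 0 := by
    filter_upwards [(tendsto_norm_atTop_iff_cobounded.mpr hD).eventually_ge_atTop 1] with z hz
    intro h0
    rw [h0, norm_zero] at hz
    linarith
  -- F0 tends to 0
  have hevF0 : ∀ᶠ z : ℂ in cobounded ℂ, F0 z = q * ((z - m) + g z)⁻¹ := by
    filter_upwards [aux_ev_large 2, hDne] with z hz2 hzD
    have hzc := hnotcut z (by linarith)
    have := hkey z hzc
    field_simp
    linear_combination this
  have hF0lim : Tendsto F0 (cobounded ℂ) (𝓝 0) := by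
    have : Tendsto (fun z => q * ((z - m) + g z)⁻¹) (cobounded ℂ) (𝓝 0) := by
      have := (Filter.tendsto_inv₀_cobounded.comp hD).const_mul q
      simpa using this
    have hEE : F0 =ᶠ[cobounded ℂ] (fun z => q * ((z - m) + g z)⁻¹) := hevF0
    exact Tendsto.congr' hEE.symm this
  -- z * F0 z tends to q/2
  have hA : Tendsto (fun z => ((z - m) + g z)/z) (cobounded ℂ) (𝓝 2) := by
    have hzmz : Tendsto (fun z : ℂ => (z - m)/z) (cobounded ℂ) (𝓝 1) := by
      have := aux_ratio_tendsto m 0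
      simpa using this
    have hgz : Tendsto (fun z : ℂ => (g z/(z - m)) * ((z - m)/z)) (cobounded ℂ) (𝓝 1) := by
      have := hratio.mul hzmz
      simpa using this
    have hsum := hzmz.add hgz
    norm_num at hsum
    refine Tendsto.congr' ?_ hsum
    filter_upwards [aux_ev_large (‖m‖ + 1)] with z hz1
    have hz0 : z ≠ 0 := by
      intro h; rw [h, norm_zero] at hz1; linarith [norm_nonneg m]
    have hzm : z - m ≠ 0 := by
      intro h
      have : z = m := by linear_combination h
      rw [this] at hz1; linarith
    field_simp
  have hzF0 : Tendsto (fun z => z * F0 z) (cobounded ℂ) (𝓝 (q/2)) := by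
    have h2 : Tendsto (fun z => q / (((z - m) + g z)/z)) (cobounded ℂ) (𝓝 (q/2)) :=
      tendsto_const_nhds.div hA two_ne_zero
    refine Tendsto.congr' ?_ h2
    filter_upwards [aux_ev_large 2, hDne, hevF0] with z hz2 hzD hzF
    have hz0 : z ≠ 0 := by
      intro h; rw [h, norm_zero] at hz2; linarith
    rw [hzF]
    field_simp
  -- global bound ≤ 6
  have hdiffF0 : DifferentiableOn ℂ F0 {z : ℂ | 1 < ‖z‖} := by
    intro z hz
    have hzc := hnotcut z hz
    exact ((differentiableAt_id.sub_const m).sub (aux_polyG_diff hzc)).differentiableWithinAt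
  have hext := aux_ext_max hdiffF0 hF0lim
    (fun z hz => hbound2 z (hnotcut z (by rw [hz]; norm_num)) (by rw [hz]))
  -- assemble
  refine ⟨fun z => F0 z / 6, ?_, ?_, 0, q/12, ?_, ?_, ?_⟩
  · intro z hz
    exact (((differentiableAt_id.sub_const m).sub
      (aux_polyG_diff hz)).div_const 6).differentiableWithinAt
  · intro z hz
    have h6 : ‖F0 z‖ ≤ 6 := by
      rcases le_or_gt ‖z‖ 2 with h | h
      · exact hbound2 z hz h
      · exact hext.2 z h.le
    rw [norm_div]
    have : ‖(6:ℂ)‖ = 6 := by norm_num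
    rw [this]
    linarith
  · have := hF0lim.div_const (6:ℂ)
    simpa using this
  · have : Tendsto (fun z => (z * F0 z)/6) (cobounded ℂ) (𝓝 (q/12)) := by
      have := hzF0.div_const (6:ℂ)
      have h612 : q/2/6 = q/12 := by ring
      rwa [h612] at this
    refine Tendsto.congr (fun z => ?_) this
    ring
  · rw [hq]
    rw [norm_div]
    have h12 : ‖(12:ℂ)‖ = 12 := by norm_num
    rw [h12, norm_pow, norm_div]
    have h2 : ‖(2:ℂ)‖ = 2 := by norm_num
    rw [h2]
    ring

lemma aux_square_norm {l : ℂ} (hl : l ∈ squareR) : ‖l‖ < 0.71 := by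
  have hre : |l.re| < 1/2 := hl.1
  have him : |l.im| < 1/2 := hl.2
  have h1 : ‖l‖^2 = l.re^2 + l.im^2 := by
    rw [Complex.sq_norm, Complex.normSq_apply]; ring
  nlinarith [norm_nonneg l, _root_.sq_abs l.re, _root_.sq_abs l.im, abs_nonneg l.re, abs_nonneg l.im]

lemma aux_le_biSup {S : Set ℂ} {h : ℂ → ℝ} {B : ℝ} (hb : ∀ z ∈ S, h z ≤ B) {z₀ : ℂ}
    (hz₀ : z₀ ∈ S) : h z₀ ≤ ⨆ z ∈ S, h z := by
  have hbdd : BddAbove (Set.range fun z => ⨆ _ : z ∈ S, h z) := by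
    refine ⟨max B 0, ?_⟩
    rintro x ⟨z, rfl⟩
    show (⨆ _ : z ∈ S, h z) ≤ max B 0
    by_cases hz : z ∈ S
    · rw [ciSup_pos hz]; exact le_max_of_le_left (hb z hz)
    · haveI : IsEmpty (z ∈ S) := ⟨fun h => hz h⟩
      rw [Real.iSup_of_isEmpty]
      exact le_max_right _ _
  refine le_ciSup_of_le hbdd z₀ ?_
  rw [ciSup_pos hz₀]

lemma aux_poly_bound {K : Set ℂ} (hKc : IsCompact K) (hK1 : K ⊆ Metric.closedBall 0 1)
    (hcap : analyticCapacity (Metric.ball 0 1 \ K) < 1/20000)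
    {P : ℂ → ℂ} (hP : Differentiable ℂ P)
    {l : ℂ} (hl : l ∈ squareR) :
    ‖P l‖ ≤ ⨆ z ∈ (Metric.closedBall (0:ℂ) 1 \ squareR) ∩ K, ‖P z‖ := by
  classical
  set S : Set ℂ := (Metric.closedBall (0:ℂ) 1 \ squareR) ∩ K with hS
  set M : ℝ := ⨆ z ∈ S, ‖P z‖ with hM
  by_contra hgt
  push_neg at hgt
  obtain ⟨B, hB⟩ := (isCompact_closedBall (0:ℂ) 1).exists_bound_of_continuousOn
    hP.continuous.continuousOn
  have hMle : ∀ z ∈ S, ‖P z‖ ≤ M :=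
    fun z hz => aux_le_biSup (fun w hw => hB w hw.1.1) hz
  -- the open set where ‖P‖ > M and its component at l
  set V : Set ℂ := {z : ℂ | M < ‖P z‖} with hV
  have hVopen : IsOpen V := isOpen_lt continuous_const hP.continuous.norm
  have hlV : l ∈ V := hgt
  set Ω : Set ℂ := connectedComponentIn V l with hΩ
  have hΩopen : IsOpen Ω := hVopen.connectedComponentIn
  have hlΩ : l ∈ Ω := mem_connectedComponentIn hlV
  have hΩV : Ω ⊆ V := connectedComponentIn_subset V l
  -- Ω is unbounded
  have hfront : ∀ w ∈ frontier Ω, ‖P w‖ ≤ M := by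
    intro w hw
    rw [hΩopen.frontier_eq] at hw
    obtain ⟨hwcl, hwΩ⟩ := hw
    by_contra hgt2
    push_neg at hgt2
    have hwV : w ∈ V := hgt2
    have hΩ'open : IsOpen (connectedComponentIn V w) := hVopen.connectedComponentIn
    obtain ⟨y, hyΩ', hyΩ⟩ : (connectedComponentIn V w ∩ Ω).Nonempty :=
      mem_closure_iff.mp hwcl _ hΩ'open (mem_connectedComponentIn hwV)
    have h1 := connectedComponentIn_eq hyΩ'
    have h2 := connectedComponentIn_eq (hΩ ▸ hyΩ)
    have : w ∈ Ω := by
      rw [hΩ, h2, ← h1]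
      exact mem_connectedComponentIn hwV
    exact hwΩ this
  have hunb : ¬ Bornology.IsBounded Ω := by
    intro hbdd
    have := Complex.norm_le_of_forall_mem_frontier_norm_le hbdd hP.diffContOnCl
      hfront (subset_closure hlΩ)
    have hlV' : M < ‖P l‖ := hlV
    linarith
  obtain ⟨zinf, hzinfO, hzinf⟩ : ∃ z, z ∈ Ω ∧ 2 < ‖z‖ := by
    by_contra h
    push_neg at h
    exact hunb ((Metric.isBounded_closedBall (x := (0:ℂ)) (r := 2)).subset
      (fun z hz => mem_closedBall_zero_iff.mpr (h z hz)))
  -- a path in Ω from l to zinf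
  have hΩconn : IsConnected Ω := isConnected_connectedComponentIn_iff.mpr hlV
  have hpc : IsPathConnected Ω := (hΩopen.isConnected_iff_isPathConnected).mp hΩconn
  obtain ⟨γ, hγ⟩ : JoinedIn Ω l zinf := hpc.joinedIn l hlΩ zinf hzinfO
  have he_cont : Continuous γ.extend := γ.continuous_extend
  have hmem : ∀ t, t ∈ Set.Icc (0:ℝ) 1 → γ.extend t ∈ Ω := by
    intro t ht
    rw [γ.extend_apply ht]
    exact hγ _
  have hlnorm : ‖l‖ < 0.71 := aux_square_norm hl
  -- first exit time from radius 0.78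
  set Sb : Set ℝ := Set.Icc (0:ℝ) 1 ∩ {t : ℝ | 0.78 ≤ ‖γ.extend t‖} with hSb
  have hSbclosed : IsClosed Sb :=
    isClosed_Icc.inter (isClosed_le continuous_const he_cont.norm)
  have hSbne : Sb.Nonempty := by
    refine ⟨1, ⟨by norm_num, ?_⟩⟩
    rw [Set.mem_setOf_eq, γ.extend_one]
    linarith
  have hSbbdd : BddBelow Sb := ⟨0, fun t ht => ht.1.1⟩
  set t₂ : ℝ := sInf Sb with ht₂
  have ht₂mem : t₂ ∈ Sb := hSbclosed.csInf_mem hSbne hSbbdd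
  have ht₂Icc : t₂ ∈ Set.Icc (0:ℝ) 1 := ht₂mem.1
  have ht₂ge : 0.78 ≤ ‖γ.extend t₂‖ := ht₂mem.2
  have hmin : ∀ t, 0 ≤ t → t < t₂ → ‖γ.extend t‖ < 0.78 := by
    intro t h0 hlt
    by_contra hge
    push_neg at hge
    have htSb : t ∈ Sb := ⟨⟨h0, le_trans hlt.le ht₂Icc.2⟩, hge⟩
    exact absurd (csInf_le hSbbdd htSb) (not_le.mpr hlt)
  have ht₂pos : 0 < t₂ := by
    rcases lt_or_eq_of_le ht₂Icc.1 with h | h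
    · exact h
    · exfalso
      have := ht₂ge
      rw [← h, γ.extend_zero] at this
      linarith
  have ht₂eq : ‖γ.extend t₂‖ = 0.78 := by
    refine le_antisymm ?_ ht₂ge
    have htd : Tendsto (fun t => ‖γ.extend t‖) (𝓝[<] t₂) (𝓝 ‖γ.extend t₂‖) :=
      (he_cont.norm.tendsto t₂).mono_left nhdsWithin_le_nhds
    refine le_of_tendsto htd ?_
    filter_upwards [Ioo_mem_nhdsLT_of_mem (⟨ht₂pos, le_rfl⟩ : t₂ ∈ Set.Ioc 0 t₂)] with t ht
    exact (hmin t ht.1.le ht.2).le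
  -- last time within radius 0.72 before t₂
  set Sa : Set ℝ := Set.Icc (0:ℝ) t₂ ∩ {t : ℝ | ‖γ.extend t‖ ≤ 0.72} with hSa
  have hSaclosed : IsClosed Sa :=
    isClosed_Icc.inter (isClosed_le he_cont.norm continuous_const)
  have hSane : Sa.Nonempty := by
    refine ⟨0, ⟨⟨le_rfl, ht₂pos.le⟩, ?_⟩⟩
    rw [Set.mem_setOf_eq, γ.extend_zero]
    linarith
  have hSabdd : BddAbove Sa := ⟨t₂, fun t ht => ht.1.2⟩
  set t₁ : ℝ := sSup Sa with ht₁
  have ht₁mem : t₁ ∈ Sa := hSaclosed.csSup_mem hSane hSabdd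
  have ht₁Icc : t₁ ∈ Set.Icc (0:ℝ) t₂ := ht₁mem.1
  have ht₁le : ‖γ.extend t₁‖ ≤ 0.72 := ht₁mem.2
  have hmax : ∀ t, t₁ < t → t ≤ t₂ → 0.72 < ‖γ.extend t‖ := by
    intro t hlt hle
    by_contra hge
    push_neg at hge
    have htSa : t ∈ Sa := ⟨⟨le_trans ht₁Icc.1 hlt.le, hle⟩, hge⟩
    exact absurd (le_csSup hSabdd htSa) (not_le.mpr hlt)
  have ht₁lt : t₁ < t₂ := by
    rcases lt_or_eq_of_le ht₁Icc.2 with h | h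
    · exact h
    · exfalso
      rw [h] at ht₁le
      linarith [ht₂eq ▸ ht₁le]
  have ht₁eq : ‖γ.extend t₁‖ = 0.72 := by
    refine le_antisymm ht₁le ?_
    have htd : Tendsto (fun t => ‖γ.extend t‖) (𝓝[>] t₁) (𝓝 ‖γ.extend t₁‖) :=
      (he_cont.norm.tendsto t₁).mono_left nhdsWithin_le_nhds
    refine ge_of_tendsto htd ?_
    filter_upwards [Ioo_mem_nhdsGT_of_mem (⟨le_rfl, ht₁lt⟩ : t₁ ∈ Set.Ico t₁ t₂)] with t ht
    exact (hmax t ht.1 ht.2.le).le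
  have hIcc : ∀ t ∈ Set.Icc t₁ t₂, 0.72 ≤ ‖γ.extend t‖ ∧ ‖γ.extend t‖ ≤ 0.78 := by
    intro t ht
    constructor
    · rcases eq_or_lt_of_le ht.1 with h | h
      · rw [← h, ht₁eq]
      · exact (hmax t h ht.2).le
    · rcases eq_or_lt_of_le ht.2 with h | h
      · rw [h, ht₂eq]
      · exact (hmin t (le_trans ht₁Icc.1 ht.1) h).le
  -- image of the crossing segment and the open region W
  set W : Set ℂ := {z : ℂ | (0.71 < ‖z‖ ∧ ‖z‖ < 0.79) ∧ M < ‖P z‖} with hW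
  have hWopen : IsOpen W := by
    refine IsOpen.inter ?_ (isOpen_lt continuous_const hP.continuous.norm)
    exact (isOpen_lt continuous_const continuous_norm).inter
      (isOpen_lt continuous_norm continuous_const)
  have hWsub : W ⊆ Metric.ball (0:ℂ) 1 \ K := by
    intro z hz
    constructor
    · rw [mem_ball_zero_iff]
      linarith [hz.1.2]
    · intro hzK
      have hzQ : z ∉ squareR := by
        intro hsq
        have := aux_square_norm hsq
        linarith [hz.1.1]
      have hzS : z ∈ S := ⟨⟨hK1 hzK, hzQ⟩, hzK⟩
      have := hMle z hzS
      have := hz.2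
      linarith
  set C : Set ℂ := γ.extend '' Set.Icc t₁ t₂ with hC
  have hCcomp : IsCompact C := isCompact_Icc.image he_cont
  have hCW : C ⊆ W := by
    rintro _ ⟨t, ht, rfl⟩
    have hn := hIcc t ht
    have htΩ : γ.extend t ∈ Ω := hmem t ⟨le_trans ht₁Icc.1 ht.1, le_trans ht.2 ht₂Icc.2⟩
    refine ⟨⟨by linarith [hn.1], by linarith [hn.2]⟩, hΩV htΩ⟩
  obtain ⟨δ, hδpos, hδ⟩ := hCcomp.exists_thickening_subset_open hWopen hCW
  -- uniform continuity and polygonal approximation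
  have hUC := isCompact_Icc.uniformContinuousOn_of_continuous
    (he_cont.continuousOn : ContinuousOn γ.extend (Set.Icc t₁ t₂))
  rw [Metric.uniformContinuousOn_iff] at hUC
  obtain ⟨η, hηpos, hη⟩ := hUC δ hδpos
  obtain ⟨N0, hN0⟩ := exists_nat_gt ((t₂ - t₁)/η)
  set N : ℕ := N0 + 1 with hN
  have hNpos : (0:ℝ) < N := by positivity
  have hNgt : (t₂ - t₁)/η < N := by
    rw [hN]
    push_cast
    linarith
  set s : ℕ → ℝ := fun i => t₁ + (t₂ - t₁) * i / N with hs
  set v : ℕ → ℂ := fun i => γ.extend (s i) with hv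
  have hs0 : s 0 = t₁ := by simp [hs]
  have hsN : s N = t₂ := by
    rw [hs]
    field_simp
    ring
  have hsmem : ∀ i, i ≤ N → s i ∈ Set.Icc t₁ t₂ := by
    intro i hi
    have hi' : (i:ℝ) ≤ (N:ℝ) := Nat.cast_le.mpr hi
    constructor
    · have : 0 ≤ (t₂ - t₁) * i / N := by
        apply div_nonneg
        · exact mul_nonneg (by linarith) (Nat.cast_nonneg i)
        · linarith
      rw [hs]; simp only []; linarith
    · have h2 : (t₂ - t₁) * i / N ≤ t₂ - t₁ := by
        rw [div_le_iff₀ hNpos]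
        nlinarith
      rw [hs]; simp only []; linarith
  have hstepdist : ∀ i, i < N → dist (v (i+1)) (v i) < δ := by
    intro i hi
    have hd1 : dist (s (i+1)) (s i) = (t₂ - t₁)/N := by
      have hgap : s (i+1) - s i = (t₂ - t₁)/N := by
        rw [hs]
        push_cast
        ring
      rw [Real.dist_eq, hgap,
        _root_.abs_of_nonneg (div_nonneg (by linarith) (le_of_lt hNpos))]
    have hd2 : dist (s (i+1)) (s i) < η := by
      rw [hd1, div_lt_iff₀ hNpos]
      rw [div_lt_iff₀ hηpos] at hNgt
      nlinarith
    exact hη (s (i+1)) (hsmem _ (by omega)) (s i) (hsmem _ (by omega)) hd2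
  have hv79 : ∀ i, i ≤ N → ‖v i‖ ≤ 0.79 := by
    intro i hi
    have := (hIcc _ (hsmem i hi)).2
    rw [hv]
    linarith
  -- the polygonal cut lies in the disk minus K
  have hcutsub : polyCut v N ⊆ Metric.ball (0:ℂ) 1 \ K := by
    intro x hx
    rw [polyCut, Set.mem_iUnion₂] at hx
    obtain ⟨i, hi, hseg⟩ := hx
    rw [Finset.mem_range] at hi
    obtain ⟨a', b', ha', hb', hab', rfl⟩ := hseg
    have hxd : dist (a' • v i + b' • v (i+1)) (v i) < δ := by
      have hxe : a' • v i + b' • v (i+1) - v i = b' • (v (i+1) - v i) := by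
        have : a' = 1 - b' := by linarith
        rw [this]
        module
      rw [dist_eq_norm, hxe, norm_smul]
      have hb1 : b' ≤ 1 := by linarith
      have : ‖v (i+1) - v i‖ < δ := by
        rw [← dist_eq_norm]
        exact hstepdist i hi
      calc ‖b'‖ * ‖v (i+1) - v i‖ ≤ 1 * ‖v (i+1) - v i‖ := by
            apply mul_le_mul_of_nonneg_right _ (norm_nonneg _)
            rw [Real.norm_eq_abs, _root_.abs_of_nonneg hb']
            exact hb1
      _ < δ := by rwa [one_mul]
    have hxth : a' • v i + b' • v (i+1) ∈ Metric.thickening δ C := by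
      rw [Metric.mem_thickening_iff]
      exact ⟨v i, ⟨s i, hsmem i (by omega), rfl⟩, hxd⟩
    exact hWsub (hδ hxth)
  -- capacity contradiction
  have hcut1 : polyCut v N ⊆ Metric.closedBall (0:ℂ) 1 :=
    (aux_cut_subset hv79).trans (Metric.closedBall_subset_closedBall (by norm_num))
  have h1 : ‖v N - v 0‖^2/48 ≤ analyticCapacityCompact (polyCut v N) :=
    aux_gcap_ge hcut1 (aux_polygon_elt (by omega) hv79)
  have h2 : analyticCapacityCompact (polyCut v N) ≤ analyticCapacity (Metric.ball 0 1 \ K) :=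
    aux_cap_ge (fun z hz => Metric.ball_subset_closedBall hz.1) (aux_cut_compact v N) hcutsub
  have hd06 : 0.06 ≤ ‖v N - v 0‖ := by
    have hvN : ‖v N‖ = 0.78 := by rw [hv]; simp only []; rw [hsN]; exact ht₂eq
    have hv0 : ‖v 0‖ = 0.72 := by rw [hv]; simp only []; rw [hs0]; exact ht₁eq
    have := norm_sub_norm_le (v N) (v 0)
    linarith
  have hsq : (0.06:ℝ)^2 ≤ ‖v N - v 0‖^2 := by
    apply pow_le_pow_left₀ (by norm_num) hd06
  have : (0.06:ℝ)^2/48 ≤ analyticCapacity (Metric.ball 0 1 \ K) := by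
    have h3 : (0.06:ℝ)^2/48 ≤ ‖v N - v 0‖^2/48 := by linarith
    linarith
  norm_num at this
  linarith

/-- Lemma 2.3 of the paper: there is an absolute constant
`ε₁ > 0` such that if `K` is a compact subset of the closed unit disk with
`γ(𝔻 ∖ K) < ε₁`, then every `f` in the disk algebra `A(𝔻)` (the uniform closure
of polynomials in `C(closed unit disk)`) satisfies
`|f(λ)| ≤ sup_{z ∈ Q ∩ K} |f(z)|` for all `λ ∈ R`, where `Q = closed disk ∖ R`. -/
theorem capacity_maximum_principle_square :
    ∃ ε₁ : ℝ, 0 < ε₁ ∧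
      ∀ K : Set ℂ, IsCompact K → K ⊆ Metric.closedBall 0 1 →
        analyticCapacity (Metric.ball 0 1 \ K) < ε₁ →
        ∀ f : ℂ → ℂ, ContinuousOn f (Metric.closedBall 0 1) →
          (∀ ε > (0:ℝ), ∃ P : Polynomial ℂ,
            ∀ z ∈ Metric.closedBall (0:ℂ) 1, ‖f z - P.eval z‖ < ε) →
          ∀ l ∈ squareR,
            ‖f l‖ ≤ ⨆ z ∈ (Metric.closedBall (0:ℂ) 1 \ squareR) ∩ K, ‖f z‖ := by
  refine ⟨1/20000, by norm_num, ?_⟩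
  intro K hKc hK1 hcap f hf happrox l hl
  set S : Set ℂ := (Metric.closedBall (0:ℂ) 1 \ squareR) ∩ K with hS
  set Mf : ℝ := ⨆ z ∈ S, ‖f z‖ with hMf
  by_contra hgt
  push_neg at hgt
  set ε : ℝ := (‖f l‖ - Mf)/3 with hε
  have hεpos : 0 < ε := by rw [hε]; linarith
  obtain ⟨P, hP⟩ := happrox ε hεpos
  have hl1 : l ∈ Metric.closedBall (0:ℂ) 1 := by
    rw [mem_closedBall_zero_iff]
    have := aux_square_norm hl
    linarith
  have hPl : ‖f l‖ - ε ≤ ‖P.eval l‖ := by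
    have h1 := hP l hl1
    have h2 := norm_sub_norm_le (f l) (P.eval l)
    linarith
  obtain ⟨Bf, hBf⟩ := (isCompact_closedBall (0:ℂ) 1).exists_bound_of_continuousOn hf
  have hMP : (⨆ z ∈ S, ‖P.eval z‖) ≤ Mf + ε := by
    have hMf0 : 0 ≤ Mf := Real.iSup_nonneg fun z => Real.iSup_nonneg fun _ => norm_nonneg _
    refine Real.iSup_le (fun z => Real.iSup_le (fun hz => ?_) (by linarith)) (by linarith)
    have h1 := hP z hz.1.1
    have h2 := norm_sub_norm_le (P.eval z) (f z)
    rw [norm_sub_rev] at h2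
    have h3 : ‖f z‖ ≤ Mf := aux_le_biSup (fun w hw => hBf w hw.1.1) hz
    linarith
  have hPle : ‖P.eval l‖ ≤ ⨆ z ∈ S, ‖P.eval z‖ :=
    aux_poly_bound hKc hK1 hcap (P.differentiable) hl
  rw [hε] at hPl hMP
  linarith
end

section
/- There is an absolute constant ε₁ > 0 such that: if λ₀ ∈ ℂ, δ > 0, K ⊂ ℂ is compact, and γ(B(λ₀, δ) ∖ K) < ε₁·δ, then |f(λ)| ≤ sup_{z ∈ B(λ₀,δ) ∩ K} |f(z)| for every λ ∈ B(λ₀, δ/2) and every f in the uniform closure of polynomials in C(closed B(λ₀, δ)). -/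
open Complex MeasureTheory Set Metric Filter Topology

open Bornology

lemma ratio_mem_slitPlane {z u v : ℂ} (hz : z ∉ segment ℝ u v) :
    (z - u) / (z - v) ∈ Complex.slitPlane := by
  have hzv : z ≠ v := fun h => hz (h ▸ right_mem_segment ℝ u v)
  by_contra hc
  rw [Complex.mem_slitPlane_iff] at hc
  push_neg at hc
  obtain ⟨h1, h2⟩ := hc
  have hvz : (z - v) ≠ 0 := sub_ne_zero.2 hzv
  set c : ℂ := (z - u) / (z - v) with hcdef
  have hcr : c = ((c.re : ℝ) : ℂ) := Complex.ext rfl (by simpa using h2)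
  have he : z - u = c * (z - v) := (div_eq_iff hvz).1 rfl
  set r : ℝ := c.re with hrdef
  have h1r : (0:ℝ) < 1 - r := by linarith
  apply hz
  refine ⟨1/(1-r), -r/(1-r), by positivity, div_nonneg (by linarith) h1r.le,
    by rw [← add_div, div_eq_one_iff_eq (ne_of_gt h1r)]; ring, ?_⟩
  have he' : z - u = (r : ℂ) * (z - v) := by rw [hcr] at he; exact he
  have key : (1 - (r:ℂ)) * z = u - r * v := by linear_combination he'
  have hcast : ((1:ℂ) - (r:ℂ)) ≠ 0 := by
    intro h
    have : ((1 - r : ℝ) : ℂ) = 0 := by push_cast; linear_combination h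
    exact (ne_of_gt h1r) (by exact_mod_cast this)
  rw [Complex.real_smul, Complex.real_smul]
  push_cast
  field_simp
  linear_combination -key

lemma tendsto_sub_const_cobounded' (w : ℂ) :
    Tendsto (fun z : ℂ => z - w) (cobounded ℂ) (cobounded ℂ) := by
  rw [← tendsto_norm_atTop_iff_cobounded]
  apply tendsto_atTop_mono' _ (show ∀ᶠ z : ℂ in cobounded ℂ, ‖z‖ - ‖w‖ ≤ ‖z - w‖ from
    Eventually.of_forall fun z => norm_sub_norm_le z w)
  exact (tendsto_atTop_add_const_right _ (-‖w‖) tendsto_norm_cobounded_atTop).congr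
    (fun z => by ring)

lemma eventually_cobounded_notMem {s : Set ℂ} (hs : IsBounded s) :
    ∀ᶠ z in cobounded ℂ, z ∉ s := hs.compl

lemma eventually_cobounded_ne (w : ℂ) : ∀ᶠ z in cobounded ℂ, z ≠ w := by
  simpa using eventually_cobounded_notMem (isBounded_singleton (x := w))

lemma tendsto_inv_sub (w : ℂ) :
    Tendsto (fun z : ℂ => (z - w)⁻¹) (cobounded ℂ) (𝓝 0) :=
  tendsto_inv₀_cobounded.comp (tendsto_sub_const_cobounded' w)

lemma tendsto_ratio_one (u v : ℂ) :
    Tendsto (fun z : ℂ => (z - u) / (z - v)) (cobounded ℂ) (𝓝 1) := by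
  have h : Tendsto (fun z : ℂ => 1 + (v - u) * (z - v)⁻¹) (cobounded ℂ) (𝓝 1) := by
    have := (tendsto_const_nhds (x := (v - u)) (f := cobounded ℂ)).mul (tendsto_inv_sub v)
    simpa using (tendsto_const_nhds (x := (1:ℂ)) (f := cobounded ℂ)).add this
  apply h.congr'
  filter_upwards [eventually_cobounded_ne v] with z hz
  have hzv : z - v ≠ 0 := sub_ne_zero.2 hz
  field_simp
  ring

lemma exists_chain {V : Set ℂ} (hVo : IsOpen V) (hVc : IsPreconnected V) {x y : ℂ}
    (hx : x ∈ V) (hy : y ∈ V) :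
    ∃ n : ℕ, ∃ v : ℕ → ℂ, v 0 = x ∧ v n = y ∧
      ∀ i < n, segment ℝ (v i) (v (i+1)) ⊆ V := by
  set S : Set ℂ := {w | w ∈ V ∧ ∃ n : ℕ, ∃ v : ℕ → ℂ, v 0 = x ∧ v n = w ∧
      ∀ i < n, segment ℝ (v i) (v (i+1)) ⊆ V} with hSdef
  set T : Set ℂ := {w | w ∈ V ∧ ¬ ∃ n : ℕ, ∃ v : ℕ → ℂ, v 0 = x ∧ v n = w ∧
      ∀ i < n, segment ℝ (v i) (v (i+1)) ⊆ V} with hTdef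
  have hext : ∀ w w' : ℂ, (segment ℝ w w' ⊆ V) →
      (∃ n : ℕ, ∃ v : ℕ → ℂ, v 0 = x ∧ v n = w ∧ ∀ i < n, segment ℝ (v i) (v (i+1)) ⊆ V) →
      (∃ n : ℕ, ∃ v : ℕ → ℂ, v 0 = x ∧ v n = w' ∧ ∀ i < n, segment ℝ (v i) (v (i+1)) ⊆ V) := by
    rintro w w' hseg ⟨n, v, hv0, hvn, hv⟩
    refine ⟨n+1, fun i => if i ≤ n then v i else w', ?_, ?_, ?_⟩
    · simp [Nat.zero_le, hv0]
    · simp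
    · intro i hi
      rcases Nat.lt_succ_iff_lt_or_eq.1 hi with hi' | rfl
      · have h1 : i ≤ n := hi'.le
        have h2 : i + 1 ≤ n := hi'
        simpa [h1, h2] using hv i hi'
      · have h1 : i ≤ i := le_rfl
        have h2 : ¬ (i + 1 ≤ i) := by omega
        simpa [h1, h2, hvn] using hseg
  have hSopen : IsOpen S := by
    rw [Metric.isOpen_iff]
    rintro w ⟨hwV, hch⟩
    obtain ⟨ε, hε, hball⟩ := Metric.isOpen_iff.1 hVo w hwV
    refine ⟨ε, hε, ?_⟩
    intro w' hw'
    refine ⟨hball hw', hext w w' ?_ hch⟩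
    exact ((convex_ball w ε).segment_subset (mem_ball_self hε) hw').trans hball
  have hTopen : IsOpen T := by
    rw [Metric.isOpen_iff]
    rintro w ⟨hwV, hch⟩
    obtain ⟨ε, hε, hball⟩ := Metric.isOpen_iff.1 hVo w hwV
    refine ⟨ε, hε, ?_⟩
    intro w' hw'
    refine ⟨hball hw', fun hch' => hch (hext w' w ?_ hch')⟩
    exact ((convex_ball w ε).segment_subset hw' (mem_ball_self hε)).trans hball
  have hxS : x ∈ S := ⟨hx, 0, fun _ => x, rfl, rfl, by omega⟩
  have hVS : V ⊆ S := by
    apply hVc.subset_left_of_subset_union hSopen hTopen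
    · rw [Set.disjoint_left]
      rintro w ⟨_, hw⟩ ⟨_, hw'⟩
      exact hw' hw
    · intro w hwV
      by_cases h : ∃ n : ℕ, ∃ v : ℕ → ℂ, v 0 = x ∧ v n = w ∧
          ∀ i < n, segment ℝ (v i) (v (i+1)) ⊆ V
      · exact Or.inl ⟨hwV, h⟩
      · exact Or.inr ⟨hwV, h⟩
    · exact ⟨x, hx, hxS⟩
  exact (hVS hy).2

lemma isPreconnected_out (l₀ : ℂ) {R : ℝ} (hR : 0 ≤ R) :
    IsPreconnected {z : ℂ | R < dist z l₀} := by
  have hsp : IsPreconnected ((Metric.sphere (0:ℂ) 1) ×ˢ (Set.Ioi R)) := by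
    apply IsPreconnected.prod
    · exact (isPathConnected_sphere (by rw [Complex.rank_real_complex]; norm_num) 0
        zero_le_one).isConnected.isPreconnected
    · exact isPreconnected_Ioi
  have himg := hsp.image (fun p : ℂ × ℝ => l₀ + p.2 • p.1)
    (by fun_prop : Continuous fun p : ℂ × ℝ => l₀ + p.2 • p.1).continuousOn
  convert himg using 1
  ext z
  simp only [Set.mem_setOf_eq, Set.mem_image, Set.mem_prod, Metric.mem_sphere,
    Set.mem_Ioi, Prod.exists]
  constructor
  · intro hz
    have hz0 : z - l₀ ≠ 0 := by
      intro h
      rw [dist_eq_norm, h] at hz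
      simp at hz
      linarith
    refine ⟨(dist z l₀)⁻¹ • (z - l₀), dist z l₀, ⟨?_, hz⟩, ?_⟩
    · rw [dist_zero_right, norm_smul, dist_eq_norm]
      simp only [norm_inv, Real.norm_eq_abs, abs_norm]
      rw [inv_mul_cancel₀ (norm_ne_zero_iff.2 hz0)]
    · rw [smul_smul, dist_eq_norm, mul_inv_cancel₀ (norm_ne_zero_iff.2 hz0), one_smul]
      ring
  · rintro ⟨u, r, ⟨hu, hr⟩, rfl⟩
    have : dist (l₀ + r • u) l₀ = r := by
      rw [dist_eq_norm]
      simp only [add_sub_cancel_left, norm_smul, Real.norm_eq_abs]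
      have hu1 : ‖u‖ = 1 := by simpa [dist_eq_norm] using hu
      rw [hu1, mul_one, _root_.abs_of_nonneg (le_trans hR hr.le)]
    rw [this]; exact hr

lemma coeff_bound {l₀ : ℂ} {δ : ℝ} (hδ : 0 < δ) {K' : Set ℂ} (hK' : K' ⊆ ball l₀ δ)
    {f : ℂ → ℂ} {L c : ℂ} (hf : DifferentiableOn ℂ f K'ᶜ) (hb : ∀ z ∈ K'ᶜ, ‖f z‖ ≤ 1)
    (hL : Tendsto f (cobounded ℂ) (𝓝 L))
    (hc : Tendsto (fun z => z * (f z - L)) (cobounded ℂ) (𝓝 c)) :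
    ‖c‖ ≤ 4 * δ := by
  have hKb : IsBounded K' := (isBounded_ball).subset hK'
  have hKc : ∀ᶠ z in cobounded ℂ, z ∈ K'ᶜ := hKb.compl
  have hL1 : ‖L‖ ≤ 1 := by
    apply le_of_tendsto hL.norm
    filter_upwards [hKc] with z hz using hb z hz
  set v : ℂ → ℂ := fun z => (z - l₀) * (f z - L) with hvdef
  have hfL : Tendsto (fun z => f z - L) (cobounded ℂ) (𝓝 0) := by
    simpa using hL.sub (tendsto_const_nhds (x := L))
  have hvlim : Tendsto v (cobounded ℂ) (𝓝 c) := by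
    have h2 : Tendsto (fun z => l₀ * (f z - L)) (cobounded ℂ) (𝓝 0) := by
      simpa using (tendsto_const_nhds (x := l₀)).mul hfL
    have := hc.sub h2
    simp only [sub_zero] at this
    apply this.congr
    intro z; simp only [hvdef]; ring
  have hv2 : ∀ z ∈ K'ᶜ, ‖v z‖ ≤ 2 * ‖z - l₀‖ := by
    intro z hz
    rw [hvdef]
    simp only [norm_mul]
    calc ‖z - l₀‖ * ‖f z - L‖ ≤ ‖z - l₀‖ * (‖f z‖ + ‖L‖) :=
          mul_le_mul_of_nonneg_left (norm_sub_le _ _) (norm_nonneg _)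
      _ ≤ ‖z - l₀‖ * 2 := mul_le_mul_of_nonneg_left (by linarith [hb z hz]) (norm_nonneg _)
      _ = 2 * ‖z - l₀‖ := by ring
  -- the exterior of closed ball is in K'ᶜ and f is differentiable there
  have hsub : ∀ z : ℂ, δ < ‖z - l₀‖ → z ∈ K'ᶜ := by
    intro z hz hzK
    have := hK' hzK
    rw [mem_ball, dist_eq_norm] at this
    linarith
  set w : ℂ → ℂ := fun ζ => if ζ = 0 then c else v (l₀ + ζ⁻¹) with hwdef
  have hmap : ∀ ζ : ℂ, ζ ≠ 0 → ‖ζ‖ < δ⁻¹ → δ < ‖(l₀ + ζ⁻¹) - l₀‖ := by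
    intro ζ hζ hζδ
    rw [add_sub_cancel_left, norm_inv]
    have h1 : 0 < ‖ζ‖ := norm_pos_iff.2 hζ
    rw [lt_inv_comm₀ hδ h1]
    exact hζδ
  have hwd : DifferentiableOn ℂ w (ball 0 δ⁻¹ \ {0}) := by
    have hdiff : DifferentiableOn ℂ (fun ζ : ℂ => v (l₀ + ζ⁻¹)) (ball 0 δ⁻¹ \ {0}) := by
      intro ζ hζ
      obtain ⟨hζb, hζ0⟩ := hζ
      have hζ0' : ζ ≠ 0 := by simpa using hζ0
      rw [mem_ball, dist_zero_right] at hζb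
      have hin := hmap ζ hζ0' hζb
      have h1 : DifferentiableAt ℂ (fun ζ : ℂ => l₀ + ζ⁻¹) ζ :=
        (differentiableAt_const _).add (differentiableAt_inv hζ0')
      have h2 : DifferentiableAt ℂ v (l₀ + ζ⁻¹) := by
        have hopen : IsOpen {z : ℂ | δ < ‖z - l₀‖} := by
          have : Continuous fun z : ℂ => ‖z - l₀‖ := by fun_prop
          exact isOpen_lt continuous_const this
        have hvd : DifferentiableOn ℂ v {z : ℂ | δ < ‖z - l₀‖} := by
          apply DifferentiableOn.mul
          · exact (differentiable_id.sub_const l₀).differentiableOn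
          · exact ((hf.mono (fun z hz => hsub z hz)).sub_const L)
        exact (hvd.differentiableAt (hopen.mem_nhds hin))
      exact (h2.comp ζ h1).differentiableWithinAt
    apply hdiff.congr
    intro ζ hζ
    have hζ0' : ζ ≠ 0 := by simpa using hζ.2
    rw [hwdef]; simp [hζ0']
  have hwc : ContinuousAt w 0 := by
    rw [← continuousWithinAt_compl_self]
    have hw0 : w 0 = c := by rw [hwdef]; simp
    unfold ContinuousWithinAt
    rw [hw0]
    have hinv : Tendsto (fun ζ : ℂ => ζ⁻¹) (𝓝[≠] (0:ℂ)) (cobounded ℂ) := by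
      rw [← tendsto_norm_atTop_iff_cobounded]
      have h1 : Tendsto (fun ζ : ℂ => ‖ζ‖) (𝓝[≠] (0:ℂ)) (𝓝[>] 0) := by
        rw [tendsto_nhdsWithin_iff]
        constructor
        · apply Tendsto.mono_left _ nhdsWithin_le_nhds
          simpa using continuous_norm.tendsto (0:ℂ)
        · filter_upwards [self_mem_nhdsWithin] with ζ (hζ : ζ ≠ 0)
          simpa using norm_pos_iff.2 hζ
      have := tendsto_inv_nhdsGT_zero.comp h1
      apply this.congr
      intro ζ; simp [norm_inv]
    have hcomp : Tendsto (fun ζ : ℂ => l₀ + ζ⁻¹) (𝓝[≠] (0:ℂ)) (cobounded ℂ) := by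
      rw [← tendsto_norm_atTop_iff_cobounded]
      apply tendsto_atTop_mono' _ _ ((tendsto_atTop_add_const_right _ (-‖l₀‖)
        ((tendsto_norm_atTop_iff_cobounded).2 hinv)))
      filter_upwards with ζ
      have h := norm_sub_le (l₀ + ζ⁻¹) l₀
      simp only [add_sub_cancel_left] at h
      linarith [h]
    have := hvlim.comp hcomp
    apply this.congr'
    filter_upwards [self_mem_nhdsWithin] with ζ (hζ : ζ ≠ 0)
    rw [hwdef]; simp [hζ]
  have hδinv : (0:ℝ) < δ⁻¹ := by positivity
  have hwd2 : DifferentiableOn ℂ w (ball 0 δ⁻¹) :=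
    (Complex.differentiableOn_compl_singleton_and_continuousAt_iff
      (ball_mem_nhds (0:ℂ) hδinv)).1 ⟨hwd, hwc⟩
  set r₁ : ℝ := (2*δ)⁻¹ with hr₁def
  have hr₁ : 0 < r₁ := by positivity
  have hr₁δ : r₁ < δ⁻¹ := by
    rw [hr₁def]
    apply inv_strictAnti₀ hδ
    linarith
  have hfinal : ‖w 0‖ ≤ 4 * δ := by
    apply Complex.norm_le_of_forall_mem_frontier_norm_le (isBounded_ball (x := (0:ℂ)) (r := r₁))
    · constructor
      · exact hwd2.mono (ball_subset_ball hr₁δ.le)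
      · rw [closure_ball (0:ℂ) hr₁.ne']
        exact hwd2.continuousOn.mono (closedBall_subset_ball hr₁δ)
    · intro ζ hζ
      rw [frontier_ball (0:ℂ) hr₁.ne'] at hζ
      rw [mem_sphere, dist_zero_right] at hζ
      have hζ0 : ζ ≠ 0 := by
        intro h; rw [h] at hζ; simp at hζ; linarith
      have hζinv : ‖ζ⁻¹‖ = 2*δ := by rw [norm_inv, hζ, hr₁def, inv_inv]
      have hin : δ < ‖(l₀ + ζ⁻¹) - l₀‖ := by
        rw [add_sub_cancel_left, hζinv]; linarith
      have : w ζ = v (l₀ + ζ⁻¹) := by rw [hwdef]; simp [hζ0]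
      rw [this]
      calc ‖v (l₀ + ζ⁻¹)‖ ≤ 2 * ‖(l₀ + ζ⁻¹) - l₀‖ := hv2 _ (hsub _ hin)
        _ = 2 * (2*δ) := by rw [add_sub_cancel_left, hζinv]
        _ = 4 * δ := by ring
    · exact subset_closure (mem_ball_self hr₁)
  have hw0 : w 0 = c := by rw [hwdef]; simp
  rwa [hw0] at hfinal

lemma norm_neg_sq_div (x : ℂ) (y : ℝ) (hy : 0 < y) : ‖-x^2/((y:ℂ))‖ = ‖x‖^2/y := by
  rw [norm_div, norm_neg, norm_pow, Complex.norm_real, Real.norm_eq_abs, _root_.abs_of_pos hy]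

lemma isCompact_seg (x y : ℂ) : IsCompact (segment ℝ x y) := by
  rw [← convexHull_pair]
  exact ((Set.finite_singleton y).insert x).isCompact_convexHull (𝕜 := ℝ)

lemma prod_ratio {n : ℕ} {v : ℕ → ℂ} {z : ℂ} (h : ∀ i ≤ n, z ≠ v i) :
    ∏ i ∈ Finset.range n, (z - v i)/(z - v (i+1)) = (z - v 0)/(z - v n) := by
  induction n with
  | zero => simp [div_self (sub_ne_zero.2 (h 0 le_rfl))]
  | succ k ih =>
    rw [Finset.prod_range_succ, ih (fun i hi => h i (hi.trans (Nat.le_succ k)))]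
    have h1 : z - v k ≠ 0 := sub_ne_zero.2 (h k (Nat.le_succ_of_le (Nat.le_refl k)))
    rw [div_mul_div_comm, mul_comm (z - v 0) _, mul_div_mul_left _ _ h1]

set_option maxHeartbeats 1000000 in
lemma cap_lower {l₀ : ℂ} {δ : ℝ} (hδ : 0 < δ) {W : Set ℂ} (hW : W ⊆ ball l₀ δ)
    {n : ℕ} {v : ℕ → ℂ} (hseg : ∀ i < n, segment ℝ (v i) (v (i+1)) ⊆ W)
    (hd4 : δ/4 ≤ ‖v n - v 0‖) :
    δ/768 ≤ analyticCapacity W := by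
  set a := v 0 with hadef
  set b := v n with hbdef
  have hab : a ≠ b := by
    intro h
    rw [h, sub_self, norm_zero] at hd4
    linarith
  have hn : n ≠ 0 := by rintro rfl; exact hab rfl
  set E : Set ℂ := ⋃ i ∈ Finset.range n, segment ℝ (v i) (v (i+1)) with hEdef
  have hEW : E ⊆ W := by
    rw [hEdef]
    exact Set.iUnion₂_subset fun i hi => hseg i (Finset.mem_range.1 hi)
  have hEb : E ⊆ ball l₀ δ := hEW.trans hW
  have hEcp : IsCompact E := by
    rw [hEdef]
    exact (Finset.range n).finite_toSet.isCompact_biUnion fun i _ => isCompact_seg _ _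
  have hmemv : ∀ i ≤ n, v i ∈ E := by
    intro i hi
    rcases lt_or_eq_of_le hi with hi' | rfl
    · exact Set.mem_biUnion (Finset.mem_range.2 hi') (left_mem_segment ℝ _ _)
    · have h1 : i - 1 < i := by omega
      have h2 : i - 1 + 1 = i := by omega
      refine Set.mem_biUnion (Finset.mem_range.2 h1) ?_
      rw [h2]
      exact right_mem_segment ℝ _ _
  have hne : ∀ z ∉ E, ∀ i ≤ n, z ≠ v i := fun z hz i hi h => hz (h ▸ hmemv i hi)
  have haE : a ∈ E := hmemv 0 (Nat.zero_le n)
  have hbE : b ∈ E := hmemv n le_rfl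
  set e : ℂ := (b - a)/2 with hedef
  set m : ℂ := (a + b)/2 with hmdef
  have he0 : e ≠ 0 := by
    rw [hedef]
    exact div_ne_zero (sub_ne_zero.2 (Ne.symm hab)) two_ne_zero
  have henorm : ‖e‖ = ‖b - a‖/2 := by
    rw [hedef, norm_div]
    norm_num
  have haball : a ∈ ball l₀ δ := hEb haE
  have hbball : b ∈ ball l₀ δ := hEb hbE
  have hanorm : ‖a - l₀‖ < δ := by rwa [mem_ball, dist_eq_norm] at haball
  have hbnorm : ‖b - l₀‖ < δ := by rwa [mem_ball, dist_eq_norm] at hbball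
  have he_lt : ‖e‖ < δ := by
    rw [henorm]
    have h := norm_sub_le (b - l₀) (a - l₀)
    rw [sub_sub_sub_cancel_right] at h
    linarith
  have he_ge : δ/8 ≤ ‖e‖ := by rw [henorm]; linarith
  have hm_lt : ‖m - l₀‖ < δ := by
    have h : m - l₀ = ((a - l₀) + (b - l₀))/2 := by rw [hmdef]; ring
    rw [h, norm_div]
    have h1 := norm_add_le (a - l₀) (b - l₀)
    have h2 : ‖(2:ℂ)‖ = 2 := by norm_num
    rw [h2]
    linarith
  set F : ℂ → ℂ := fun z => ∑ i ∈ Finset.range n, Complex.log ((z - v i)/(z - v (i+1)))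
    with hFdef
  set g : ℂ → ℂ := fun z => (z - a) * Complex.exp (-F z / 2) with hgdef
  set G : ℂ → ℂ := fun z => g z - (z - m) with hGdef
  have hzseg : ∀ z ∉ E, ∀ i < n, z ∉ segment ℝ (v i) (v (i+1)) := by
    intro z hz i hi hmem
    exact hz (Set.mem_biUnion (Finset.mem_range.2 hi) hmem)
  have hexpF : ∀ z ∉ E, Complex.exp (F z) = (z - a)/(z - b) := by
    intro z hz
    rw [hFdef]
    simp only
    rw [Complex.exp_sum]
    have h : ∀ i ∈ Finset.range n,
        Complex.exp (Complex.log ((z - v i)/(z - v (i+1)))) = (z - v i)/(z - v (i+1)) := by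
      intro i hi
      apply Complex.exp_log
      apply div_ne_zero
      · exact sub_ne_zero.2 (hne z hz i (Finset.mem_range.1 hi).le)
      · exact sub_ne_zero.2 (hne z hz (i+1) (Finset.mem_range.1 hi))
    rw [Finset.prod_congr rfl h]
    exact prod_ratio (hne z hz)
  have hFdiff : DifferentiableOn ℂ F Eᶜ := by
    apply DifferentiableOn.fun_sum
    intro i hi
    intro z hz
    have hi' := Finset.mem_range.1 hi
    have hrd : DifferentiableAt ℂ (fun z : ℂ => (z - v i)/(z - v (i+1))) z := by
      apply DifferentiableAt.div
      · exact differentiableAt_id.sub_const _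
      · exact differentiableAt_id.sub_const _
      · exact sub_ne_zero.2 (hne z hz (i+1) hi')
    exact ((Complex.differentiableAt_log (ratio_mem_slitPlane (hzseg z hz i hi'))).comp z
      hrd).differentiableWithinAt
  have hgdiff : DifferentiableOn ℂ g Eᶜ := by
    apply DifferentiableOn.mul
    · exact (differentiable_id.sub_const a).differentiableOn
    · exact ((hFdiff.neg.div_const 2).cexp)
  have hGdiff : DifferentiableOn ℂ G Eᶜ :=
    hgdiff.sub ((differentiable_id.sub_const m).differentiableOn)
  have hgsq : ∀ z ∉ E, g z ^ 2 = (z - a) * (z - b) := by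
    intro z hz
    have hza : z - a ≠ 0 := sub_ne_zero.2 (hne z hz 0 (Nat.zero_le n))
    rw [hgdef]
    simp only
    rw [mul_pow, sq (Complex.exp (-F z / 2)), ← Complex.exp_add]
    have h : -F z / 2 + -F z / 2 = -F z := by ring
    rw [h, Complex.exp_neg, hexpF z hz]
    field_simp
  have hmea : ∀ z : ℂ, (z - a) * (z - b) = (z - m)^2 - e^2 := by
    intro z; rw [hmdef, hedef]; ring
  have hkey : ∀ z ∉ E, G z * (g z + (z - m)) = -e^2 := by
    intro z hz
    have h1 := hgsq z hz
    have h2 := hmea z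
    rw [hGdef]
    simp only
    linear_combination h1 + h2
  have hPne : ∀ z ∉ E, g z + (z - m) ≠ 0 := by
    intro z hz h
    have hk := hkey z hz
    rw [h, mul_zero] at hk
    exact (neg_ne_zero.2 (pow_ne_zero 2 he0)) hk.symm
  have hGnorm : ∀ z ∉ E, ‖G z‖ * ‖g z + (z - m)‖ = ‖e‖^2 := by
    intro z hz
    rw [← norm_mul, hkey z hz, norm_neg, norm_pow]
  have habs : ∀ z ∉ E, ‖g z‖^2 = ‖z - a‖ * ‖z - b‖ := by
    intro z hz
    rw [← norm_pow, hgsq z hz, norm_mul]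
  have hGin : ∀ z ∉ E, dist z l₀ ≤ 2*δ → ‖G z‖ ≤ 6*δ := by
    intro z hz hzd
    rw [dist_eq_norm] at hzd
    have hza : ‖z - a‖ ≤ 3*δ := by
      have h := norm_sub_le (z - l₀) (a - l₀)
      rw [sub_sub_sub_cancel_right] at h
      linarith
    have hzb : ‖z - b‖ ≤ 3*δ := by
      have h := norm_sub_le (z - l₀) (b - l₀)
      rw [sub_sub_sub_cancel_right] at h
      linarith
    have hzm : ‖z - m‖ ≤ 3*δ := by
      have h := norm_sub_le (z - l₀) (m - l₀)
      rw [sub_sub_sub_cancel_right] at h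
      linarith
    have hg3 : ‖g z‖ ≤ 3*δ := by
      have h1 := habs z hz
      nlinarith [norm_nonneg (g z), norm_nonneg (z - a), norm_nonneg (z - b)]
    calc ‖G z‖ ≤ ‖g z‖ + ‖z - m‖ := norm_sub_le _ _
      _ ≤ 6*δ := by linarith
  set Out : Set ℂ := {z : ℂ | 2*δ < dist z l₀} with hOutdef
  have hOutE : ∀ z ∈ Out, z ∉ E := by
    intro z hz hzE
    have h := hEb hzE
    rw [mem_ball] at h
    have hz' : 2*δ < dist z l₀ := hz
    linarith
  have hzmOut : ∀ z ∈ Out, δ < ‖z - m‖ := by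
    intro z hz
    have hz' : 2*δ < dist z l₀ := hz
    rw [dist_eq_norm] at hz'
    have h := norm_sub_le (z - m) (l₀ - m)
    rw [sub_sub_sub_cancel_right] at h
    have h2 : ‖l₀ - m‖ < δ := by rwa [norm_sub_rev] at hm_lt
    linarith
  have hsum : ∀ z : ℂ, 2*‖z - m‖ ≤ ‖G z‖ + ‖g z + (z - m)‖ := by
    intro z
    have h : (g z + (z - m)) - G z = 2*(z - m) := by rw [hGdef]; ring
    have h2 := norm_sub_le (g z + (z - m)) (G z)
    rw [h] at h2
    have h3 : ‖(2:ℂ) * (z - m)‖ = 2*‖z - m‖ := by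
      rw [norm_mul]; norm_num
    rw [h3] at h2
    linarith
  have hcover : ∀ z ∈ Out, ‖G z‖ ≠ ‖z - m‖ := by
    intro z hz heq
    have hzE := hOutE z hz
    have h1 := hGnorm z hzE
    have h2 := hsum z
    have h3 := hzmOut z hz
    nlinarith [he_lt, norm_nonneg (g z + (z - m)), norm_nonneg (G z)]
  have hGcont : ContinuousOn G Eᶜ := hGdiff.continuousOn
  have hOutopen : IsOpen Out := isOpen_lt continuous_const (by fun_prop)
  have hOutsub : Out ⊆ Eᶜ := fun z hz => hOutE z hz
  set A : Set ℂ := Out ∩ {z | ‖G z‖ < ‖z - m‖} with hAdef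
  set Bs : Set ℂ := Out ∩ {z | ‖z - m‖ < ‖G z‖} with hBdef
  have hAopen : IsOpen A := by
    have hφ : ContinuousOn (fun z => ‖z - m‖ - ‖G z‖) Out :=
      ContinuousOn.sub (by fun_prop) (hGcont.mono hOutsub).norm
    have h := hφ.isOpen_inter_preimage hOutopen (isOpen_Ioi (a := (0:ℝ)))
    convert h using 1
    rw [hAdef]
    ext z
    simp only [Set.mem_inter_iff, Set.mem_setOf_eq, Set.mem_preimage, Set.mem_Ioi]
    constructor
    · rintro ⟨h1, h2⟩; exact ⟨h1, by linarith⟩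
    · rintro ⟨h1, h2⟩; exact ⟨h1, by linarith⟩
  have hBopen : IsOpen Bs := by
    have hφ : ContinuousOn (fun z => ‖G z‖ - ‖z - m‖) Out :=
      ContinuousOn.sub (hGcont.mono hOutsub).norm (by fun_prop)
    have h := hφ.isOpen_inter_preimage hOutopen (isOpen_Ioi (a := (0:ℝ)))
    convert h using 1
    rw [hBdef]
    ext z
    simp only [Set.mem_inter_iff, Set.mem_setOf_eq, Set.mem_preimage, Set.mem_Ioi]
    constructor
    · rintro ⟨h1, h2⟩; exact ⟨h1, by linarith⟩
    · rintro ⟨h1, h2⟩; exact ⟨h1, by linarith⟩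
  have hF0 : Tendsto F (cobounded ℂ) (𝓝 0) := by
    rw [hFdef]
    have h : Tendsto (fun z : ℂ => ∑ i ∈ Finset.range n,
        Complex.log ((z - v i)/(z - v (i+1)))) (cobounded ℂ)
        (𝓝 (∑ i ∈ Finset.range n, 0)) := by
      apply tendsto_finset_sum
      intro i _
      have hcont : ContinuousAt Complex.log 1 :=
        (Complex.differentiableAt_log (by simp [Complex.mem_slitPlane_iff])).continuousAt
      have h2 := hcont.tendsto.comp (tendsto_ratio_one (v i) (v (i+1)))
      rwa [Complex.log_one] at h2
    simpa using h
  set S : ℂ → ℂ := fun z => ((z - a)/(z - m)) * Complex.exp (-F z / 2) with hSdef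
  have hS1 : Tendsto S (cobounded ℂ) (𝓝 1) := by
    have h1 : Tendsto (fun z => Complex.exp (-F z / 2)) (cobounded ℂ) (𝓝 1) := by
      have h2 : Tendsto (fun z => -F z / 2) (cobounded ℂ) (𝓝 0) := by
        have h3 := (hF0.neg).div_const (2:ℂ)
        simpa using h3
      have h4 := (Complex.continuous_exp.continuousAt (x := 0)).tendsto.comp h2
      rwa [Complex.exp_zero] at h4
    have h5 := (tendsto_ratio_one a m).mul h1
    simpa using h5
  have hgS : ∀ z : ℂ, z ≠ m → g z = (z - m) * S z := by
    intro z hzm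
    rw [hgdef, hSdef]
    simp only
    field_simp
  have hS1' : Tendsto (fun z => S z + 1) (cobounded ℂ) (𝓝 2) := by
    have h := hS1.add (tendsto_const_nhds (x := (1:ℂ)))
    norm_num at h
    exact h
  have hPfact : ∀ z : ℂ, z ≠ m → g z + (z - m) = (z - m) * (S z + 1) := by
    intro z hzm
    rw [hgS z hzm]
    ring
  have hPtop : Tendsto (fun z => ‖g z + (z - m)‖) (cobounded ℂ) atTop := by
    have hev1 : ∀ᶠ z in cobounded ℂ, (1:ℝ) ≤ ‖S z + 1‖ := by
      have h : Tendsto (fun z => ‖S z + 1‖) (cobounded ℂ) (𝓝 2) := by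
        have h2 := hS1'.norm
        norm_num at h2
        exact h2
      exact (h.eventually_const_lt (by norm_num : (1:ℝ) < 2)).mono fun z hz => hz.le
    apply tendsto_atTop_mono' (cobounded ℂ) _
      ((tendsto_norm_atTop_iff_cobounded.2 (tendsto_sub_const_cobounded' m)))
    filter_upwards [hev1, eventually_cobounded_ne m] with z h1 hzm
    rw [hPfact z hzm, norm_mul]
    nlinarith [norm_nonneg (z - m)]
  have hEbd : IsBounded E := hEcp.isBounded
  have hG0 : Tendsto G (cobounded ℂ) (𝓝 0) := by
    rw [tendsto_zero_iff_norm_tendsto_zero]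
    have hev : ∀ᶠ z in cobounded ℂ, ‖e‖^2 / ‖g z + (z - m)‖ = ‖G z‖ := by
      filter_upwards [eventually_cobounded_notMem hEbd] with z hz
      have h1 := hGnorm z hz
      have h2 : ‖g z + (z - m)‖ ≠ 0 := norm_ne_zero_iff.2 (hPne z hz)
      rw [div_eq_iff h2]
      linear_combination -h1
    exact (Tendsto.div_atTop (tendsto_const_nhds (x := ‖e‖^2)) hPtop).congr' hev
  have hzG : Tendsto (fun z => z * (G z - 0)) (cobounded ℂ) (𝓝 (-e^2/2)) := by
    have hlim : Tendsto (fun z : ℂ => -e^2 * ((z - 0)/(z - m)) * (S z + 1)⁻¹)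
        (cobounded ℂ) (𝓝 (-e^2/2)) := by
      have h := ((tendsto_const_nhds (x := -e^2)).mul (tendsto_ratio_one 0 m)).mul
        (hS1'.inv₀ two_ne_zero)
      have hval : -e^2/2 = -e^2 * 1 * (2:ℂ)⁻¹ := by ring
      rwa [← hval] at h
    apply hlim.congr'
    filter_upwards [eventually_cobounded_notMem hEbd, eventually_cobounded_ne m]
      with z hz hzm
    have hGz : G z = -e^2/(g z + (z - m)) := (eq_div_iff (hPne z hz)).2 (hkey z hz)
    have hS0 : S z + 1 ≠ 0 := by
      intro h
      apply hPne z hz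
      rw [hPfact z hzm, h, mul_zero]
    have hzm' : z - m ≠ 0 := sub_ne_zero.2 hzm
    rw [sub_zero, hGz, hPfact z hzm]
    field_simp
    ring
  have hAne : (Out ∩ A).Nonempty := by
    have hev1 : ∀ᶠ z in cobounded ℂ, ‖G z‖ < δ :=
      (tendsto_zero_iff_norm_tendsto_zero.1 hG0).eventually_lt_const hδ
    have hev2 : ∀ᶠ z in cobounded ℂ, z ∈ Out := by
      have h := eventually_cobounded_notMem (isBounded_closedBall (x := l₀) (r := 2*δ))
      filter_upwards [h] with z hz
      rw [mem_closedBall, not_le] at hz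
      exact hz
    obtain ⟨z₀, h1, h2⟩ := (hev1.and hev2).exists
    exact ⟨z₀, h2, h2, lt_trans h1 (hzmOut z₀ h2)⟩
  have houtsubA : Out ⊆ A := by
    apply (isPreconnected_out l₀ (by positivity : (0:ℝ) ≤ 2*δ)).subset_left_of_subset_union
      hAopen hBopen
    · rw [Set.disjoint_left]
      rintro z ⟨_, h1⟩ ⟨_, h2⟩
      simp only [Set.mem_setOf_eq] at h1 h2
      linarith
    · intro z hz
      rcases (hcover z hz).lt_or_gt with h | h
      · exact Or.inl ⟨hz, h⟩
      · exact Or.inr ⟨hz, h⟩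
    · exact hAne
  have hGout : ∀ z ∈ Out, ‖G z‖ ≤ δ := by
    intro z hz
    have hzA := houtsubA hz
    have hlt : ‖G z‖ < ‖z - m‖ := hzA.2
    have hzE := hOutE z hz
    have h1 := hGnorm z hzE
    have h2 := hsum z
    have h3 := hzmOut z hz
    nlinarith [he_lt, norm_nonneg (G z), norm_nonneg (g z + (z - m))]
  have hGbound : ∀ z ∉ E, ‖G z‖ ≤ 6*δ := by
    intro z hz
    by_cases hc : dist z l₀ ≤ 2*δ
    · exact hGin z hz hc
    · have : z ∈ Out := by rw [hOutdef]; exact lt_of_not_ge hc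
      linarith [hGout z this]
  -- construct the admissible function
  set c6 : ℂ := ((6*δ : ℝ) : ℂ) with hc6def
  have h6 : c6 ≠ 0 := by
    rw [hc6def]
    exact_mod_cast (by positivity : (6*δ : ℝ) ≠ 0)
  set cA : ℂ := -e^2 / ((12*δ:ℝ):ℂ) with hcAdef
  have h12 : ((12*δ:ℝ):ℂ) ≠ 0 := by
    exact_mod_cast (by positivity : (12*δ : ℝ) ≠ 0)
  have rmem : (‖e‖^2/(12*δ)) ∈ {r : ℝ | ∃ f : ℂ → ℂ, DifferentiableOn ℂ f Eᶜ ∧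
      (∀ z ∈ Eᶜ, ‖f z‖ ≤ 1) ∧ ∃ L c : ℂ, Tendsto f (Bornology.cobounded ℂ) (𝓝 L) ∧
      Tendsto (fun z => z * (f z - L)) (Bornology.cobounded ℂ) (𝓝 c) ∧ r = ‖c‖} := by
    refine ⟨fun z => G z / c6, hGdiff.div_const c6, ?_, 0, cA, ?_, ?_, ?_⟩
    · intro z hz
      rw [norm_div]
      have hc6n : ‖c6‖ = 6*δ := by
        rw [hc6def, Complex.norm_real, Real.norm_eq_abs, abs_of_pos (by positivity)]
      rw [hc6n, div_le_one (by positivity)]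
      exact hGbound z hz
    · have h := hG0.div_const c6
      simpa using h
    · have h := hzG.div_const c6
      have hval : cA = (-e^2/2) / c6 := by
        rw [hcAdef, hc6def]
        push_cast
        rw [div_div]
        congr 1
        ring
      rw [hval]
      apply h.congr
      intro z
      rw [sub_zero, sub_zero, mul_div_assoc]
    · rw [hcAdef, norm_neg_sq_div e (12*δ) (by positivity)]
  have hBddIn : BddAbove {r : ℝ | ∃ f : ℂ → ℂ, DifferentiableOn ℂ f Eᶜ ∧
      (∀ z ∈ Eᶜ, ‖f z‖ ≤ 1) ∧ ∃ L c : ℂ, Tendsto f (Bornology.cobounded ℂ) (𝓝 L) ∧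
      Tendsto (fun z => z * (f z - L)) (Bornology.cobounded ℂ) (𝓝 c) ∧ r = ‖c‖} := by
    refine ⟨4*δ, ?_⟩
    rintro r ⟨f', hf', hb', L', c', hL', hc', rfl⟩
    exact coeff_bound hδ hEb hf' hb' hL' hc'
  have hcapE : ‖e‖^2/(12*δ) ≤ analyticCapacityCompact E := le_csSup hBddIn rmem
  have hBddOut : BddAbove {r : ℝ | ∃ K : Set ℂ, IsCompact K ∧ K ⊆ W ∧
      r = analyticCapacityCompact K} := by
    refine ⟨4*δ, ?_⟩
    rintro r ⟨K', hKc', hKW', rfl⟩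
    apply Real.sSup_le _ (by positivity)
    rintro r ⟨f', hf', hb', L', c', hL', hc', rfl⟩
    exact coeff_bound hδ (hKW'.trans hW) hf' hb' hL' hc'
  have houter : analyticCapacityCompact E ≤ analyticCapacity W :=
    le_csSup hBddOut ⟨E, hEcp, hEW, rfl⟩
  have hfinal : δ/768 ≤ ‖e‖^2/(12*δ) := by
    rw [div_le_div_iff₀ (by norm_num) (by positivity)]
    nlinarith [he_ge]
  linarith

/-- Corollary 2.4 of the paper: there is an absolute constant
`ε₁ > 0` such that if `λ₀ ∈ ℂ`, `δ > 0`, `K ⊂ ℂ` is compact and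
`γ(B(λ₀,δ) ∖ K) < ε₁ δ`, then `|f(λ)| ≤ sup_{z ∈ B(λ₀,δ) ∩ K} |f(z)|` for every
`λ ∈ B(λ₀, δ/2)` and every `f` in the uniform closure of polynomials in
`C(closed B(λ₀,δ))`. -/
theorem capacity_maximum_principle_disk :
    ∃ ε₁ : ℝ, 0 < ε₁ ∧
      ∀ (l₀ : ℂ) (δ : ℝ), 0 < δ → ∀ K : Set ℂ, IsCompact K →
        analyticCapacity (Metric.ball l₀ δ \ K) < ε₁ * δ →
        ∀ f : ℂ → ℂ, ContinuousOn f (Metric.closedBall l₀ δ) →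
          (∀ ε > (0:ℝ), ∃ P : Polynomial ℂ,
            ∀ z ∈ Metric.closedBall l₀ δ, ‖f z - P.eval z‖ < ε) →
          ∀ l ∈ Metric.ball l₀ (δ/2),
            ‖f l‖ ≤ ⨆ z ∈ Metric.ball l₀ δ ∩ K, ‖f z‖ := by
  refine ⟨(768:ℝ)⁻¹, by norm_num, ?_⟩
  intro l₀ δ hδ K hK hcap f hfc happrox l hl
  set B : Set ℂ := ball l₀ δ with hBdef
  -- f is analytic on the open ball
  have hfd : DifferentiableOn ℂ f B := by
    have hP : ∀ k : ℕ, ∃ P : Polynomial ℂ,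
        ∀ z ∈ closedBall l₀ δ, ‖f z - P.eval z‖ < 1/(k+1) := by
      intro k
      exact happrox (1/(k+1)) (by positivity)
    choose P hP using hP
    have htu : TendstoUniformlyOn (fun k z => (P k).eval z) f atTop B := by
      rw [Metric.tendstoUniformlyOn_iff]
      intro ε hε
      obtain ⟨N, hN⟩ := exists_nat_one_div_lt hε
      filter_upwards [eventually_ge_atTop N] with k hk z hz
      have h1 : ‖f z - (P k).eval z‖ < 1/(k+1) :=
        hP k z (ball_subset_closedBall hz)
      have h2 : (1:ℝ)/(k+1) ≤ 1/(N+1) := by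
        apply div_le_div_of_nonneg_left (by norm_num) (by positivity)
        exact_mod_cast Nat.succ_le_succ hk
      rw [dist_eq_norm]
      calc ‖f z - (P k).eval z‖ < 1/(k+1) := h1
        _ ≤ 1/(N+1) := h2
        _ < ε := hN
    apply htu.tendstoLocallyUniformlyOn.differentiableOn _ isOpen_ball
    filter_upwards with k
    exact (Polynomial.differentiable (P k)).differentiableOn
  set M : ℝ := ⨆ z ∈ B ∩ K, ‖f z‖ with hMdef
  have hM0 : 0 ≤ M := Real.iSup_nonneg fun z => Real.iSup_nonneg fun _ => norm_nonneg _
  obtain ⟨C, hC⟩ := (isCompact_closedBall l₀ δ).exists_bound_of_continuousOn hfc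
  have hMle : ∀ z ∈ B ∩ K, ‖f z‖ ≤ M := by
    intro z hz
    have hb : BddAbove (Set.range fun z => ⨆ _ : z ∈ B ∩ K, ‖f z‖) := by
      refine ⟨max C 0, ?_⟩
      rintro _ ⟨w, rfl⟩
      show (⨆ _ : w ∈ B ∩ K, ‖f w‖) ≤ max C 0
      by_cases hw : w ∈ B ∩ K
      · rw [ciSup_pos (f := fun _ => ‖f w‖) hw]
        exact le_max_of_le_left (hC w (ball_subset_closedBall hw.1))
      · haveI : IsEmpty (w ∈ B ∩ K) := ⟨hw⟩
        rw [Real.iSup_of_isEmpty]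
        exact le_max_right C 0
    calc ‖f z‖ = ⨆ _ : z ∈ B ∩ K, ‖f z‖ := (ciSup_pos (f := fun _ => ‖f z‖) hz).symm
      _ ≤ M := by rw [hMdef]; exact le_ciSup hb z
  have hlB : l ∈ B := by
    apply ball_subset_ball (by linarith : δ/2 ≤ δ)
    exact hl
  set U : Set ℂ := {z | z ∈ B ∧ M < ‖f z‖} with hUdef
  have hUopen : IsOpen U := by
    have h1 : ContinuousOn f B := hfc.mono ball_subset_closedBall
    have h2 := h1.isOpen_inter_preimage isOpen_ball
      (isOpen_lt (continuous_const (y := M)) continuous_norm)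
    have h3 : U = B ∩ f ⁻¹' {y : ℂ | M < ‖y‖} := rfl
    rwa [h3]
  have hUBK : U ⊆ B \ K := by
    rintro z ⟨hzB, hzM⟩
    exact ⟨hzB, fun hzK => absurd (hMle z ⟨hzB, hzK⟩) (not_le.2 hzM)⟩
  by_cases hlU : l ∈ U
  · set V : Set ℂ := connectedComponentIn U l with hVdef
    have hVopen : IsOpen V := hUopen.connectedComponentIn
    have hVU : V ⊆ U := connectedComponentIn_subset U l
    have hlV : l ∈ V := mem_connectedComponentIn hlU
    have hVpre : IsPreconnected V := isPreconnected_connectedComponentIn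
    have hVB : V ⊆ B := fun z hz => (hVU hz).1
    by_cases hcl : closure V ⊆ B
    · -- maximum modulus
      have hfront : ∀ x ∈ frontier V, ‖f x‖ ≤ M := by
        intro x hx
        have hxcl : x ∈ closure V := frontier_subset_closure hx
        have hxB : x ∈ B := hcl hxcl
        by_contra hgt
        push_neg at hgt
        have hxU : x ∈ U := ⟨hxB, hgt⟩
        obtain ⟨ε, hε, hball⟩ := Metric.isOpen_iff.1 hUopen x hxU
        obtain ⟨y, hyV, hyx⟩ := Metric.mem_closure_iff.1 hxcl ε hε
        have hy : y ∈ ball x ε := by rwa [mem_ball, dist_comm]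
        have hsub : (ball x ε ∪ V) ⊆ V := by
          rw [hVdef]
          apply IsPreconnected.subset_connectedComponentIn
          · exact IsPreconnected.union y hy hyV
              ((convex_ball x ε).isPreconnected) hVpre
          · exact Or.inr hlV
          · exact Set.union_subset hball hVU
        have hxV : x ∈ V := hsub (Or.inl (mem_ball_self hε))
        rw [hVopen.frontier_eq] at hx
        exact hx.2 hxV
      exact Complex.norm_le_of_forall_mem_frontier_norm_le
        (isBounded_ball.subset hVB)
        ⟨hfd.mono hVB, hfc.mono (hcl.trans ball_subset_closedBall)⟩
        hfront (subset_closure hlV)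
    · -- escape: contradiction with capacity
      exfalso
      rw [Set.not_subset] at hcl
      obtain ⟨q, hqcl, hqB⟩ := hcl
      obtain ⟨z₁, hz₁V, hz₁q⟩ := Metric.mem_closure_iff.1 hqcl (δ/8) (by positivity)
      obtain ⟨n, v, hv0, hvn, hseg⟩ := exists_chain hVopen hVpre hlV hz₁V
      have hd : δ/4 ≤ ‖v n - v 0‖ := by
        rw [hv0, hvn]
        have h1 : δ ≤ dist q l₀ := by
          by_contra h
          push_neg at h
          exact hqB (mem_ball.2 h)
        have h2 : dist q z₁ < δ/8 := hz₁q
        have h3 : dist l l₀ < δ/2 := hl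
        have t1 := dist_triangle q z₁ l₀
        have t2 := dist_triangle z₁ l l₀
        rw [← dist_eq_norm]
        linarith
      have hseg' : ∀ i < n, segment ℝ (v i) (v (i+1)) ⊆ B \ K :=
        fun i hi => (hseg i hi).trans (hVU.trans hUBK)
      have hlow := cap_lower hδ (Set.diff_subset) hseg' hd
      have : (768:ℝ)⁻¹ * δ = δ/768 := by ring
      linarith [hcap, hlow]
  · have : ¬ M < ‖f l‖ := fun h => hlU ⟨hlB, h⟩
    linarith [not_lt.1 this]
end
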